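/- arXiv:1210.2511 — 3 statements merged into one kernel-verified Lean document; each statement's English description precedes it below -/
import Mathlib

section
/- Let Λ = {λ_n} be a nondecreasing sequence of positive reals with λ_n/n nonincreasing and ∑_{n=1}^∞ λ_n/n² < ∞. Then every function f : [-1,1]² → ℝ of bounded partial Λ-variation (f ∈ PΛBV) has bounded harmonic variation (f ∈ HBV), i.e., PΛBV ⊂ HBV. -/
open MeasureTheory Set Filter Real

noncomputable section

/-- `p` is the system of orthonormal Legendre polynomials on `[-1,1]`:
degree `n`, positive leading coefficient, orthonormal in `L²([-1,1])`. -/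
def IsOrthonormalLegendre (p : ℕ → Polynomial ℝ) : Prop :=
  (∀ n, (p n).degree = n) ∧ (∀ n, 0 < (p n).leadingCoeff) ∧
  (∀ n m : ℕ, (∫ x in (-1:ℝ)..1, (p n).eval x * (p m).eval x) = if n = m then 1 else 0)

/-- Dirichlet kernel of the Fourier–Legendre system. -/
def LegKernel (p : ℕ → Polynomial ℝ) (n : ℕ) (x s : ℝ) : ℝ :=
  ∑ k ∈ Finset.range n, (p k).eval x * (p k).eval s

/-- A finite collection of nonoverlapping open subintervals of `[-1,1]`. -/
def Nonoverlapping (n : ℕ) (a b : Fin n → ℝ) : Prop :=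
  (∀ i, -1 ≤ a i ∧ a i < b i ∧ b i ≤ 1) ∧
  (∀ i j, i ≠ j → Set.Ioo (a i) (b i) ∩ Set.Ioo (a j) (b j) = ∅)

/-- The set of sums defining `ΛV₁(f; I²)`; the `i`-th interval (1-based) has weight `lam i`. -/
def V1set (lam : ℕ → ℝ) (f : ℝ → ℝ → ℝ) : Set ℝ :=
  {S | ∃ y, y ∈ Set.Icc (-1:ℝ) 1 ∧ ∃ n, ∃ a b : Fin n → ℝ, Nonoverlapping n a b ∧
    S = ∑ i : Fin n, |f (b i) y - f (a i) y| / lam (i.1 + 1)}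

/-- The set of sums defining `ΛV₂(f; I²)`. -/
def V2set (lam : ℕ → ℝ) (f : ℝ → ℝ → ℝ) : Set ℝ :=
  {S | ∃ x, x ∈ Set.Icc (-1:ℝ) 1 ∧ ∃ m, ∃ c d : Fin m → ℝ, Nonoverlapping m c d ∧
    S = ∑ j : Fin m, |f x (d j) - f x (c j)| / lam (j.1 + 1)}

/-- The set of sums defining the mixed variation `(Λ¹,Λ²)V_{1,2}(f; I²)`. -/
def V12set (lam1 lam2 : ℕ → ℝ) (f : ℝ → ℝ → ℝ) : Set ℝ :=
  {S | ∃ n, ∃ a b : Fin n → ℝ, ∃ m, ∃ c d : Fin m → ℝ,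
    Nonoverlapping n a b ∧ Nonoverlapping m c d ∧
    S = ∑ i : Fin n, ∑ j : Fin m,
      |f (a i) (c j) - f (a i) (d j) - f (b i) (c j) + f (b i) (d j)| /
        (lam1 (i.1 + 1) * lam2 (j.1 + 1))}

/-- The harmonic sequence `λ_n = n`. -/
def harm : ℕ → ℝ := fun k => (k : ℝ)

/-- `f ∈ ΛBV`. -/
def LambdaBV (lam : ℕ → ℝ) (f : ℝ → ℝ → ℝ) : Prop :=
  BddAbove (V1set lam f) ∧ BddAbove (V2set lam f) ∧ BddAbove (V12set lam lam f)

/-- `f ∈ PΛBV`. -/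
def PLambdaBV (lam : ℕ → ℝ) (f : ℝ → ℝ → ℝ) : Prop :=
  BddAbove (V1set lam f) ∧ BddAbove (V2set lam f)

/-- Bounded harmonic variation. -/
def HBV (f : ℝ → ℝ → ℝ) : Prop := LambdaBV harm f

/-- Continuity in harmonic variation: all tail variations (weights shifted by `n`) tend to 0. -/
def CHV (f : ℝ → ℝ → ℝ) : Prop :=
  Tendsto (fun n : ℕ => sSup (V1set (fun k => ((k + n : ℕ) : ℝ)) f)) atTop (nhds 0) ∧
  Tendsto (fun n : ℕ => sSup (V2set (fun k => ((k + n : ℕ) : ℝ)) f)) atTop (nhds 0) ∧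
  Tendsto (fun n : ℕ => sSup (V12set (fun k => ((k + n : ℕ) : ℝ)) harm f)) atTop (nhds 0) ∧
  Tendsto (fun n : ℕ => sSup (V12set harm (fun k => ((k + n : ℕ) : ℝ)) f)) atTop (nhds 0)

/-- Partial modulus of variation in the first variable. -/
def v1 (f : ℝ → ℝ → ℝ) (n : ℕ) : ℝ :=
  sSup {S | ∃ y, y ∈ Set.Icc (-1:ℝ) 1 ∧ ∃ a b : Fin n → ℝ, Nonoverlapping n a b ∧
    S = ∑ i : Fin n, |f (b i) y - f (a i) y|}

/-- Partial modulus of variation in the second variable. -/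
def v2 (f : ℝ → ℝ → ℝ) (m : ℕ) : ℝ :=
  sSup {S | ∃ x, x ∈ Set.Icc (-1:ℝ) 1 ∧ ∃ c d : Fin m → ℝ, Nonoverlapping m c d ∧
    S = ∑ j : Fin m, |f x (d j) - f x (c j)|}

/-- Partial modulus of continuity in the first variable. -/
def omega1 (f : ℝ → ℝ → ℝ) (δ : ℝ) : ℝ :=
  sSup {d | ∃ x s y : ℝ, x ∈ Set.Icc (-1:ℝ) 1 ∧ s ∈ Set.Icc (-1:ℝ) 1 ∧
    y ∈ Set.Icc (-1:ℝ) 1 ∧ |x - s| ≤ δ ∧ d = |f x y - f s y|}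

/-- Fourier–Legendre coefficient. -/
def Fcoef (p : ℕ → Polynomial ℝ) (f : ℝ → ℝ → ℝ) (n m : ℕ) : ℝ :=
  ∫ s in (-1:ℝ)..1, ∫ t in (-1:ℝ)..1, f s t * (p n).eval s * (p m).eval t

/-- Rectangular partial sum of the double Fourier–Legendre series. -/
def FLSum (p : ℕ → Polynomial ℝ) (f : ℝ → ℝ → ℝ) (N M : ℕ) (x y : ℝ) : ℝ :=
  ∑ n ∈ Finset.range N, ∑ m ∈ Finset.range M, Fcoef p f n m * (p n).eval x * (p m).eval y

/-- Uniform convergence of rectangular partial sums to `f` on `[-1+ε, 1-ε]²`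
as `min(N,M) → ∞`. -/
def UnifConv (p : ℕ → Polynomial ℝ) (f : ℝ → ℝ → ℝ) (ε : ℝ) : Prop :=
  ∀ δ > 0, ∃ N₀ : ℕ, ∀ N M : ℕ, N₀ ≤ N → N₀ ≤ M →
    ∀ x ∈ Set.Icc (-1 + ε) (1 - ε), ∀ y ∈ Set.Icc (-1 + ε) (1 - ε),
      |FLSum p f N M x y - f x y| ≤ δ

/-- Continuity on the square `[-1,1]²`. -/
def ContOnSq (f : ℝ → ℝ → ℝ) : Prop :=
  ContinuousOn (fun z : ℝ × ℝ => f z.1 z.2) (Set.Icc (-1:ℝ) 1 ×ˢ Set.Icc (-1:ℝ) 1)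


open Finset

noncomputable section Helpers

/-- partial sums of reciprocals of `lam` -/
def Lsum (lam : ℕ → ℝ) (p : ℕ) : ℝ := ∑ r ∈ Finset.range p, 1 / lam (r + 1)

/-- harmonic partial sum `∑_{t<q} 1/(t+1)` -/
def harmSum (q : ℕ) : ℝ := ∑ t ∈ Finset.range q, 1 / ((t : ℝ) + 1)

variable {lam : ℕ → ℝ}

section lamFacts

variable (hpos : ∀ n : ℕ, 1 ≤ n → 0 < lam n)
    (hmono : ∀ n : ℕ, 1 ≤ n → lam n ≤ lam (n + 1))
    (hdec : ∀ n : ℕ, 1 ≤ n → lam (n + 1) / ((n:ℝ) + 1) ≤ lam n / (n:ℝ))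

include hpos hmono hdec

theorem lam_mono' : ∀ p k : ℕ, 1 ≤ p → p ≤ k → lam p ≤ lam k := by
  intro p k hp hpk
  induction k with
  | zero => omega
  | succ k ih =>
    rcases Nat.lt_or_ge p (k+1) with h | h
    · have hk : 1 ≤ k := by omega
      exact le_trans (ih (by omega)) (hmono k hk)
    · have : p = k + 1 := by omega
      simp [this]

theorem lam_ratio : ∀ p k : ℕ, 1 ≤ p → p ≤ k → lam k * p ≤ lam p * k := by
  intro p k hp hpk
  induction k with
  | zero => omega
  | succ k ih =>
    rcases Nat.lt_or_ge p (k+1) with h | h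
    · have hk : 1 ≤ k := by omega
      have h1 := hdec k hk
      have hkpos : (0:ℝ) < k := by positivity
      have hk1pos : (0:ℝ) < (k:ℝ) + 1 := by positivity
      have h2 : lam (k+1) * k ≤ lam k * (k+1) := by
        rw [div_le_div_iff₀ hk1pos hkpos] at h1
        linarith
      have h3 := ih (by omega)
      have hppos : (0:ℝ) < p := by positivity
      have hlk : 0 < lam k := hpos k hk
      have hlp : 0 < lam p := hpos p hp
      -- lam (k+1) * p ≤ lam p * (k+1)
      push_cast
      have hkc : (p:ℝ) ≤ k := by exact_mod_cast (by omega : p ≤ k)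
      nlinarith [hpos (k+1) (by omega)]
    · have : p = k + 1 := by omega
      subst this
      exact le_rfl

theorem lam_le_lin : ∀ k : ℕ, 1 ≤ k → lam k ≤ lam 1 * k := by
  intro k hk
  have := lam_ratio hpos hmono hdec 1 k le_rfl hk
  push_cast at this ⊢
  linarith

end lamFacts

theorem Lsum_mono (h : ∀ n : ℕ, 1 ≤ n → 0 < lam n) : Monotone (Lsum lam) := by
  intro p q hpq
  unfold Lsum
  apply Finset.sum_le_sum_of_subset_of_nonneg (Finset.range_subset_range.2 hpq)
  intro r _ _
  exact le_of_lt (div_pos one_pos (h (r+1) (by omega)))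

theorem Lsum_one' : Lsum lam 1 = 1 / lam 1 := by simp [Lsum]

theorem Lsum_pos (h : ∀ n : ℕ, 1 ≤ n → 0 < lam n) {p : ℕ} (hp : 1 ≤ p) :
    0 < Lsum lam p := by
  have h1 : 0 < Lsum lam 1 := by
    rw [Lsum_one']
    exact div_pos one_pos (h 1 le_rfl)
  exact lt_of_lt_of_le h1 (Lsum_mono h hp)

theorem Lsum_one : Lsum lam 1 = 1 / lam 1 := by simp [Lsum]

theorem harmSum_mono : Monotone harmSum := by
  intro p q hpq
  apply Finset.sum_le_sum_of_subset_of_nonneg (Finset.range_subset_range.2 hpq)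
  intro r _ _
  positivity

theorem harmSum_nonneg (q : ℕ) : 0 ≤ harmSum q := by
  unfold harmSum; positivity

theorem harmSum_succ (q : ℕ) : harmSum (q + 1) = harmSum q + 1 / ((q:ℝ)+1) :=
  Finset.sum_range_succ _ q

theorem harmSum_le_card (q : ℕ) : harmSum q ≤ q := by
  unfold harmSum
  calc ∑ t ∈ Finset.range q, 1/((t:ℝ)+1) ≤ ∑ t ∈ Finset.range q, 1 := by
        apply Finset.sum_le_sum
        intro t _
        rw [div_le_one (by positivity)]
        have : (0:ℝ) ≤ t := by positivity
        linarith
  _ = q := by simp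

/-- `log x ≥ 1 - 1/x` -/
theorem log_ge_one_sub_inv {x : ℝ} (hx : 0 < x) : 1 - 1/x ≤ Real.log x := by
  have h := Real.log_le_sub_one_of_pos (show 0 < 1/x by positivity)
  rw [Real.log_div one_ne_zero (ne_of_gt hx)] at h
  simp at h
  rw [one_div]
  linarith

theorem harmSum_le_log (q : ℕ) (hq : 1 ≤ q) : harmSum q ≤ 1 + Real.log q := by
  induction q with
  | zero => omega
  | succ q ih =>
    rcases Nat.lt_or_ge q 1 with h | h
    · interval_cases q
      simp [harmSum]
    · have h1 := ih h
      rw [harmSum_succ]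
      have h2 : Real.log ((q:ℝ)+1) - Real.log q ≥ 1/((q:ℝ)+1) := by
        have hq0 : (0:ℝ) < q := by exact_mod_cast h
        rw [← Real.log_div (by positivity) (ne_of_gt hq0)]
        have := log_ge_one_sub_inv (show 0 < ((q:ℝ)+1)/q by positivity)
        have he : 1 - 1/(((q:ℝ)+1)/q) = 1/((q:ℝ)+1) := by
          field_simp
          ring
        rw [he] at this
        linarith
      push_cast
      linarith

theorem log_le_harmSum (q : ℕ) : Real.log ((q:ℝ) + 1) ≤ harmSum q := by
  induction q with
  | zero => simp [harmSum]
  | succ q ih =>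
    rw [harmSum_succ]
    have h2 : Real.log ((q:ℝ)+2) - Real.log ((q:ℝ)+1) ≤ 1/((q:ℝ)+1) := by
      rw [← Real.log_div (by positivity) (by positivity)]
      have := Real.log_le_sub_one_of_pos (show 0 < ((q:ℝ)+2)/((q:ℝ)+1) by positivity)
      have he : ((q:ℝ)+2)/((q:ℝ)+1) - 1 = 1/((q:ℝ)+1) := by field_simp; ring
      rw [he] at this
      linarith
    have he2 : ((q:ℝ)+2) = ((q:ℝ)+1+1) := by ring
    rw [he2] at h2
    push_cast
    linarith

end Helpers
section Part2
open Finset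

/-- sum of reciprocals of distinct positive naturals is at most the harmonic sum of the card -/
theorem recip_sum_le (s : Finset ℕ) (h1 : ∀ x ∈ s, 1 ≤ x) :
    ∑ x ∈ s, (1:ℝ)/x ≤ harmSum s.card := by
  suffices H : ∀ n (s : Finset ℕ), (∀ x ∈ s, 1 ≤ x) → s.card = n →
      ∑ x ∈ s, (1:ℝ)/x ≤ harmSum s.card by
    exact H s.card s h1 rfl
  intro n
  induction n with
  | zero =>
    intro s h1 hn
    rw [Finset.card_eq_zero] at hn
    subst hn; simp [harmSum]
  | succ n ih =>
    intro s h1 hn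
    have hne : s.Nonempty := by
      rw [← Finset.card_pos, hn]; omega
    set x := s.max' hne with hx
    have hxs : x ∈ s := s.max'_mem hne
    have hcard : s.card ≤ x := by
      have : s ⊆ Finset.Icc 1 x := by
        intro y hy
        simp only [Finset.mem_Icc]
        exact ⟨h1 y hy, s.le_max' y hy⟩
      calc s.card ≤ (Finset.Icc 1 x).card := Finset.card_le_card this
      _ = x := by rw [Nat.card_Icc]; omega
    have herase : (s.erase x).card = n := by
      rw [Finset.card_erase_of_mem hxs, hn]
      omega
    have hsum : ∑ y ∈ s, (1:ℝ)/y = ∑ y ∈ s.erase x, (1:ℝ)/y + 1/x := by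
      rw [← Finset.sum_erase_add s _ hxs]
    rw [hsum]
    have hih := ih (s.erase x) (fun y hy => h1 y (Finset.mem_of_mem_erase hy)) herase
    rw [herase] at hih
    have hxn : (1:ℝ)/x ≤ 1/((n:ℝ)+1) := by
      apply div_le_div_of_nonneg_left one_pos.le (by positivity)
      have : (n+1 : ℕ) ≤ x := by omega
      exact_mod_cast this
    rw [hn, harmSum_succ]
    exact add_le_add hih hxn

/-- telescoping sum over Icc -/
theorem telescope_Icc (g : ℕ → ℝ) (a b : ℕ) (hab : a ≤ b + 1) :
    ∑ q ∈ Finset.Icc a b, (g q - g (q+1)) = g a - g (b+1) := by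
  induction b with
  | zero =>
    rcases le_or_gt a 0 with h | h
    · have : a = 0 := by omega
      subst this; simp
    · have : a = 1 := by omega
      subst this; simp
  | succ b ih =>
    rcases le_or_gt a (b+1) with h | h
    · rw [Finset.sum_Icc_succ_top h, ih h]
      ring
    · have : a = b + 2 := by omega
      subst this
      simp
/-- tail sum of squares of reciprocals of distinct naturals exceeding q -/
theorem recip_sq_sum_le (q : ℕ) (hq : 1 ≤ q) (s : Finset ℕ) (hs : ∀ x ∈ s, q < x) :
    ∑ x ∈ s, (1:ℝ)/(x:ℝ)^2 ≤ 1/q := by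
  rcases s.eq_empty_or_nonempty with rfl | hne
  · simp
  set N := s.max' hne with hN
  have h1 : ∑ x ∈ s, (1:ℝ)/(x:ℝ)^2 ≤ ∑ x ∈ s, ((1:ℝ)/((x:ℝ)-1) - 1/x) := by
    apply Finset.sum_le_sum
    intro x hx
    have hx2 : 2 ≤ x := by have := hs x hx; omega
    have hx2' : (2:ℝ) ≤ x := by exact_mod_cast hx2
    rw [div_sub_div _ _ (by linarith) (by linarith), one_mul, mul_one]
    rw [div_le_div_iff₀ (by positivity) (by nlinarith)]
    nlinarith
  have h2 : ∑ x ∈ s, ((1:ℝ)/((x:ℝ)-1) - 1/x) ≤ ∑ x ∈ Finset.Icc (q+1) N, ((1:ℝ)/((x:ℝ)-1) - 1/x) := by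
    apply Finset.sum_le_sum_of_subset_of_nonneg
    · intro x hx
      simp only [Finset.mem_Icc]
      exact ⟨hs x hx, s.le_max' x hx⟩
    · intro x hx _
      simp only [Finset.mem_Icc] at hx
      have hx2 : (2:ℝ) ≤ x := by
        have : 2 ≤ x := by omega
        exact_mod_cast this
      rw [sub_nonneg]
      apply div_le_div_of_nonneg_left one_pos.le (by linarith)
      linarith
  have h3 : ∑ x ∈ Finset.Icc (q+1) N, ((1:ℝ)/((x:ℝ)-1) - 1/x) = 1/q - 1/N := by
    have hqN : q + 1 ≤ N + 1 := by
      have := hs N (s.max'_mem hne); omega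
    have ht := telescope_Icc (fun x => (1:ℝ)/((x:ℝ)-1)) (q+1) N hqN
    have heq : ∑ x ∈ Finset.Icc (q+1) N, ((1:ℝ)/((x:ℝ)-1) - 1/x)
        = ∑ x ∈ Finset.Icc (q+1) N, ((1:ℝ)/((x:ℝ)-1) - 1/((((x+1):ℕ):ℝ)-1)) := by
      apply Finset.sum_congr rfl
      intro x _
      push_cast
      ring_nf
    rw [heq, ht]
    push_cast
    ring_nf
  have hN1 : (0:ℝ) < N := by
    have := hs N (s.max'_mem hne)
    have : 0 < N := by omega
    exact_mod_cast this
  have : (0:ℝ) < 1/N := by positivity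
  linarith

end Part2
section Part3
open Finset

/-- Abel summation identity -/
theorem abel_id (G φ : ℕ → ℝ) (Q : ℕ) (hQ : 1 ≤ Q) :
    ∑ q ∈ Finset.Icc 1 Q, (G q - G (q+1)) * φ q + φ Q * G (Q+1)
      = φ 1 * G 1 + ∑ q ∈ Finset.Icc 2 Q, (φ q - φ (q-1)) * G q := by
  induction Q with
  | zero => omega
  | succ Q ih =>
    rcases le_or_gt 1 Q with h | h
    · rw [Finset.sum_Icc_succ_top (by omega : 1 ≤ Q + 1),
        Finset.sum_Icc_succ_top (by omega : 2 ≤ Q + 1)]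
      have := ih h
      simp only [Nat.add_sub_cancel]
      nlinarith [this]
    · have : Q = 0 := by omega
      subst this
      norm_num
      ring
/-- the bridge: sum over `Fin n` restricted to indices `≤ v` equals a range sum -/
theorem fin_filter_sum (n v : ℕ) (hv : v < n) (F : ℕ → ℝ) :
    ∑ s ∈ Finset.univ.filter (fun s : Fin n => s.1 ≤ v), F s.1
      = ∑ t ∈ Finset.range (v+1), F t := by
  rw [Finset.sum_filter]
  have h1 : ∑ s : Fin n, (if s.1 ≤ v then F s.1 else 0)
      = ∑ t ∈ Finset.range n, (if t ≤ v then F t else 0) :=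
    Fin.sum_univ_eq_sum_range (fun t => if t ≤ v then F t else 0) n
  rw [h1, ← Finset.sum_filter]
  apply Finset.sum_congr
  · ext t
    simp only [Finset.mem_filter, Finset.mem_range]
    omega
  · intro _ _; rfl

/-- rank function from the sorted permutation -/
theorem rank_exists {lam : ℕ → ℝ}
    (hpos : ∀ n : ℕ, 1 ≤ n → 0 < lam n)
    {n : ℕ} (g : Fin n → ℝ) (hg0 : ∀ i, 0 ≤ g i) (V : ℝ)
    (hg : ∀ σ : Equiv.Perm (Fin n), ∑ i, g (σ i) / lam (i.1+1) ≤ V) :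
    ∃ K : Fin n → ℕ, Function.Injective K ∧ (∀ i, 1 ≤ K i ∧ K i ≤ n) ∧
      (∀ i, Lsum lam (K i) * g i ≤ V) := by
  set σ := Tuple.sort (fun i => -g i) with hσ
  have hmon : Monotone ((fun i => -g i) ∘ σ) := Tuple.monotone_sort (fun i => -g i)
  refine ⟨fun i => (σ.symm i).1 + 1, ?_, ?_, ?_⟩
  · intro i j hij
    simp only [add_left_inj] at hij
    have := Fin.val_injective hij
    exact σ.symm.injective this
  · intro i
    constructor
    · show 1 ≤ (σ.symm i).1 + 1
      omega
    · show (σ.symm i).1 + 1 ≤ n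
      have := (σ.symm i).2
      omega
  · intro i
    set r := σ.symm i with hr
    have hri : σ r = i := σ.apply_symm_apply i
    have hchain : Lsum lam (r.1 + 1) * g i
        = ∑ s ∈ Finset.univ.filter (fun s : Fin n => s.1 ≤ r.1), (1 / lam (s.1+1)) * g i := by
      rw [fin_filter_sum n r.1 r.2 (fun t => (1 / lam (t+1)) * g i)]
      rw [Lsum, Finset.sum_mul]
    rw [hchain]
    have h2 : ∑ s ∈ Finset.univ.filter (fun s : Fin n => s.1 ≤ r.1), (1 / lam (s.1+1)) * g i
        ≤ ∑ s ∈ Finset.univ.filter (fun s : Fin n => s.1 ≤ r.1), (1 / lam (s.1+1)) * g (σ s) := by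
      apply Finset.sum_le_sum
      intro s hs
      simp only [Finset.mem_filter] at hs
      have hle : s ≤ r := by
        have := hs.2
        exact Fin.le_def.mpr this
      have := hmon hle
      simp only [Function.comp_apply, neg_le_neg_iff] at this
      have hgs : g i ≤ g (σ s) := by
        rw [← hri]; linarith
      have hl := hpos (s.1+1) (by omega)
      have : 0 < 1 / lam (s.1+1) := by positivity
      nlinarith
    have h3 : ∑ s ∈ Finset.univ.filter (fun s : Fin n => s.1 ≤ r.1), (1 / lam (s.1+1)) * g (σ s)
        ≤ ∑ s : Fin n, (1 / lam (s.1+1)) * g (σ s) := by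
      apply Finset.sum_le_sum_of_subset_of_nonneg (Finset.filter_subset _ _)
      intro s _ _
      have hl := hpos (s.1+1) (by omega)
      have := hg0 (σ s)
      positivity
    have h4 : ∑ s : Fin n, (1 / lam (s.1+1)) * g (σ s) ≤ V := by
      have := hg σ
      calc ∑ s : Fin n, (1 / lam (s.1+1)) * g (σ s)
          = ∑ s : Fin n, g (σ s) / lam (s.1+1) := by
            apply Finset.sum_congr rfl; intro s _; ring
        _ ≤ V := this
    linarith

end Part3
section Part4
open Finset

theorem half_bound (n m q : ℕ) (cond : Fin n → Fin m → Prop)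
    [∀ i j, Decidable (cond i j)]
    (hcard : ∀ i : Fin n, ((Finset.univ : Finset (Fin m)).filter (fun j => cond i j)).card ≤ q)
    (hij : ∀ i j, cond i j → i.1 ≤ j.1) :
    ∑ i : Fin n, ∑ j : Fin m, (if cond i j then 1/(((i.1:ℝ)+1) * ((j.1:ℝ)+1)) else 0)
      ≤ harmSum q ^ 2 + 1 := by
  classical
  rcases Nat.eq_zero_or_pos q with rfl | hq
  · have hz : ∀ i : Fin n, ∀ j : Fin m, ¬ cond i j := by
      intro i j hc
      have := hcard i
      have hmem : j ∈ (Finset.univ : Finset (Fin m)).filter (fun j => cond i j) := by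
        simp [hc]
      have : 0 < ((Finset.univ : Finset (Fin m)).filter (fun j => cond i j)).card :=
        Finset.card_pos.2 ⟨j, hmem⟩
      omega
    have : ∑ i : Fin n, ∑ j : Fin m, (if cond i j then 1/(((i.1:ℝ)+1) * ((j.1:ℝ)+1)) else 0) = 0 := by
      apply Finset.sum_eq_zero; intro i _
      apply Finset.sum_eq_zero; intro j _
      simp [hz i j]
    rw [this]
    positivity
  set B : Fin n → Finset (Fin m) := fun i => (Finset.univ : Finset (Fin m)).filter (fun j => cond i j) with hB
  set S : Fin n → ℝ := fun i => ∑ j ∈ B i, 1/((j.1:ℝ)+1) with hS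
  have heq : ∀ i : Fin n, ∑ j : Fin m, (if cond i j then 1/(((i.1:ℝ)+1) * ((j.1:ℝ)+1)) else 0)
      = (1/((i.1:ℝ)+1)) * S i := by
    intro i
    rw [hS]
    simp only []
    rw [Finset.mul_sum, ← Finset.sum_filter]
    apply Finset.sum_congr rfl
    intro j _
    rw [one_div_mul_one_div]
  have hSnn : ∀ i, 0 ≤ S i := by
    intro i
    apply Finset.sum_nonneg
    intro j _
    positivity
  have hSb : ∀ i : Fin n, S i ≤ harmSum q := by
    intro i
    have himg : S i = ∑ x ∈ (B i).image (fun j : Fin m => j.1 + 1), (1:ℝ)/x := by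
      rw [Finset.sum_image (by intro x _ y _ h; beta_reduce at h; exact Fin.val_injective (by omega))]
      simp only [hS]
      push_cast
      rfl
    rw [himg]
    calc ∑ x ∈ (B i).image (fun j : Fin m => j.1 + 1), (1:ℝ)/x
        ≤ harmSum ((B i).image (fun j : Fin m => j.1 + 1)).card := by
          apply recip_sum_le
          intro x hx
          simp only [Finset.mem_image] at hx
          obtain ⟨j, _, rfl⟩ := hx
          omega
      _ ≤ harmSum q := by
          apply harmSum_mono
          calc ((B i).image (fun j : Fin m => j.1 + 1)).card ≤ (B i).card := Finset.card_image_le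
            _ ≤ q := hcard i
  have hSa : ∀ i : Fin n, S i ≤ q * (1/((i.1:ℝ)+1)) := by
    intro i
    calc S i ≤ (B i).card • (1/((i.1:ℝ)+1)) := by
          apply Finset.sum_le_card_nsmul
          intro j hj
          rw [hB] at hj
          simp only [Finset.mem_filter] at hj
          have hle := hij i j hj.2
          apply div_le_div_of_nonneg_left one_pos.le (by positivity)
          have : (i.1:ℝ) ≤ j.1 := by exact_mod_cast hle
          linarith
      _ ≤ q * (1/((i.1:ℝ)+1)) := by
          rw [nsmul_eq_mul]
          apply mul_le_mul_of_nonneg_right _ (by positivity)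
          exact_mod_cast hcard i
  have hsplit := Finset.sum_filter_add_sum_filter_not (Finset.univ : Finset (Fin n))
      (fun i => i.1 < q) (fun i => (1/((i.1:ℝ)+1)) * S i)
  calc ∑ i : Fin n, ∑ j : Fin m, (if cond i j then 1/(((i.1:ℝ)+1) * ((j.1:ℝ)+1)) else 0)
      = ∑ i : Fin n, (1/((i.1:ℝ)+1)) * S i := Finset.sum_congr rfl (fun i _ => heq i)
    _ = ∑ i ∈ Finset.univ.filter (fun i : Fin n => i.1 < q), (1/((i.1:ℝ)+1)) * S i
        + ∑ i ∈ Finset.univ.filter (fun i : Fin n => ¬ i.1 < q), (1/((i.1:ℝ)+1)) * S i := hsplit.symm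
    _ ≤ harmSum q ^ 2 + 1 := by
        have hA : ∑ i ∈ Finset.univ.filter (fun i : Fin n => i.1 < q), (1/((i.1:ℝ)+1)) * S i
            ≤ harmSum q ^ 2 := by
          calc ∑ i ∈ Finset.univ.filter (fun i : Fin n => i.1 < q), (1/((i.1:ℝ)+1)) * S i
              ≤ ∑ i ∈ Finset.univ.filter (fun i : Fin n => i.1 < q), (1/((i.1:ℝ)+1)) * harmSum q := by
                apply Finset.sum_le_sum
                intro i _
                exact mul_le_mul_of_nonneg_left (hSb i) (by positivity)
            _ = (∑ i ∈ Finset.univ.filter (fun i : Fin n => i.1 < q), (1/((i.1:ℝ)+1))) * harmSum q := by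
                rw [Finset.sum_mul]
            _ ≤ harmSum q * harmSum q := by
                apply mul_le_mul_of_nonneg_right _ (harmSum_nonneg q)
                set F := Finset.univ.filter (fun i : Fin n => i.1 < q) with hF
                have himg : ∑ i ∈ F, (1:ℝ)/((i.1:ℝ)+1) = ∑ x ∈ F.image (fun i : Fin n => i.1 + 1), (1:ℝ)/x := by
                  rw [Finset.sum_image (by intro x _ y _ h; beta_reduce at h; exact Fin.val_injective (by omega))]
                  push_cast
                  rfl
                rw [himg]
                calc ∑ x ∈ F.image (fun i : Fin n => i.1 + 1), (1:ℝ)/x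
                    ≤ harmSum (F.image (fun i : Fin n => i.1 + 1)).card := by
                      apply recip_sum_le
                      intro x hx
                      simp only [Finset.mem_image] at hx
                      obtain ⟨j, _, rfl⟩ := hx
                      omega
                  _ ≤ harmSum q := by
                      apply harmSum_mono
                      rw [← Finset.card_range q]
                      apply Finset.card_le_card_of_injOn (fun x => x - 1)
                      · intro x hx
                        simp only [Finset.mem_coe, Finset.mem_image, hF, Finset.mem_filter] at hx
                        obtain ⟨j, hj, rfl⟩ := hx
                        simp only [Finset.mem_coe, Finset.mem_range]
                        omega
                      · intro x hx y hy hxy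
                        simp only [Finset.coe_image, Set.mem_image] at hx hy
                        obtain ⟨j, _, rfl⟩ := hx
                        obtain ⟨j', _, rfl⟩ := hy
                        simp at hxy
                        omega
            _ = harmSum q ^ 2 := by ring
        have hBt : ∑ i ∈ Finset.univ.filter (fun i : Fin n => ¬ i.1 < q), (1/((i.1:ℝ)+1)) * S i ≤ 1 := by
          calc ∑ i ∈ Finset.univ.filter (fun i : Fin n => ¬ i.1 < q), (1/((i.1:ℝ)+1)) * S i
              ≤ ∑ i ∈ Finset.univ.filter (fun i : Fin n => ¬ i.1 < q), q * (1/((i.1:ℝ)+1)^2) := by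
                apply Finset.sum_le_sum
                intro i _
                have := hSa i
                have h1 : (1/((i.1:ℝ)+1)) * S i ≤ (1/((i.1:ℝ)+1)) * (q * (1/((i.1:ℝ)+1))) :=
                  mul_le_mul_of_nonneg_left (hSa i) (by positivity)
                calc (1/((i.1:ℝ)+1)) * S i ≤ (1/((i.1:ℝ)+1)) * (q * (1/((i.1:ℝ)+1))) := h1
                  _ = q * (1/((i.1:ℝ)+1)^2) := by
                      rw [sq]
                      rw [← one_div_mul_one_div]
                      ring
            _ = q * ∑ i ∈ Finset.univ.filter (fun i : Fin n => ¬ i.1 < q), (1/((i.1:ℝ)+1)^2) := by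
                rw [Finset.mul_sum]
            _ ≤ q * (1/q) := by
                apply mul_le_mul_of_nonneg_left _ (by positivity)
                set F := Finset.univ.filter (fun i : Fin n => ¬ i.1 < q) with hF
                have himg : ∑ i ∈ F, (1:ℝ)/((i.1:ℝ)+1)^2 = ∑ x ∈ F.image (fun i : Fin n => i.1 + 1), (1:ℝ)/(x:ℝ)^2 := by
                  rw [Finset.sum_image (by intro x _ y _ h; beta_reduce at h; exact Fin.val_injective (by omega))]
                  push_cast
                  rfl
                rw [himg]
                apply recip_sq_sum_le q hq
                intro x hx
                simp only [Finset.mem_coe, Finset.mem_image, hF, Finset.mem_filter] at hx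
                obtain ⟨j, hj, rfl⟩ := hx
                omega
            _ = 1 := by
                field_simp
        linarith
end Part4
section Part5
open Finset

theorem card_filter_le_of_inj {α : Type*} [Fintype α] [DecidableEq α] (q : ℕ) (g : α → ℕ)
    (hginj : Function.Injective g) (hg1 : ∀ x, 1 ≤ g x) (P : α → Prop) [DecidablePred P]
    (hP : ∀ x, P x → g x ≤ q) :
    ((Finset.univ : Finset α).filter P).card ≤ q := by
  calc ((Finset.univ : Finset α).filter P).card ≤ (Finset.Icc 1 q).card := by
        apply Finset.card_le_card_of_injOn g
        · intro x hx
          simp only [Finset.mem_coe, Finset.mem_filter] at hx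
          simp only [Finset.mem_coe, Finset.mem_Icc]
          exact ⟨hg1 x, hP x hx.2⟩
        · exact Function.Injective.injOn hginj
    _ = q := by rw [Nat.card_Icc]; omega

theorem Wq_bound (n m q : ℕ) (K Lr : Fin n → Fin m → ℕ)
    (hKinj : ∀ j, Function.Injective fun i => K i j)
    (hLinj : ∀ i, Function.Injective fun j => Lr i j)
    (hK1 : ∀ i j, 1 ≤ K i j) (hL1 : ∀ i j, 1 ≤ Lr i j) :
    ∑ i : Fin n, ∑ j : Fin m,
      (if max (K i j) (Lr i j) ≤ q then 1/(((i.1:ℝ)+1)*((j.1:ℝ)+1)) else 0)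
      ≤ 2 * harmSum q ^ 2 + 2 := by
  classical
  have hsplit : ∀ i : Fin n, ∀ j : Fin m,
      (if max (K i j) (Lr i j) ≤ q then 1/(((i.1:ℝ)+1)*((j.1:ℝ)+1)) else 0)
      = (if (max (K i j) (Lr i j) ≤ q ∧ i.1 ≤ j.1) then 1/(((i.1:ℝ)+1)*((j.1:ℝ)+1)) else 0)
        + (if (max (K i j) (Lr i j) ≤ q ∧ j.1 < i.1) then 1/(((i.1:ℝ)+1)*((j.1:ℝ)+1)) else 0) := by
    intro i j
    by_cases h1 : max (K i j) (Lr i j) ≤ q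
    · by_cases h2 : i.1 ≤ j.1
      · rw [if_pos h1, if_pos ⟨h1, h2⟩, if_neg (by omega)]
        ring
      · rw [if_pos h1, if_neg (by tauto), if_pos ⟨h1, by omega⟩]
        ring
    · rw [if_neg h1, if_neg (by tauto), if_neg (by tauto)]
      ring
  have heq : ∑ i : Fin n, ∑ j : Fin m,
      (if max (K i j) (Lr i j) ≤ q then 1/(((i.1:ℝ)+1)*((j.1:ℝ)+1)) else 0)
      = (∑ i : Fin n, ∑ j : Fin m,
          (if (max (K i j) (Lr i j) ≤ q ∧ i.1 ≤ j.1) then 1/(((i.1:ℝ)+1)*((j.1:ℝ)+1)) else 0))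
        + (∑ i : Fin n, ∑ j : Fin m,
          (if (max (K i j) (Lr i j) ≤ q ∧ j.1 < i.1) then 1/(((i.1:ℝ)+1)*((j.1:ℝ)+1)) else 0)) := by
    rw [← Finset.sum_add_distrib]
    apply Finset.sum_congr rfl
    intro i _
    rw [← Finset.sum_add_distrib]
    exact Finset.sum_congr rfl (fun j _ => hsplit i j)
  rw [heq]
  have hT1 : ∑ i : Fin n, ∑ j : Fin m,
      (if (max (K i j) (Lr i j) ≤ q ∧ i.1 ≤ j.1) then 1/(((i.1:ℝ)+1)*((j.1:ℝ)+1)) else 0)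
      ≤ harmSum q ^ 2 + 1 := by
    apply half_bound n m q (fun i j => max (K i j) (Lr i j) ≤ q ∧ i.1 ≤ j.1)
    · intro i
      apply card_filter_le_of_inj q (fun j => Lr i j) (hLinj i) (hL1 i)
      intro j hj
      exact le_trans (le_max_right _ _) hj.1
    · intro i j h
      exact h.2
  have hT2 : ∑ i : Fin n, ∑ j : Fin m,
      (if (max (K i j) (Lr i j) ≤ q ∧ j.1 < i.1) then 1/(((i.1:ℝ)+1)*((j.1:ℝ)+1)) else 0)
      ≤ harmSum q ^ 2 + 1 := by
    rw [Finset.sum_comm]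
    have hcomm : ∀ j : Fin m, ∀ i : Fin n,
        (if (max (K i j) (Lr i j) ≤ q ∧ j.1 < i.1) then 1/(((i.1:ℝ)+1)*((j.1:ℝ)+1)) else 0)
        = (if (max (K i j) (Lr i j) ≤ q ∧ j.1 < i.1) then 1/(((j.1:ℝ)+1)*((i.1:ℝ)+1)) else 0) := by
      intro j i
      rw [mul_comm]
    calc ∑ j : Fin m, ∑ i : Fin n,
        (if (max (K i j) (Lr i j) ≤ q ∧ j.1 < i.1) then 1/(((i.1:ℝ)+1)*((j.1:ℝ)+1)) else 0)
        = ∑ j : Fin m, ∑ i : Fin n,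
        (if (max (K i j) (Lr i j) ≤ q ∧ j.1 < i.1) then 1/(((j.1:ℝ)+1)*((i.1:ℝ)+1)) else 0) := by
          apply Finset.sum_congr rfl
          intro j _
          exact Finset.sum_congr rfl (fun i _ => hcomm j i)
      _ ≤ harmSum q ^ 2 + 1 := by
          apply half_bound m n q (fun j i => max (K i j) (Lr i j) ≤ q ∧ j.1 < i.1)
          · intro j
            apply card_filter_le_of_inj q (fun i => K i j) (hKinj j) (fun i => hK1 i j)
            intro i hi
            exact le_trans (le_max_left _ _) hi.1
          · intro j i h
            omega
  linarith
end Part5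
section Part6
open Finset

variable {lam : ℕ → ℝ}

theorem Linv_le (hpos : ∀ n : ℕ, 1 ≤ n → 0 < lam n) {q : ℕ} (hq : 1 ≤ q) :
    1 / Lsum lam q ≤ lam 1 := by
  have h1 : Lsum lam 1 ≤ Lsum lam q := Lsum_mono hpos hq
  rw [Lsum_one'] at h1
  have hl1 : 0 < lam 1 := hpos 1 le_rfl
  have h2 : 0 < Lsum lam q := Lsum_pos hpos hq
  rw [div_le_iff₀ h2]
  calc (1:ℝ) = lam 1 * (1/lam 1) := by field_simp
    _ ≤ lam 1 * Lsum lam q := by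
        apply mul_le_mul_of_nonneg_left h1 hl1.le
/-- lower bound for `Lsum` via the square-root trick -/
theorem Lsum_lower (hpos : ∀ n : ℕ, 1 ≤ n → 0 < lam n)
    (hmono : ∀ n : ℕ, 1 ≤ n → lam n ≤ lam (n + 1))
    (hdec : ∀ n : ℕ, 1 ≤ n → lam (n + 1) / ((n:ℝ) + 1) ≤ lam n / (n:ℝ))
    {p q : ℕ} (hp : 1 ≤ p) (hpq : p ≤ q) :
    ((p:ℝ)/lam p) * (harmSum q - harmSum p) ≤ Lsum lam q := by
  have hsub : ∑ r ∈ Finset.Ico p q, (1:ℝ)/((r:ℝ)+1) = harmSum q - harmSum p := by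
    unfold harmSum
    rw [Finset.sum_Ico_eq_sub _ hpq]
  calc ((p:ℝ)/lam p) * (harmSum q - harmSum p)
      = ∑ r ∈ Finset.Ico p q, ((p:ℝ)/lam p) * (1/((r:ℝ)+1)) := by
        rw [← Finset.mul_sum, hsub]
    _ ≤ ∑ r ∈ Finset.Ico p q, 1/lam (r+1) := by
        apply Finset.sum_le_sum
        intro r hr
        simp only [Finset.mem_Ico] at hr
        have hpr : p ≤ r + 1 := by omega
        have hratio := lam_ratio hpos hmono hdec p (r+1) hp hpr
        have hlp : 0 < lam p := hpos p hp
        have hlr : 0 < lam (r+1) := hpos (r+1) (by omega)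
        rw [div_mul_div_comm, mul_one, div_le_div_iff₀ (by positivity) hlr]
        push_cast at hratio ⊢
        nlinarith
    _ ≤ Lsum lam q := by
        unfold Lsum
        apply Finset.sum_le_sum_of_subset_of_nonneg
        · intro r hr
          simp only [Finset.mem_Ico] at hr
          simp only [Finset.mem_range]
          omega
        · intro r _ _
          exact le_of_lt (div_pos one_pos (hpos (r+1) (by omega)))

theorem log55 : (4:ℝ) ≤ Real.log 55 := by
  have h4 : Real.exp 4 ≤ 55 := by
    have h := Real.exp_one_lt_d9
    calc Real.exp 4 = (Real.exp 1)^(4:ℕ) := by rw [← Real.exp_nat_mul]; norm_num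
    _ ≤ (2.7182818286)^(4:ℕ) := by gcongr
    _ ≤ 55 := by norm_num
  rw [Real.le_log_iff_exp_le (by norm_num)]
  exact h4

/-- the per-term bound in the main regime -/
theorem term_big (hpos : ∀ n : ℕ, 1 ≤ n → 0 < lam n)
    (hmono : ∀ n : ℕ, 1 ≤ n → lam n ≤ lam (n + 1))
    (hdec : ∀ n : ℕ, 1 ≤ n → lam (n + 1) / ((n:ℝ) + 1) ≤ lam n / (n:ℝ))
    {q : ℕ} (hq : 55 ≤ q) :
    (2 * harmSum q ^ 2 + 2 - (2 * harmSum (q-1) ^ 2 + 2)) * (1 / Lsum lam q)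
      ≤ 32 * lam (Nat.sqrt q) / ((q:ℝ) * (Nat.sqrt q)) := by
  set p := Nat.sqrt q with hp
  have hp7 : 7 ≤ p := by
    have h1 : Nat.sqrt 55 ≤ Nat.sqrt q := Nat.sqrt_le_sqrt hq
    have h2 : 7 ≤ Nat.sqrt 55 := Nat.le_sqrt.mpr (by norm_num)
    omega
  have hp1 : 1 ≤ p := by omega
  have hpq : p ≤ q := by
    have := Nat.sqrt_le_self q; omega
  have hq1 : (1:ℝ) ≤ q := by
    have : (55:ℝ) ≤ q := by exact_mod_cast hq
    linarith
  have hqpos : (0:ℝ) < q := by linarith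
  have hlogq : (4:ℝ) ≤ Real.log q := by
    calc (4:ℝ) ≤ Real.log 55 := log55
    _ ≤ Real.log q := by
        apply Real.log_le_log (by norm_num)
        exact_mod_cast hq
  have hlogqpos : (0:ℝ) < Real.log q := by linarith
  -- φ difference
  have hqsub : q - 1 + 1 = q := by omega
  have hdiff : harmSum q - harmSum (q-1) = 1/((q:ℝ)) := by
    have := harmSum_succ (q-1)
    rw [hqsub] at this
    rw [this]
    have : (((q-1:ℕ)):ℝ) + 1 = q := by
      have : (1:ℕ) ≤ q := by omega
      push_cast [Nat.cast_sub this]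
      ring
    rw [this]
    ring
  have hmono' : harmSum (q-1) ≤ harmSum q := harmSum_mono (by omega)
  have hharm_le : harmSum q ≤ 2 * Real.log q := by
    calc harmSum q ≤ 1 + Real.log q := harmSum_le_log q (by omega)
      _ ≤ 2 * Real.log q := by linarith
  have hharm_nonneg := harmSum_nonneg q
  have hphidiff : (2 * harmSum q ^ 2 + 2 - (2 * harmSum (q-1) ^ 2 + 2))
      ≤ 8 * Real.log q / q := by
    have he : (2 * harmSum q ^ 2 + 2 - (2 * harmSum (q-1) ^ 2 + 2))
        = 2 * (harmSum q - harmSum (q-1)) * (harmSum q + harmSum (q-1)) := by ring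
    rw [he, hdiff]
    have h1 : harmSum q + harmSum (q-1) ≤ 4 * Real.log q := by
      have := harmSum_mono (show q - 1 ≤ q by omega)
      linarith
    calc 2 * (1/(q:ℝ)) * (harmSum q + harmSum (q-1)) ≤ 2 * (1/(q:ℝ)) * (4 * Real.log q) := by
          apply mul_le_mul_of_nonneg_left h1 (by positivity)
      _ = 8 * Real.log q / q := by ring
  -- Lsum lower bound
  have hlp : 0 < lam p := hpos p hp1
  have hppos : (0:ℝ) < p := by positivity
  have hlogp : Real.log p ≤ Real.log q / 2 := by
    have hp2 : ((p:ℝ))^2 ≤ q := by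
      have := Nat.sqrt_le' q
      rw [hp]
      exact_mod_cast this
    have := Real.log_le_log (by positivity) hp2
    rw [Real.log_pow] at this
    push_cast at this
    linarith
  have hgap : Real.log q / 4 ≤ harmSum q - harmSum p := by
    have h1 : Real.log ((q:ℝ)+1) ≤ harmSum q := log_le_harmSum q
    have h2 : harmSum p ≤ 1 + Real.log p := harmSum_le_log p hp1
    have h3 : Real.log q ≤ Real.log ((q:ℝ)+1) := Real.log_le_log hqpos (by linarith)
    have : harmSum q - harmSum p ≥ Real.log q - 1 - Real.log q / 2 := by linarith
    linarith
  have hLlow : ((p:ℝ)/lam p) * (Real.log q / 4) ≤ Lsum lam q := by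
    calc ((p:ℝ)/lam p) * (Real.log q / 4) ≤ ((p:ℝ)/lam p) * (harmSum q - harmSum p) := by
          apply mul_le_mul_of_nonneg_left hgap (by positivity)
      _ ≤ Lsum lam q := Lsum_lower hpos hmono hdec hp1 hpq
  have hLpos : 0 < Lsum lam q := Lsum_pos hpos (by omega)
  have hLinv : 1 / Lsum lam q ≤ 4 * lam p / ((p:ℝ) * Real.log q) := by
    rw [div_le_div_iff₀ hLpos (by positivity)]
    calc 1 * ((p:ℝ) * Real.log q) = ((p:ℝ)/lam p) * (Real.log q / 4) * (4 * lam p) := by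
          field_simp
      _ ≤ Lsum lam q * (4 * lam p) := by
          apply mul_le_mul_of_nonneg_right hLlow (by positivity)
      _ = 4 * lam p * Lsum lam q := by ring
  have hphinonneg : 0 ≤ (2 * harmSum q ^ 2 + 2 - (2 * harmSum (q-1) ^ 2 + 2)) := by
    have h0 := harmSum_nonneg (q-1)
    nlinarith
  calc (2 * harmSum q ^ 2 + 2 - (2 * harmSum (q-1) ^ 2 + 2)) * (1 / Lsum lam q)
      ≤ (8 * Real.log q / q) * (4 * lam p / ((p:ℝ) * Real.log q)) := by
        apply mul_le_mul hphidiff hLinv (by positivity) (by positivity)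
    _ = 32 * lam p / ((q:ℝ) * p) := by
        field_simp
        ring
end Part6
section Part7
open Finset

variable {lam : ℕ → ℝ}

theorem fiber_est (hpos : ∀ n : ℕ, 1 ≤ n → 0 < lam n)
    (hsum : Summable fun n : ℕ => lam (n + 1) / ((n:ℝ) + 1) ^ 2)
    (s : Finset ℕ) (hs : ∀ q ∈ s, 55 ≤ q) :
    ∑ q ∈ s, 32 * lam (Nat.sqrt q) / ((q:ℝ) * (Nat.sqrt q))
      ≤ 96 * ∑' k : ℕ, lam (k+1) / ((k:ℝ)+1)^2 := by
  classical
  set u : ℕ → ℝ := fun n => lam (n + 1) / ((n:ℝ) + 1) ^ 2 with hu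
  have hunn : ∀ n, 0 ≤ u n := by
    intro n
    have := hpos (n+1) (by omega)
    rw [hu]
    positivity
  set t := s.image Nat.sqrt with ht
  have hmaps : ∀ q ∈ s, Nat.sqrt q ∈ t := fun q hq => Finset.mem_image_of_mem _ hq
  rw [← Finset.sum_fiberwise_of_maps_to hmaps (fun q => 32 * lam (Nat.sqrt q) / ((q:ℝ) * (Nat.sqrt q)))]
  have hp7 : ∀ p ∈ t, 7 ≤ p := by
    intro p hp
    rw [ht] at hp
    simp only [Finset.mem_image] at hp
    obtain ⟨q, hq, rfl⟩ := hp
    have h1 : Nat.sqrt 55 ≤ Nat.sqrt q := Nat.sqrt_le_sqrt (hs q hq)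
    have h2 : 7 ≤ Nat.sqrt 55 := Nat.le_sqrt.mpr (by norm_num)
    omega
  have hinner : ∀ p ∈ t, ∑ q ∈ s.filter (fun q => Nat.sqrt q = p),
      32 * lam (Nat.sqrt q) / ((q:ℝ) * (Nat.sqrt q)) ≤ 96 * lam p / ((p:ℝ)^2) := by
    intro p hp
    have hp7' := hp7 p hp
    have hp1 : (1:ℝ) ≤ p := by
      have : (7:ℕ) ≤ p := hp7'
      have : (7:ℝ) ≤ p := by exact_mod_cast this
      linarith
    have hlp : 0 < lam p := hpos p (by omega)
    have hbound : ∀ q ∈ s.filter (fun q => Nat.sqrt q = p),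
        32 * lam (Nat.sqrt q) / ((q:ℝ) * (Nat.sqrt q)) ≤ 32 * lam p / ((p:ℝ)^2 * p) := by
      intro q hq
      simp only [Finset.mem_filter] at hq
      rw [hq.2]
      have hq2 : ((p:ℝ))^2 ≤ q := by
        have := Nat.sqrt_le' q
        rw [hq.2] at this
        exact_mod_cast this
      apply div_le_div_of_nonneg_left (by positivity) (by positivity)
      have : (0:ℝ) < p := by linarith
      nlinarith
    have hcard : (s.filter (fun q => Nat.sqrt q = p)).card ≤ 2*p+1 := by
      calc (s.filter (fun q => Nat.sqrt q = p)).card ≤ (Finset.Icc (p*p) (p*p+2*p)).card := by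
            apply Finset.card_le_card
            intro q hq
            simp only [Finset.mem_filter] at hq
            have h1 : p*p ≤ q := by
              have := Nat.sqrt_le q
              rw [hq.2] at this
              exact this
            have h2 : q < (p+1)*(p+1) := by
              have := Nat.lt_succ_sqrt q
              rw [hq.2] at this
              exact this
            simp only [Finset.mem_Icc]
            constructor
            · exact h1
            · nlinarith
        _ = 2*p+1 := by rw [Nat.card_Icc]; omega
    calc ∑ q ∈ s.filter (fun q => Nat.sqrt q = p), 32 * lam (Nat.sqrt q) / ((q:ℝ) * (Nat.sqrt q))
        ≤ (s.filter (fun q => Nat.sqrt q = p)).card • (32 * lam p / ((p:ℝ)^2 * p)) :=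
          Finset.sum_le_card_nsmul _ _ _ hbound
      _ ≤ ((2*p+1 : ℕ) : ℝ) * (32 * lam p / ((p:ℝ)^2 * p)) := by
          rw [nsmul_eq_mul]
          apply mul_le_mul_of_nonneg_right _ (by positivity)
          exact_mod_cast hcard
      _ ≤ 96 * lam p / ((p:ℝ)^2) := by
          push_cast
          have hppos : (0:ℝ) < p := by linarith
          rw [show (2*(p:ℝ)+1) * (32*lam p/((p:ℝ)^2*p)) = ((2*(p:ℝ)+1)*(32*lam p))/((p:ℝ)^2*p) from by ring]
          rw [div_le_div_iff₀ (by nlinarith) (by nlinarith)]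
          have key : 0 ≤ 32 * lam p * ((p:ℝ)^2 * ((p:ℝ)-1)) := by
            apply mul_nonneg (by nlinarith) (by nlinarith)
          nlinarith [key]
  calc ∑ p ∈ t, ∑ q ∈ s.filter (fun q => Nat.sqrt q = p),
        32 * lam (Nat.sqrt q) / ((q:ℝ) * (Nat.sqrt q))
      ≤ ∑ p ∈ t, 96 * lam p / ((p:ℝ)^2) := Finset.sum_le_sum hinner
    _ = 96 * ∑ p ∈ t, lam p / ((p:ℝ)^2) := by
        rw [Finset.mul_sum]
        apply Finset.sum_congr rfl
        intro p _
        ring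
    _ ≤ 96 * ∑' k : ℕ, lam (k+1) / ((k:ℝ)+1)^2 := by
        apply mul_le_mul_of_nonneg_left _ (by norm_num)
        have hinj : ∀ x ∈ t, ∀ y ∈ t, x - 1 = y - 1 → x = y := by
          intro x hx y hy hxy
          have := hp7 x hx
          have := hp7 y hy
          omega
        have himg : ∑ k ∈ t.image (fun p => p - 1), u k = ∑ p ∈ t, lam p / ((p:ℝ)^2) := by
          rw [Finset.sum_image hinj]
          apply Finset.sum_congr rfl
          intro p hp
          have hp1 : 1 ≤ p := by have := hp7 p hp; omega
          rw [hu]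
          simp only []
          have he1 : p - 1 + 1 = p := by omega
          have he2 : ((p - 1 : ℕ) : ℝ) + 1 = p := by
            push_cast [Nat.cast_sub hp1]
            ring
          rw [he1, he2]
        rw [← himg]
        exact Summable.sum_le_tsum _ (fun k _ => hunn k) hsum

theorem tail_est (hpos : ∀ n : ℕ, 1 ≤ n → 0 < lam n)
    (hmono : ∀ n : ℕ, 1 ≤ n → lam n ≤ lam (n + 1))
    (hdec : ∀ n : ℕ, 1 ≤ n → lam (n + 1) / ((n:ℝ) + 1) ≤ lam n / (n:ℝ))
    (hsum : Summable fun n : ℕ => lam (n + 1) / ((n:ℝ) + 1) ^ 2)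
    (Q : ℕ) :
    (2 * harmSum 1 ^ 2 + 2) * (1 / Lsum lam 1)
      + ∑ q ∈ Finset.Icc 2 Q, ((2 * harmSum q ^ 2 + 2) - (2 * harmSum (q-1) ^ 2 + 2)) * (1 / Lsum lam q)
    ≤ 400 * lam 1 + 96 * ∑' k : ℕ, lam (k+1) / ((k:ℝ)+1)^2 := by
  classical
  have hl1 : 0 < lam 1 := hpos 1 le_rfl
  have hfirst : (2 * harmSum 1 ^ 2 + 2) * (1 / Lsum lam 1) = 4 * lam 1 := by
    have h1 : harmSum 1 = 1 := by simp [harmSum]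
    rw [h1, Lsum_one', one_div_one_div]
    ring
  have hterm_small : ∀ q, 2 ≤ q →
      ((2 * harmSum q ^ 2 + 2) - (2 * harmSum (q-1) ^ 2 + 2)) * (1 / Lsum lam q) ≤ 6 * lam 1 := by
    intro q hq2
    have hqsub : q - 1 + 1 = q := by omega
    have hdiffe : harmSum q = harmSum (q-1) + 1/((q:ℝ)) := by
      have h := harmSum_succ (q-1)
      rw [hqsub] at h
      rw [h]
      have : (((q-1:ℕ)):ℝ) + 1 = q := by
        push_cast [Nat.cast_sub (by omega : 1 ≤ q)]
        ring
      rw [this]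
    have hqpos : (0:ℝ) < q := by positivity
    have hphidiff : ((2 * harmSum q ^ 2 + 2) - (2 * harmSum (q-1) ^ 2 + 2)) ≤ 6 := by
      have h1 : harmSum q ≤ q := harmSum_le_card q
      have h2 : 0 ≤ harmSum (q-1) := harmSum_nonneg _
      have h3 : harmSum (q-1) ≤ harmSum q := harmSum_mono (by omega)
      rw [hdiffe]
      have he : 2 * (harmSum (q-1) + 1/(q:ℝ)) ^ 2 + 2 - (2 * harmSum (q-1) ^ 2 + 2)
          = 2 * (1/(q:ℝ)) * (2 * harmSum (q-1) + 1/(q:ℝ)) := by ring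
      rw [he]
      have h4 : harmSum (q-1) ≤ (q:ℝ) := by
        calc harmSum (q-1) ≤ harmSum q := h3
          _ ≤ q := h1
      have h5 : 1/(q:ℝ) ≤ 1 := by
        rw [div_le_one hqpos]
        have : (2:ℝ) ≤ q := by exact_mod_cast hq2
        linarith
      have h6 : (0:ℝ) < 1/(q:ℝ) := by positivity
      calc 2 * (1/(q:ℝ)) * (2 * harmSum (q-1) + 1/(q:ℝ))
          ≤ 2 * (1/(q:ℝ)) * (2 * (q:ℝ) + 1/(q:ℝ)) := by
            apply mul_le_mul_of_nonneg_left _ (by positivity)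
            linarith
        _ = 4 + 2 * (1/(q:ℝ))^2 := by field_simp; ring
        _ ≤ 6 := by nlinarith [h5, h6]
    have hphinn : 0 ≤ ((2 * harmSum q ^ 2 + 2) - (2 * harmSum (q-1) ^ 2 + 2)) := by
      have h3 : harmSum (q-1) ≤ harmSum q := harmSum_mono (by omega)
      have h2 : 0 ≤ harmSum (q-1) := harmSum_nonneg _
      nlinarith
    have hLinv : 1/Lsum lam q ≤ lam 1 := Linv_le hpos (by omega)
    have hLinvnn : 0 ≤ 1/Lsum lam q := le_of_lt (by
      have := Lsum_pos hpos (show 1 ≤ q by omega)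
      positivity)
    calc ((2 * harmSum q ^ 2 + 2) - (2 * harmSum (q-1) ^ 2 + 2)) * (1 / Lsum lam q)
        ≤ 6 * (1/Lsum lam q) := mul_le_mul_of_nonneg_right hphidiff hLinvnn
      _ ≤ 6 * lam 1 := by linarith
  -- split the sum
  have hsplit := Finset.sum_filter_add_sum_filter_not (Finset.Icc 2 Q)
      (fun q => 55 ≤ q)
      (fun q => ((2 * harmSum q ^ 2 + 2) - (2 * harmSum (q-1) ^ 2 + 2)) * (1 / Lsum lam q))
  have hbig : ∑ q ∈ (Finset.Icc 2 Q).filter (fun q => 55 ≤ q),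
      ((2 * harmSum q ^ 2 + 2) - (2 * harmSum (q-1) ^ 2 + 2)) * (1 / Lsum lam q)
      ≤ 96 * ∑' k : ℕ, lam (k+1) / ((k:ℝ)+1)^2 := by
    calc ∑ q ∈ (Finset.Icc 2 Q).filter (fun q => 55 ≤ q),
        ((2 * harmSum q ^ 2 + 2) - (2 * harmSum (q-1) ^ 2 + 2)) * (1 / Lsum lam q)
        ≤ ∑ q ∈ (Finset.Icc 2 Q).filter (fun q => 55 ≤ q),
          32 * lam (Nat.sqrt q) / ((q:ℝ) * (Nat.sqrt q)) := by
          apply Finset.sum_le_sum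
          intro q hq
          simp only [Finset.mem_filter] at hq
          exact term_big hpos hmono hdec hq.2
      _ ≤ 96 * ∑' k : ℕ, lam (k+1) / ((k:ℝ)+1)^2 := by
          apply fiber_est hpos hsum
          intro q hq
          simp only [Finset.mem_filter] at hq
          exact hq.2
  have hsmall : ∑ q ∈ (Finset.Icc 2 Q).filter (fun q => ¬ 55 ≤ q),
      ((2 * harmSum q ^ 2 + 2) - (2 * harmSum (q-1) ^ 2 + 2)) * (1 / Lsum lam q)
      ≤ 318 * lam 1 := by
    calc ∑ q ∈ (Finset.Icc 2 Q).filter (fun q => ¬ 55 ≤ q),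
        ((2 * harmSum q ^ 2 + 2) - (2 * harmSum (q-1) ^ 2 + 2)) * (1 / Lsum lam q)
        ≤ ((Finset.Icc 2 Q).filter (fun q => ¬ 55 ≤ q)).card • (6 * lam 1) := by
          apply Finset.sum_le_card_nsmul
          intro q hq
          simp only [Finset.mem_filter, Finset.mem_Icc] at hq
          exact hterm_small q hq.1.1
      _ ≤ (53:ℕ) * (6 * lam 1) := by
          rw [nsmul_eq_mul]
          apply mul_le_mul_of_nonneg_right _ (by positivity)
          have hcard : ((Finset.Icc 2 Q).filter (fun q => ¬ 55 ≤ q)).card ≤ 53 := by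
            calc ((Finset.Icc 2 Q).filter (fun q => ¬ 55 ≤ q)).card
                ≤ (Finset.Icc 2 54).card := by
                  apply Finset.card_le_card
                  intro q hq
                  simp only [Finset.mem_filter, Finset.mem_Icc] at hq
                  simp only [Finset.mem_Icc]
                  omega
              _ = 53 := by rw [Nat.card_Icc]
          exact_mod_cast hcard
      _ ≤ 318 * lam 1 := by push_cast; linarith
  have htsumnn : 0 ≤ ∑' k : ℕ, lam (k+1) / ((k:ℝ)+1)^2 := by
    apply tsum_nonneg
    intro k
    have := hpos (k+1) (by omega)
    positivity
  rw [hfirst, ← hsplit]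
  linarith
end Part7
section Part8
open Finset

variable {lam : ℕ → ℝ}

theorem core_lemma (hpos : ∀ n : ℕ, 1 ≤ n → 0 < lam n)
    (hmono : ∀ n : ℕ, 1 ≤ n → lam n ≤ lam (n + 1))
    (hdec : ∀ n : ℕ, 1 ≤ n → lam (n + 1) / ((n:ℝ) + 1) ≤ lam n / (n:ℝ))
    (hsum : Summable fun n : ℕ => lam (n + 1) / ((n:ℝ) + 1) ^ 2)
    (V : ℝ) (hV : 0 ≤ V) (n m : ℕ)
    (M : Fin n → Fin m → ℝ) (hM0 : ∀ i j, 0 ≤ M i j)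
    (hcol : ∀ (j : Fin m) (σ : Equiv.Perm (Fin n)), ∑ i, M (σ i) j / lam (i.1+1) ≤ V)
    (hrow : ∀ (i : Fin n) (τ : Equiv.Perm (Fin m)), ∑ j, M i (τ j) / lam (j.1+1) ≤ V) :
    ∑ i : Fin n, ∑ j : Fin m, M i j / (((i.1:ℝ)+1) * ((j.1:ℝ)+1))
      ≤ V * (400 * lam 1 + 96 * ∑' k : ℕ, lam (k+1) / ((k:ℝ)+1)^2) := by
  classical
  have hl1 : 0 < lam 1 := hpos 1 le_rfl
  have hAnn : 0 ≤ ∑' k : ℕ, lam (k+1) / ((k:ℝ)+1)^2 := by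
    apply tsum_nonneg
    intro k
    have := hpos (k+1) (by omega)
    positivity
  have hCnn : 0 ≤ 400 * lam 1 + 96 * ∑' k : ℕ, lam (k+1) / ((k:ℝ)+1)^2 := by positivity
  rcases Nat.eq_zero_or_pos n with rfl | hn
  · simp only [Finset.univ_eq_empty, Finset.sum_empty]
    exact mul_nonneg hV hCnn
  rcases Nat.eq_zero_or_pos m with rfl | hm
  · simp only [Finset.univ_eq_empty, Finset.sum_empty, Finset.sum_const_zero]
    exact mul_nonneg hV hCnn
  -- column and row ranks
  have hKc : ∀ j : Fin m, ∃ K : Fin n → ℕ, Function.Injective K ∧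
      (∀ i, 1 ≤ K i ∧ K i ≤ n) ∧ (∀ i, Lsum lam (K i) * M i j ≤ V) := by
    intro j
    exact rank_exists hpos (fun i => M i j) (fun i => hM0 i j) V (hcol j)
  choose Kc hKcinj hKcb hKcle using hKc
  have hKr : ∀ i : Fin n, ∃ K : Fin m → ℕ, Function.Injective K ∧
      (∀ j, 1 ≤ K j ∧ K j ≤ m) ∧ (∀ j, Lsum lam (K j) * M i j ≤ V) := by
    intro i
    exact rank_exists hpos (fun j => M i j) (fun j => hM0 i j) V (hrow i)
  choose Kr hKrinj hKrb hKrle using hKr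
  set Q := n + m with hQdef
  have hQ1 : 1 ≤ Q := by omega
  set G : ℕ → ℝ := fun q => 1 / Lsum lam q with hG
  set w : Fin n → Fin m → ℝ := fun i j => 1 / (((i.1:ℝ)+1) * ((j.1:ℝ)+1)) with hw
  set mr : Fin n → Fin m → ℕ := fun i j => max (Kc j i) (Kr i j) with hmr
  have hwnn : ∀ i j, 0 ≤ w i j := by
    intro i j
    rw [hw]
    positivity
  have hmr1 : ∀ i j, 1 ≤ mr i j := fun i j => le_trans (hKcb j i).1 (le_max_left _ _)
  have hmrQ : ∀ i j, mr i j ≤ Q := by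
    intro i j
    rw [hmr, hQdef]
    simp only [max_le_iff]
    exact ⟨by have := (hKcb j i).2; omega, by have := (hKrb i j).2; omega⟩
  have hGnn : ∀ q : ℕ, 1 ≤ q → 0 ≤ G q := by
    intro q hq
    rw [hG]
    simp only []
    have := Lsum_pos hpos hq
    positivity
  have hδnn : ∀ q : ℕ, 1 ≤ q → 0 ≤ G q - G (q+1) := by
    intro q hq
    rw [hG]
    simp only [sub_nonneg]
    apply div_le_div_of_nonneg_left one_pos.le (Lsum_pos hpos hq)
    exact Lsum_mono hpos (by omega)
  have hMle : ∀ i j, M i j ≤ V * G (mr i j) := by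
    intro i j
    have hLpos : 0 < Lsum lam (mr i j) := Lsum_pos hpos (hmr1 i j)
    have h1 : Lsum lam (mr i j) * M i j ≤ V := by
      rw [hmr]
      simp only []
      rcases max_choice (Kc j i) (Kr i j) with h | h
      · rw [h]; exact hKcle j i
      · rw [h]; exact hKrle i j
    rw [hG]
    simp only []
    rw [mul_one_div, le_div_iff₀ hLpos]
    nlinarith
  -- step 1 : bound by V * T
  have hstep1 : ∑ i : Fin n, ∑ j : Fin m, M i j / (((i.1:ℝ)+1) * ((j.1:ℝ)+1))
      ≤ V * ∑ i : Fin n, ∑ j : Fin m, w i j * G (mr i j) := by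
    rw [Finset.mul_sum]
    apply Finset.sum_le_sum
    intro i _
    rw [Finset.mul_sum]
    apply Finset.sum_le_sum
    intro j _
    have h1 : M i j / (((i.1:ℝ)+1) * ((j.1:ℝ)+1)) = M i j * w i j := by
      rw [hw]; simp only []; ring
    rw [h1]
    calc M i j * w i j ≤ (V * G (mr i j)) * w i j :=
          mul_le_mul_of_nonneg_right (hMle i j) (hwnn i j)
      _ = V * (w i j * G (mr i j)) := by ring
  -- telescope
  have htel : ∀ i j, G (mr i j) = (∑ q ∈ Finset.Icc (mr i j) Q, (G q - G (q+1))) + G (Q+1) := by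
    intro i j
    have := telescope_Icc G (mr i j) Q (by have := hmrQ i j; omega)
    linarith
  set W : ℕ → ℝ := fun q => ∑ i : Fin n, ∑ j : Fin m, (if mr i j ≤ q then w i j else 0) with hW
  have hT : ∑ i : Fin n, ∑ j : Fin m, w i j * G (mr i j)
      = (∑ q ∈ Finset.Icc 1 Q, (G q - G (q+1)) * W q) + W Q * G (Q+1) := by
    have hIcc : ∀ i : Fin n, ∀ j : Fin m,
        Finset.Icc (mr i j) Q = (Finset.Icc 1 Q).filter (fun q => mr i j ≤ q) := by
      intro i j
      ext q
      simp only [Finset.mem_Icc, Finset.mem_filter]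
      have := hmr1 i j
      omega
    have hpt : ∀ i : Fin n, ∀ j : Fin m, w i j * G (mr i j)
        = (∑ q ∈ Finset.Icc 1 Q, (if mr i j ≤ q then w i j * (G q - G (q+1)) else 0))
          + w i j * G (Q+1) := by
      intro i j
      rw [htel i j, mul_add, Finset.mul_sum, hIcc i j, Finset.sum_filter]
    calc ∑ i : Fin n, ∑ j : Fin m, w i j * G (mr i j)
        = ∑ i : Fin n, ∑ j : Fin m,
            ((∑ q ∈ Finset.Icc 1 Q, (if mr i j ≤ q then w i j * (G q - G (q+1)) else 0))
              + w i j * G (Q+1)) := by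
          apply Finset.sum_congr rfl
          intro i _
          exact Finset.sum_congr rfl (fun j _ => hpt i j)
      _ = (∑ i : Fin n, ∑ j : Fin m,
            ∑ q ∈ Finset.Icc 1 Q, (if mr i j ≤ q then w i j * (G q - G (q+1)) else 0))
          + (∑ i : Fin n, ∑ j : Fin m, w i j) * G (Q+1) := by
          rw [Finset.sum_mul]
          rw [← Finset.sum_add_distrib]
          apply Finset.sum_congr rfl
          intro i _
          rw [Finset.sum_mul, ← Finset.sum_add_distrib]
      _ = (∑ q ∈ Finset.Icc 1 Q, (G q - G (q+1)) * W q) + W Q * G (Q+1) := by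
          congr 1
          · calc ∑ i : Fin n, ∑ j : Fin m,
                ∑ q ∈ Finset.Icc 1 Q, (if mr i j ≤ q then w i j * (G q - G (q+1)) else 0)
                = ∑ i : Fin n, ∑ q ∈ Finset.Icc 1 Q,
                    ∑ j : Fin m, (if mr i j ≤ q then w i j * (G q - G (q+1)) else 0) := by
                  exact Finset.sum_congr rfl (fun i _ => Finset.sum_comm)
              _ = ∑ q ∈ Finset.Icc 1 Q, ∑ i : Fin n,
                    ∑ j : Fin m, (if mr i j ≤ q then w i j * (G q - G (q+1)) else 0) :=
                  Finset.sum_comm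
              _ = ∑ q ∈ Finset.Icc 1 Q, (G q - G (q+1)) * W q := by
                  apply Finset.sum_congr rfl
                  intro q _
                  rw [hW]
                  simp only []
                  rw [Finset.mul_sum]
                  apply Finset.sum_congr rfl
                  intro i _
                  rw [Finset.mul_sum]
                  apply Finset.sum_congr rfl
                  intro j _
                  by_cases h : mr i j ≤ q
                  · simp only [if_pos h]; ring
                  · simp only [if_neg h]; ring
          · have hWQ : W Q = ∑ i : Fin n, ∑ j : Fin m, w i j := by
              rw [hW]
              apply Finset.sum_congr rfl
              intro i _
              apply Finset.sum_congr rfl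
              intro j _
              rw [if_pos (hmrQ i j)]
            rw [hWQ]
  -- bound W by φ
  have hWle : ∀ q : ℕ, W q ≤ 2 * harmSum q ^ 2 + 2 := by
    intro q
    have hb := Wq_bound n m q (fun i j => Kc j i) Kr
      (fun j => hKcinj j) (fun i => hKrinj i)
      (fun i j => (hKcb j i).1) (fun i j => (hKrb i j).1)
    rw [hW]
    simp only [hmr, hw]
    exact hb
  have habel := abel_id G (fun q => 2 * harmSum q ^ 2 + 2) Q hQ1
  have htail := tail_est hpos hmono hdec hsum Q
  have hTle : ∑ i : Fin n, ∑ j : Fin m, w i j * G (mr i j)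
      ≤ 400 * lam 1 + 96 * ∑' k : ℕ, lam (k+1) / ((k:ℝ)+1)^2 := by
    rw [hT]
    have h1 : ∑ q ∈ Finset.Icc 1 Q, (G q - G (q+1)) * W q
        ≤ ∑ q ∈ Finset.Icc 1 Q, (G q - G (q+1)) * (2 * harmSum q ^ 2 + 2) := by
      apply Finset.sum_le_sum
      intro q hq
      simp only [Finset.mem_Icc] at hq
      exact mul_le_mul_of_nonneg_left (hWle q) (hδnn q hq.1)
    have h2 : W Q * G (Q+1) ≤ (2 * harmSum Q ^ 2 + 2) * G (Q+1) :=
      mul_le_mul_of_nonneg_right (hWle Q) (hGnn (Q+1) (by omega))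
    have h3 : ∑ q ∈ Finset.Icc 1 Q, (G q - G (q+1)) * (2 * harmSum q ^ 2 + 2)
        + (2 * harmSum Q ^ 2 + 2) * G (Q+1)
        = (2 * harmSum 1 ^ 2 + 2) * G 1
          + ∑ q ∈ Finset.Icc 2 Q, ((2 * harmSum q ^ 2 + 2) - (2 * harmSum (q-1) ^ 2 + 2)) * G q := by
      linarith [habel]
    have h4 : (2 * harmSum 1 ^ 2 + 2) * G 1
        + ∑ q ∈ Finset.Icc 2 Q, ((2 * harmSum q ^ 2 + 2) - (2 * harmSum (q-1) ^ 2 + 2)) * G q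
        ≤ 400 * lam 1 + 96 * ∑' k : ℕ, lam (k+1) / ((k:ℝ)+1)^2 := by
      rw [hG]
      simp only []
      exact htail
    linarith
  calc ∑ i : Fin n, ∑ j : Fin m, M i j / (((i.1:ℝ)+1) * ((j.1:ℝ)+1))
      ≤ V * ∑ i : Fin n, ∑ j : Fin m, w i j * G (mr i j) := hstep1
    _ ≤ V * (400 * lam 1 + 96 * ∑' k : ℕ, lam (k+1) / ((k:ℝ)+1)^2) :=
        mul_le_mul_of_nonneg_left hTle hV
end Part8
section Part9
open Finset

theorem abs_mix_col (A B C D : ℝ) : |A - B - C + D| ≤ |C - A| + |D - B| := by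
  have h : A - B - C + D = -((C - A) - (D - B)) := by ring
  rw [h, abs_neg, sub_eq_add_neg]
  refine (abs_add_le _ _).trans ?_
  rw [abs_neg]

theorem abs_mix_row (A B C D : ℝ) : |A - B - C + D| ≤ |B - A| + |D - C| := by
  have h : A - B - C + D = -((B - A) - (D - C)) := by ring
  rw [h, abs_neg, sub_eq_add_neg]
  refine (abs_add_le _ _).trans ?_
  rw [abs_neg]

end Part9

/-- if `Λ = {λ_n}` is nondecreasing and positive, `λ_n/n` is nonincreasing and
`∑ λ_n/n² < ∞`, then `PΛBV ⊆ HBV`. -/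
theorem PLambdaBV_subset_HBV (lam : ℕ → ℝ)
    (hpos : ∀ n : ℕ, 1 ≤ n → 0 < lam n)
    (hmono : ∀ n : ℕ, 1 ≤ n → lam n ≤ lam (n + 1))
    (hdec : ∀ n : ℕ, 1 ≤ n → lam (n + 1) / ((n:ℝ) + 1) ≤ lam n / (n:ℝ))
    (hsum : Summable fun n : ℕ => lam (n + 1) / ((n:ℝ) + 1) ^ 2)
    (f : ℝ → ℝ → ℝ) (hf : PLambdaBV lam f) : HBV f := by
  classical
  obtain ⟨hb1, hb2⟩ := hf
  obtain ⟨V1, hV1⟩ := hb1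
  obtain ⟨V2, hV2⟩ := hb2
  have hl1 : 0 < lam 1 := hpos 1 le_rfl
  have h01 : (0:ℝ) ∈ V1set lam f := by
    refine ⟨0, by norm_num, 0, Fin.elim0, Fin.elim0, ⟨fun i => i.elim0, fun i => i.elim0⟩, by simp⟩
  have h02 : (0:ℝ) ∈ V2set lam f := by
    refine ⟨0, by norm_num, 0, Fin.elim0, Fin.elim0, ⟨fun i => i.elim0, fun i => i.elim0⟩, by simp⟩
  have hV1nn : 0 ≤ V1 := hV1 h01
  have hV2nn : 0 ≤ V2 := hV2 h02
  have hkey : ∀ k : ℕ, 1 ≤ k → ∀ t : ℝ, 0 ≤ t → t / ((k:ℕ):ℝ) ≤ lam 1 * (t / lam k) := by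
    intro k hk t ht
    have hlk : 0 < lam k := hpos k hk
    have hle : lam k ≤ lam 1 * k := lam_le_lin hpos hmono hdec k hk
    have hkpos : (0:ℝ) < (k:ℕ) := by exact_mod_cast hk
    rw [div_le_iff₀ hkpos]
    calc t = (t / lam k) * lam k := by field_simp
      _ ≤ (t / lam k) * (lam 1 * k) := by
          apply mul_le_mul_of_nonneg_left hle (by positivity)
      _ = lam 1 * (t / lam k) * k := by ring
  refine ⟨⟨lam 1 * V1, ?_⟩, ⟨lam 1 * V2, ?_⟩, ⟨(2*V1+2*V2) * (400 * lam 1 + 96 * ∑' k : ℕ, lam (k+1) / ((k:ℝ)+1)^2), ?_⟩⟩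
  · -- V1 harm
    rintro S ⟨y, hy, n', a, b, hab, rfl⟩
    have hmem : (∑ i : Fin n', |f (b i) y - f (a i) y| / lam (i.1+1)) ∈ V1set lam f :=
      ⟨y, hy, n', a, b, hab, rfl⟩
    calc ∑ i : Fin n', |f (b i) y - f (a i) y| / harm (i.1+1)
        ≤ ∑ i : Fin n', lam 1 * (|f (b i) y - f (a i) y| / lam (i.1+1)) := by
          apply Finset.sum_le_sum
          intro i _
          exact hkey (i.1+1) (by omega) _ (abs_nonneg _)
      _ = lam 1 * ∑ i : Fin n', |f (b i) y - f (a i) y| / lam (i.1+1) := by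
          rw [Finset.mul_sum]
      _ ≤ lam 1 * V1 := mul_le_mul_of_nonneg_left (hV1 hmem) hl1.le
  · -- V2 harm
    rintro S ⟨x, hx, m', c, d, hcd, rfl⟩
    have hmem : (∑ j : Fin m', |f x (d j) - f x (c j)| / lam (j.1+1)) ∈ V2set lam f :=
      ⟨x, hx, m', c, d, hcd, rfl⟩
    calc ∑ j : Fin m', |f x (d j) - f x (c j)| / harm (j.1+1)
        ≤ ∑ j : Fin m', lam 1 * (|f x (d j) - f x (c j)| / lam (j.1+1)) := by
          apply Finset.sum_le_sum
          intro j _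
          exact hkey (j.1+1) (by omega) _ (abs_nonneg _)
      _ = lam 1 * ∑ j : Fin m', |f x (d j) - f x (c j)| / lam (j.1+1) := by
          rw [Finset.mul_sum]
      _ ≤ lam 1 * V2 := mul_le_mul_of_nonneg_left (hV2 hmem) hl1.le
  · -- V12 harm harm
    rintro S ⟨n, a, b, m, c, d, hab, hcd, rfl⟩
    set M : Fin n → Fin m → ℝ :=
      fun i j => |f (a i) (c j) - f (a i) (d j) - f (b i) (c j) + f (b i) (d j)| with hM
    have hrewrite : ∑ i : Fin n, ∑ j : Fin m,
        |f (a i) (c j) - f (a i) (d j) - f (b i) (c j) + f (b i) (d j)| /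
          (harm (i.1 + 1) * harm (j.1 + 1))
        = ∑ i : Fin n, ∑ j : Fin m, M i j / (((i.1:ℝ)+1) * ((j.1:ℝ)+1)) := by
      apply Finset.sum_congr rfl
      intro i _
      apply Finset.sum_congr rfl
      intro j _
      rw [hM]
      simp only [harm]
      push_cast
      ring_nf
    rw [hrewrite]
    have hcj : ∀ j : Fin m, c j ∈ Set.Icc (-1:ℝ) 1 := by
      intro j
      obtain ⟨h1, h2, h3⟩ := hcd.1 j
      exact ⟨h1, le_trans h2.le h3⟩
    have hdj : ∀ j : Fin m, d j ∈ Set.Icc (-1:ℝ) 1 := by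
      intro j
      obtain ⟨h1, h2, h3⟩ := hcd.1 j
      exact ⟨le_trans h1 h2.le, h3⟩
    have hai : ∀ i : Fin n, a i ∈ Set.Icc (-1:ℝ) 1 := by
      intro i
      obtain ⟨h1, h2, h3⟩ := hab.1 i
      exact ⟨h1, le_trans h2.le h3⟩
    have hbi : ∀ i : Fin n, b i ∈ Set.Icc (-1:ℝ) 1 := by
      intro i
      obtain ⟨h1, h2, h3⟩ := hab.1 i
      exact ⟨le_trans h1 h2.le, h3⟩
    apply core_lemma hpos hmono hdec hsum (2*V1+2*V2) (by linarith) n m M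
      (fun i j => abs_nonneg _)
    · -- columns
      intro j σ
      have hab' : Nonoverlapping n (fun i => a (σ i)) (fun i => b (σ i)) := by
        refine ⟨fun i => hab.1 (σ i), fun i i' hne => hab.2 (σ i) (σ i') ?_⟩
        intro he
        exact hne (σ.injective he)
      have hmem1 : (∑ i : Fin n, |f (b (σ i)) (c j) - f (a (σ i)) (c j)| / lam (i.1+1))
          ∈ V1set lam f := ⟨c j, hcj j, n, fun i => a (σ i), fun i => b (σ i), hab', rfl⟩
      have hmem2 : (∑ i : Fin n, |f (b (σ i)) (d j) - f (a (σ i)) (d j)| / lam (i.1+1))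
          ∈ V1set lam f := ⟨d j, hdj j, n, fun i => a (σ i), fun i => b (σ i), hab', rfl⟩
      calc ∑ i : Fin n, M (σ i) j / lam (i.1+1)
          ≤ ∑ i : Fin n, ((|f (b (σ i)) (c j) - f (a (σ i)) (c j)|
              + |f (b (σ i)) (d j) - f (a (σ i)) (d j)|) / lam (i.1+1)) := by
            apply Finset.sum_le_sum
            intro i _
            have hl := hpos (i.1+1) (by omega)
            rw [hM]
            exact (div_le_div_iff_of_pos_right hl).mpr (abs_mix_col _ _ _ _)
          _ = (∑ i : Fin n, |f (b (σ i)) (c j) - f (a (σ i)) (c j)| / lam (i.1+1))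
              + (∑ i : Fin n, |f (b (σ i)) (d j) - f (a (σ i)) (d j)| / lam (i.1+1)) := by
            rw [← Finset.sum_add_distrib]
            apply Finset.sum_congr rfl
            intro i _
            rw [add_div]
          _ ≤ V1 + V1 := add_le_add (hV1 hmem1) (hV1 hmem2)
          _ ≤ 2*V1+2*V2 := by linarith
    · -- rows
      intro i τ
      have hcd' : Nonoverlapping m (fun j => c (τ j)) (fun j => d (τ j)) := by
        refine ⟨fun j => hcd.1 (τ j), fun j j' hne => hcd.2 (τ j) (τ j') ?_⟩
        intro he
        exact hne (τ.injective he)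
      have hmem1 : (∑ j : Fin m, |f (a i) (d (τ j)) - f (a i) (c (τ j))| / lam (j.1+1))
          ∈ V2set lam f := ⟨a i, hai i, m, fun j => c (τ j), fun j => d (τ j), hcd', rfl⟩
      have hmem2 : (∑ j : Fin m, |f (b i) (d (τ j)) - f (b i) (c (τ j))| / lam (j.1+1))
          ∈ V2set lam f := ⟨b i, hbi i, m, fun j => c (τ j), fun j => d (τ j), hcd', rfl⟩
      calc ∑ j : Fin m, M i (τ j) / lam (j.1+1)
          ≤ ∑ j : Fin m, ((|f (a i) (d (τ j)) - f (a i) (c (τ j))|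
              + |f (b i) (d (τ j)) - f (b i) (c (τ j))|) / lam (j.1+1)) := by
            apply Finset.sum_le_sum
            intro j _
            have hl := hpos (j.1+1) (by omega)
            rw [hM]
            exact (div_le_div_iff_of_pos_right hl).mpr (abs_mix_row _ _ _ _)
          _ = (∑ j : Fin m, |f (a i) (d (τ j)) - f (a i) (c (τ j))| / lam (j.1+1))
              + (∑ j : Fin m, |f (b i) (d (τ j)) - f (b i) (c (τ j))| / lam (j.1+1)) := by
            rw [← Finset.sum_add_distrib]
            apply Finset.sum_congr rfl
            intro j _
            rw [add_div]
          _ ≤ V2 + V2 := add_le_add (hV2 hmem1) (hV2 hmem2)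
          _ ≤ 2*V1+2*V2 := by linarith
end
end

section
/- Let f : [-1,1]² → ℝ be bounded and suppose ∑_{n=1}^∞ √(v_j(n,f)) / n^{3/2} < ∞ for j = 1, 2, where v_j are the partial moduli of variation. Then f has bounded harmonic variation (f ∈ HBV). -/
open MeasureTheory Set Filter Real

noncomputable section

/-! ### Auxiliary lemmas -/

section Aux

lemma ioo_disj {p q r s : ℝ} (h : q ≤ r) : Set.Ioo p q ∩ Set.Ioo r s = ∅ := by
  rw [Set.eq_empty_iff_forall_notMem]
  rintro x ⟨⟨_, h1⟩, ⟨h2, _⟩⟩; linarith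

lemma exists_nonov (m : ℕ) : ∃ a b : Fin m → ℝ, Nonoverlapping m a b := by
  refine ⟨fun i => -1 + (2*i)/m, fun i => -1 + (2*i+1)/m, fun i => ?_, fun i j hij => ?_⟩
  · have hm : (0:ℝ) < m := by exact_mod_cast i.pos
    have hi : (i:ℝ) + 1 ≤ m := by exact_mod_cast i.isLt
    have h0 : 0 ≤ (2*(i:ℝ))/m := by positivity
    refine ⟨by linarith, ?_, ?_⟩
    · have : (2*(i:ℝ))/m < (2*i+1)/m := (div_lt_div_iff_of_pos_right hm).2 (by linarith)
      linarith
    · have : (2*(i:ℝ)+1)/m ≤ 2 := by rw [div_le_iff₀ hm]; linarith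
      linarith
  · have hm : (0:ℝ) < m := by exact_mod_cast i.pos
    rcases lt_or_gt_of_ne (fun h => hij (Fin.ext h) : (i:ℕ) ≠ (j:ℕ)) with h | h
    · apply ioo_disj
      have h' : (i:ℝ) + 1 ≤ j := by exact_mod_cast h
      have : (2*(i:ℝ)+1)/m ≤ (2*j)/m := (div_le_div_iff_of_pos_right hm).2 (by linarith)
      linarith
    · rw [Set.inter_comm]
      apply ioo_disj
      have h' : (j:ℝ) + 1 ≤ i := by exact_mod_cast h
      have : (2*(j:ℝ)+1)/m ≤ (2*i)/m := (div_le_div_iff_of_pos_right hm).2 (by linarith)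
      linarith

lemma nonov_mem_Icc {n : ℕ} {a b : Fin n → ℝ} (h : Nonoverlapping n a b) (i : Fin n) :
    a i ∈ Set.Icc (-1:ℝ) 1 ∧ b i ∈ Set.Icc (-1:ℝ) 1 := by
  obtain ⟨h1, h2, h3⟩ := h.1 i
  exact ⟨⟨h1, by linarith⟩, ⟨by linarith, h3⟩⟩

def Vset (f : ℝ → ℝ → ℝ) (k : ℕ) : Set ℝ :=
  {S | ∃ y, y ∈ Set.Icc (-1:ℝ) 1 ∧ ∃ a b : Fin k → ℝ, Nonoverlapping k a b ∧
    S = ∑ i : Fin k, |f (b i) y - f (a i) y|}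

section v1facts
variable {f : ℝ → ℝ → ℝ} {B : ℝ}
variable (hB : ∀ x ∈ Set.Icc (-1:ℝ) 1, ∀ y ∈ Set.Icc (-1:ℝ) 1, |f x y| ≤ B)

include hB in
lemma Vset_bdd (k : ℕ) : ∀ S ∈ Vset f k, S ≤ 2*B*k := by
  rintro S ⟨y, hy, a, b, hab, rfl⟩
  calc ∑ i : Fin k, |f (b i) y - f (a i) y| ≤ ∑ _i : Fin k, 2*B := by
        refine Finset.sum_le_sum fun i _ => ?_
        have h1 := hB _ (nonov_mem_Icc hab i).1 _ hy
        have h2 := hB _ (nonov_mem_Icc hab i).2 _ hy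
        calc |f (b i) y - f (a i) y| ≤ |f (b i) y| + |f (a i) y| := abs_sub _ _
          _ ≤ 2*B := by linarith
    _ = 2*B*k := by simp [mul_comm]

include hB in
lemma Vset_bddAbove (k : ℕ) : BddAbove (Vset f k) := ⟨2*B*k, fun S hS => Vset_bdd hB k S hS⟩

include hB in
lemma hB0 : 0 ≤ B := le_trans (abs_nonneg _) (hB 0 (by norm_num) 0 (by norm_num))

include hB in
lemma v1_nonneg (k : ℕ) : 0 ≤ v1 f k := by
  obtain ⟨a, b, hab⟩ := exists_nonov k
  have hmem : (∑ i : Fin k, |f (b i) 0 - f (a i) 0|) ∈ Vset f k :=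
    ⟨0, by norm_num, a, b, hab, rfl⟩
  exact le_trans (Finset.sum_nonneg fun i _ => abs_nonneg _)
    (le_csSup (Vset_bddAbove hB k) hmem)

include hB in
lemma v1_le (k : ℕ) : v1 f k ≤ 2*B*k := by
  have hBnn := hB0 hB
  exact Real.sSup_le (Vset_bdd hB k) (by positivity)

include hB in
lemma sum_finset_le_v1 {y : ℝ} (hy : y ∈ Set.Icc (-1:ℝ) 1) {n : ℕ} {a b : Fin n → ℝ}
    (hab : Nonoverlapping n a b) (t : Finset (Fin n)) :
    ∑ i ∈ t, |f (b i) y - f (a i) y| ≤ v1 f t.card := by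
  classical
  set e := t.orderIsoOfFin rfl with he
  have hnov : Nonoverlapping t.card (fun x => a (e x)) (fun x => b (e x)) := by
    refine ⟨fun x => hab.1 _, fun x x' hxx' => hab.2 _ _ ?_⟩
    intro hc
    exact hxx' (e.injective (Subtype.coe_injective hc))
  have hsum : ∑ i ∈ t, |f (b i) y - f (a i) y|
      = ∑ x : Fin t.card, |f (b (e x)) y - f (a (e x)) y| := by
    rw [← Finset.sum_coe_sort t]
    exact (Fintype.sum_equiv e.toEquiv _ _ (fun x => rfl)).symm
  rw [hsum]
  exact le_csSup (Vset_bddAbove hB t.card) ⟨y, hy, _, _, hnov, rfl⟩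

include hB in
lemma v1_mono : Monotone (v1 f) := by
  apply monotone_nat_of_le_succ
  intro k
  apply Real.sSup_le _ (v1_nonneg hB (k+1))
  rintro S ⟨y, hy, a, b, hab, rfl⟩
  rcases Nat.eq_zero_or_pos k with rfl | hk
  · simpa using v1_nonneg hB 1
  obtain ⟨k', rfl⟩ : ∃ k', k = k' + 1 := ⟨k - 1, by omega⟩
  set μ := (a 0 + b 0)/2 with hμ
  set a' : Fin (k'+2) → ℝ := fun i => if i.1 = 1 then μ else a ⟨i.1 - 1, by omega⟩ with ha'
  set b' : Fin (k'+2) → ℝ := fun i => if i.1 = 0 then μ else b ⟨i.1 - 1, by omega⟩ with hb'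
  have h0 := hab.1 0
  have hvals : ∀ i : Fin (k'+2),
      (i.1 = 0 → a' i = a 0 ∧ b' i = μ) ∧
      (i.1 = 1 → a' i = μ ∧ b' i = b 0) ∧
      (2 ≤ i.1 → a' i = a ⟨i.1-1, by omega⟩ ∧ b' i = b ⟨i.1-1, by omega⟩) := by
    intro i
    refine ⟨fun h => ?_, fun h => ?_, fun h => ?_⟩
    · simp only [ha', hb', h]
      refine ⟨?_, by simp⟩
      congr 1
    · simp only [ha', hb', h]
      refine ⟨by simp, ?_⟩
      rw [if_neg (by norm_num)]
      congr 1
    · simp only [ha', hb']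
      rw [if_neg (by omega), if_neg (by omega)]
      exact ⟨rfl, rfl⟩
  have hsub : ∀ i : Fin (k'+2), Set.Ioo (a' i) (b' i) ⊆
      Set.Ioo (a ⟨i.1 - 1, by omega⟩) (b ⟨i.1 - 1, by omega⟩) := by
    intro i
    rcases Nat.lt_or_ge i.1 2 with h2 | h2
    · have : i.1 = 0 ∨ i.1 = 1 := by omega
      rcases this with h | h
      · obtain ⟨e1, e2⟩ := (hvals i).1 h
        rw [e1, e2]
        have : (⟨i.1 - 1, by omega⟩ : Fin (k'+1)) = 0 := by ext; simp [h]
        rw [this]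
        exact Set.Ioo_subset_Ioo le_rfl (by simp [hμ]; linarith [h0.2.1])
      · obtain ⟨e1, e2⟩ := (hvals i).2.1 h
        rw [e1, e2]
        have : (⟨i.1 - 1, by omega⟩ : Fin (k'+1)) = 0 := by ext; simp [h]
        rw [this]
        exact Set.Ioo_subset_Ioo (by simp [hμ]; linarith [h0.2.1]) le_rfl
    · obtain ⟨e1, e2⟩ := (hvals i).2.2 h2
      rw [e1, e2]
  have hnov : Nonoverlapping (k'+2) a' b' := by
    constructor
    · intro i
      rcases Nat.lt_or_ge i.1 2 with h2 | h2
      · have : i.1 = 0 ∨ i.1 = 1 := by omega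
        rcases this with h | h
        · obtain ⟨e1, e2⟩ := (hvals i).1 h
          rw [e1, e2]
          refine ⟨h0.1, by simp [hμ]; linarith [h0.2.1], ?_⟩
          simp [hμ]; linarith [h0.2.1, h0.2.2]
        · obtain ⟨e1, e2⟩ := (hvals i).2.1 h
          rw [e1, e2]
          refine ⟨?_, by simp [hμ]; linarith [h0.2.1], h0.2.2⟩
          simp [hμ]; linarith [h0.1, h0.2.1]
      · obtain ⟨e1, e2⟩ := (hvals i).2.2 h2
        rw [e1, e2]
        exact hab.1 _
    · intro i j hij
      rcases eq_or_ne (i.1 - 1) (j.1 - 1) with heq | hne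
      · have hcases : (i.1 = 0 ∧ j.1 = 1) ∨ (i.1 = 1 ∧ j.1 = 0) := by
          have : i.1 ≠ j.1 := fun h => hij (Fin.ext h)
          omega
        rcases hcases with ⟨hi0, hj1⟩ | ⟨hi1, hj0⟩
        · obtain ⟨e1, e2⟩ := (hvals i).1 hi0
          obtain ⟨e3, e4⟩ := (hvals j).2.1 hj1
          rw [e1, e2, e3, e4]
          exact ioo_disj le_rfl
        · obtain ⟨e1, e2⟩ := (hvals i).2.1 hi1
          obtain ⟨e3, e4⟩ := (hvals j).1 hj0
          rw [e1, e2, e3, e4]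
          rw [Set.inter_comm]
          exact ioo_disj le_rfl
      · refine Set.eq_empty_of_subset_empty (le_trans
          (Set.inter_subset_inter (hsub i) (hsub j))
          (le_of_eq (hab.2 _ _ ?_)))
        simp only [ne_eq, Fin.ext_iff]
        exact hne
  have e00 := (hvals 0).1 rfl
  have e11 := (hvals 1).2.1 rfl
  have e5 : ∀ i : Fin k', a' i.succ.succ = a i.succ ∧ b' i.succ.succ = b i.succ := by
    intro i
    obtain ⟨e1, e2⟩ := (hvals i.succ.succ).2.2 (by simp [Fin.val_succ])
    exact ⟨e1, e2⟩
  have expand : ∑ i : Fin (k'+2), |f (b' i) y - f (a' i) y|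
      = |f (b' 0) y - f (a' 0) y| + (|f (b' 1) y - f (a' 1) y|
        + ∑ i : Fin k', |f (b' i.succ.succ) y - f (a' i.succ.succ) y|) := by
    rw [Fin.sum_univ_succ]
    congr 1
    rw [Fin.sum_univ_succ]
    rfl
  have hle : ∑ i : Fin (k'+1), |f (b i) y - f (a i) y|
      ≤ ∑ i : Fin (k'+2), |f (b' i) y - f (a' i) y| := by
    rw [expand, Fin.sum_univ_succ]
    have htri : |f (b 0) y - f (a 0) y|
        ≤ |f (b' 0) y - f (a' 0) y| + |f (b' 1) y - f (a' 1) y| := by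
      rw [e00.1, e00.2, e11.1, e11.2]
      calc |f (b 0) y - f (a 0) y| = |(f μ y - f (a 0) y) + (f (b 0) y - f μ y)| := by ring_nf
        _ ≤ |f μ y - f (a 0) y| + |f (b 0) y - f μ y| := abs_add_le _ _
    have hrest : ∑ i : Fin k', |f (b i.succ) y - f (a i.succ) y|
        = ∑ i : Fin k', |f (b' i.succ.succ) y - f (a' i.succ.succ) y| := by
      refine Finset.sum_congr rfl fun i _ => ?_
      rw [(e5 i).1, (e5 i).2]
    linarith [le_of_eq hrest]
  calc ∑ i : Fin (k'+1), |f (b i) y - f (a i) y|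
      ≤ ∑ i : Fin (k'+2), |f (b' i) y - f (a' i) y| := hle
    _ ≤ v1 f (k'+2) := le_csSup (Vset_bddAbove hB _) ⟨y, hy, a', b', hnov, rfl⟩

end v1facts

lemma key (n : ℕ) (d : Fin n → ℝ) (v : ℕ → ℝ)
    (hsub : ∀ t : Finset (Fin n), ∑ i ∈ t, d i ≤ v t.card)
    (C : ℝ) (hC : ∀ N, ∑ k ∈ Finset.range N, v (k+1) / ((k:ℝ)+1)^2 ≤ C) :
    ∑ i : Fin n, d i / ((i.1:ℝ)+1) ≤ C := by
  classical
  set σ := Tuple.sort (fun i => -(d i)) with hσdef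
  have hmono := Tuple.monotone_sort (fun i => -(d i))
  have hanti : Antitone (fun i => d (σ i)) := by
    intro i j hij
    have := hmono hij
    simpa using this
  have hw : Antitone (fun i : Fin n => (((i:ℕ):ℝ)+1)⁻¹) := by
    intro i j hij
    have h1 : ((i:ℕ):ℝ) ≤ ((j:ℕ):ℝ) := by exact_mod_cast hij
    have h2 : (0:ℝ) < ((i:ℕ):ℝ)+1 := by positivity
    exact inv_anti₀ h2 (by linarith)
  have hmv : Monovary (fun i => d (σ i)) (fun i : Fin n => (((i:ℕ):ℝ)+1)⁻¹) := by
    intro i j hij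
    rcases le_or_gt i j with h | h
    · exact absurd (hw h) (not_le.2 hij)
    · exact hanti h.le
  have hre : ∑ i : Fin n, d i * (((i:ℕ):ℝ)+1)⁻¹ ≤ ∑ i : Fin n, d (σ i) * (((i:ℕ):ℝ)+1)⁻¹ := by
    have h := hmv.sum_comp_perm_mul_le_sum_mul (σ := σ⁻¹)
    simpa [Equiv.Perm.coe_inv, Equiv.apply_symm_apply] using h
  have hsorted : ∀ i : Fin n, ((i.1:ℝ)+1) * d (σ i) ≤ v (i.1+1) := by
    intro i
    have hcast : i.1 + 1 ≤ n := i.isLt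
    set t : Finset (Fin n) := Finset.image (fun j : Fin (i.1+1) => σ (Fin.castLE hcast j))
      Finset.univ with ht
    have hinj : Function.Injective (fun j : Fin (i.1+1) => σ (Fin.castLE hcast j)) :=
      σ.injective.comp (Fin.castLE_injective hcast)
    have hcard : t.card = i.1 + 1 := by
      rw [ht, Finset.card_image_of_injective _ hinj, Finset.card_univ, Fintype.card_fin]
    have hsum : ∑ x ∈ t, d x = ∑ j : Fin (i.1+1), d (σ (Fin.castLE hcast j)) := by
      rw [ht, Finset.sum_image (fun x _ y _ h => hinj h)]
    have hlow : ∀ j : Fin (i.1+1), d (σ i) ≤ d (σ (Fin.castLE hcast j)) := by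
      intro j
      exact hanti (show Fin.castLE hcast j ≤ i from by
        simp [Fin.le_def, Fin.coe_castLE]; omega)
    calc ((i.1:ℝ)+1) * d (σ i) = ∑ _j : Fin (i.1+1), d (σ i) := by
          rw [Finset.sum_const, Finset.card_univ, Fintype.card_fin]
          push_cast; ring
      _ ≤ ∑ j : Fin (i.1+1), d (σ (Fin.castLE hcast j)) := Finset.sum_le_sum fun j _ => hlow j
      _ = ∑ x ∈ t, d x := hsum.symm
      _ ≤ v t.card := hsub t
      _ = v (i.1+1) := by rw [hcard]
  have hstep : ∀ i : Fin n, d (σ i) * (((i:ℕ):ℝ)+1)⁻¹ ≤ v (i.1+1) / ((i.1:ℝ)+1)^2 := by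
    intro i
    have hx : (0:ℝ) < (i.1:ℝ)+1 := by positivity
    have h1 : d (σ i) ≤ v (i.1+1) / ((i.1:ℝ)+1) := by
      rw [le_div_iff₀ hx]; linarith [hsorted i]
    calc d (σ i) * (((i:ℕ):ℝ)+1)⁻¹ ≤ (v (i.1+1)/((i.1:ℝ)+1)) * (((i.1:ℝ)+1))⁻¹ :=
        mul_le_mul_of_nonneg_right h1 (by positivity)
      _ = v (i.1+1) / ((i.1:ℝ)+1)^2 := by rw [← div_eq_mul_inv, div_div, ← sq]
  calc ∑ i : Fin n, d i / ((i.1:ℝ)+1) = ∑ i : Fin n, d i * (((i:ℕ):ℝ)+1)⁻¹ := by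
        simp [div_eq_mul_inv]
    _ ≤ ∑ i : Fin n, d (σ i) * (((i:ℕ):ℝ)+1)⁻¹ := hre
    _ ≤ ∑ i : Fin n, v (i.1+1) / ((i.1:ℝ)+1)^2 := Finset.sum_le_sum fun i _ => hstep i
    _ = ∑ k ∈ Finset.range n, v (k+1) / ((k:ℝ)+1)^2 :=
        Fin.sum_univ_eq_sum_range (fun k => v (k+1) / ((k:ℝ)+1)^2) n
    _ ≤ C := hC n

lemma rpow32 (x : ℝ) (hx : 0 ≤ x) : x ^ ((3:ℝ)/2) = x * Real.sqrt x := by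
  rcases eq_or_lt_of_le hx with rfl | hx'
  · rw [Real.zero_rpow (by norm_num), Real.sqrt_zero, mul_zero]
  · rw [Real.sqrt_eq_rpow, show (3:ℝ)/2 = 1 + 1/2 by norm_num, Real.rpow_add hx',
      Real.rpow_one]

lemma condense (v : ℕ → ℝ) (hv0 : ∀ k, 0 ≤ v k) (hm : Monotone v)
    (g : ℕ → ℝ) (hg : g = fun k => Real.sqrt (v (k+1)) / (((k:ℝ)+1) * Real.sqrt ((k:ℝ)+1)))
    (hs : Summable g) (P : ℕ) :
    ∑ p ∈ Finset.range P, Real.sqrt (v (2^p) / 2^p) ≤ 2 * Real.sqrt 2 * ∑' k, g k := by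
  have hgnn : ∀ k, 0 ≤ g k := by
    intro k; rw [hg]; positivity
  have hterm : ∀ p, Real.sqrt (v (2^p) / 2^p)
      ≤ 2 * Real.sqrt 2 * ∑ k ∈ Finset.Ico (2^p) (2^(p+1)), g k := by
    intro p
    have h2p : (0:ℝ) < 2^p := by positivity
    have hcard : (Finset.Ico (2^p) (2^(p+1))).card = 2^p := by
      rw [Nat.card_Ico]; rw [pow_succ]; omega
    have hlow : ∀ k ∈ Finset.Ico (2^p) (2^(p+1)),
        Real.sqrt (v (2^p)) / ((2:ℝ)^(p+1) * Real.sqrt ((2:ℝ)^(p+1))) ≤ g k := by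
      intro k hk
      rw [Finset.mem_Ico] at hk
      rw [hg]
      have h1 : Real.sqrt (v (2^p)) ≤ Real.sqrt (v (k+1)) :=
        Real.sqrt_le_sqrt (hm (by omega))
      have h2 : ((k:ℝ)+1) ≤ (2:ℝ)^(p+1) := by
        have : (k:ℕ) + 1 ≤ 2^(p+1) := hk.2
        exact_mod_cast this
      have h3 : ((k:ℝ)+1) * Real.sqrt ((k:ℝ)+1) ≤ (2:ℝ)^(p+1) * Real.sqrt ((2:ℝ)^(p+1)) := by
        apply mul_le_mul h2 (Real.sqrt_le_sqrt h2) (Real.sqrt_nonneg _) (by positivity)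
      apply div_le_div₀ (Real.sqrt_nonneg _) h1 (by positivity) h3
    have hsumlow : (2^p : ℝ) * (Real.sqrt (v (2^p)) / ((2:ℝ)^(p+1) * Real.sqrt ((2:ℝ)^(p+1))))
        ≤ ∑ k ∈ Finset.Ico (2^p) (2^(p+1)), g k := by
      calc (2^p : ℝ) * (Real.sqrt (v (2^p)) / ((2:ℝ)^(p+1) * Real.sqrt ((2:ℝ)^(p+1))))
          = ∑ _k ∈ Finset.Ico (2^p) (2^(p+1)),
              Real.sqrt (v (2^p)) / ((2:ℝ)^(p+1) * Real.sqrt ((2:ℝ)^(p+1))) := by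
            rw [Finset.sum_const, hcard, nsmul_eq_mul]; push_cast; ring
        _ ≤ _ := Finset.sum_le_sum hlow
    have heq : Real.sqrt (v (2^p) / 2^p)
        = 2 * Real.sqrt 2 * ((2^p : ℝ)
          * (Real.sqrt (v (2^p)) / ((2:ℝ)^(p+1) * Real.sqrt ((2:ℝ)^(p+1))))) := by
      rw [Real.sqrt_div (hv0 _) ((2:ℝ)^p)]
      rw [pow_succ, Real.sqrt_mul (by positivity)]
      field_simp
    calc Real.sqrt (v (2^p) / 2^p)
        = 2 * Real.sqrt 2 * ((2^p:ℝ)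
          * (Real.sqrt (v (2^p)) / ((2:ℝ)^(p+1) * Real.sqrt ((2:ℝ)^(p+1))))) := heq
      _ ≤ 2 * Real.sqrt 2 * ∑ k ∈ Finset.Ico (2^p) (2^(p+1)), g k := by
          apply mul_le_mul_of_nonneg_left hsumlow (by positivity)
  calc ∑ p ∈ Finset.range P, Real.sqrt (v (2^p) / 2^p)
      ≤ ∑ p ∈ Finset.range P, 2 * Real.sqrt 2 * ∑ k ∈ Finset.Ico (2^p) (2^(p+1)), g k :=
        Finset.sum_le_sum fun p _ => hterm p
    _ = 2 * Real.sqrt 2 * ∑ p ∈ Finset.range P, ∑ k ∈ Finset.Ico (2^p) (2^(p+1)), g k := by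
        rw [Finset.mul_sum]
    _ ≤ 2 * Real.sqrt 2 * ∑' k, g k := by
        apply mul_le_mul_of_nonneg_left _ (by positivity)
        have hblocks : ∀ Q : ℕ, ∑ p ∈ Finset.range Q, ∑ k ∈ Finset.Ico (2^p) (2^(p+1)), g k
            = ∑ k ∈ Finset.Ico 1 (2^Q), g k := by
          intro Q
          induction Q with
          | zero => simp
          | succ Q ih =>
            rw [Finset.sum_range_succ, ih,
              Finset.sum_Ico_consecutive g Nat.one_le_two_pow
                (Nat.pow_le_pow_right (by norm_num) (by omega))]
        rw [hblocks]
        calc ∑ k ∈ Finset.Ico 1 (2^P), g k ≤ ∑ k ∈ Finset.range (2^P), g k := by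
              apply Finset.sum_le_sum_of_subset_of_nonneg
              · intro x hx; rw [Finset.mem_range]; rw [Finset.mem_Ico] at hx; omega
              · intro k _ _; exact hgnn k
          _ ≤ ∑' k, g k := Summable.sum_le_tsum _ (fun k _ => hgnn k) hs

lemma mixed (n m : ℕ) (D : Fin n → Fin m → ℝ) (hD : ∀ i j, 0 ≤ D i j)
    (w1 w2 : ℕ → ℝ) (hw1m : Monotone w1) (hw2m : Monotone w2)
    (hw1nn : ∀ k, 0 ≤ w1 k) (hw2nn : ∀ k, 0 ≤ w2 k)
    (hrow : ∀ i (t : Finset (Fin m)), ∑ j ∈ t, D i j ≤ w2 t.card)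
    (hcol : ∀ j (t : Finset (Fin n)), ∑ i ∈ t, D i j ≤ w1 t.card)
    (A1 A2 : ℝ) (hA1nn : 0 ≤ A1) (hA2nn : 0 ≤ A2)
    (hA1 : ∀ P, ∑ p ∈ Finset.range P, Real.sqrt (w1 (2^p) / 2^p) ≤ A1)
    (hA2 : ∀ Q, ∑ q ∈ Finset.range Q, Real.sqrt (w2 (2^q) / 2^q) ≤ A2) :
    ∑ i : Fin n, ∑ j : Fin m, D i j / (((i.1:ℝ)+1) * ((j.1:ℝ)+1)) ≤ A1 * A2 := by
  classical
  set π1 : Fin n → ℕ := fun i => (i.1+1).log2 with hπ1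
  set π2 : Fin m → ℕ := fun j => (j.1+1).log2 with hπ2
  have hmaps1 : ∀ i : Fin n, i ∈ Finset.univ → π1 i ∈ Finset.range n := by
    intro i _
    rw [Finset.mem_range, hπ1]
    rw [Nat.log2_lt (by omega)]
    calc i.1 + 1 ≤ n := i.isLt
      _ < 2^n := Nat.lt_two_pow_self
  have hmaps2 : ∀ j : Fin m, j ∈ Finset.univ → π2 j ∈ Finset.range m := by
    intro j _
    rw [Finset.mem_range, hπ2]
    rw [Nat.log2_lt (by omega)]
    calc j.1 + 1 ≤ m := j.isLt
      _ < 2^m := Nat.lt_two_pow_self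
  set Pf : ℕ → Finset (Fin n) := fun p => Finset.univ.filter (fun i => π1 i = p) with hPf
  set Qf : ℕ → Finset (Fin m) := fun q => Finset.univ.filter (fun j => π2 j = q) with hQf
  have hPmem : ∀ p, ∀ i ∈ Pf p, 2^p ≤ i.1+1 ∧ i.1+1 < 2^(p+1) := by
    intro p i hi
    rw [hPf, Finset.mem_filter] at hi
    obtain ⟨-, hi⟩ := hi
    constructor
    · rw [← hi]; exact Nat.log2_self_le (by omega)
    · rw [← hi]; exact Nat.lt_log2_self
  have hQmem : ∀ q, ∀ j ∈ Qf q, 2^q ≤ j.1+1 ∧ j.1+1 < 2^(q+1) := by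
    intro q j hj
    rw [hQf, Finset.mem_filter] at hj
    obtain ⟨-, hj⟩ := hj
    constructor
    · rw [← hj]; exact Nat.log2_self_le (by omega)
    · rw [← hj]; exact Nat.lt_log2_self
  have hPcard : ∀ p, (Pf p).card ≤ 2^p := by
    intro p
    calc (Pf p).card ≤ (Finset.range (2^p)).card := by
          apply Finset.card_le_card_of_injOn (fun i => i.1 + 1 - 2^p)
          · intro i hi
            have := hPmem p i hi
            rw [Finset.mem_coe, Finset.mem_range]; dsimp only
            have h2 : 2^(p+1) = 2*2^p := by ring
            omega
          · intro i hi j hj hij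
            have h1 := hPmem p i hi
            have h2 := hPmem p j hj
            have hij' : i.1 + 1 - 2^p = j.1 + 1 - 2^p := hij
            ext
            omega
      _ = 2^p := Finset.card_range _
  have hQcard : ∀ q, (Qf q).card ≤ 2^q := by
    intro q
    calc (Qf q).card ≤ (Finset.range (2^q)).card := by
          apply Finset.card_le_card_of_injOn (fun j => j.1 + 1 - 2^q)
          · intro j hj
            have := hQmem q j hj
            rw [Finset.mem_coe, Finset.mem_range]; dsimp only
            have h2 : 2^(q+1) = 2*2^q := by ring
            omega
          · intro i hi j hj hij
            have h1 := hQmem q i hi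
            have h2 := hQmem q j hj
            have hij' : i.1 + 1 - 2^q = j.1 + 1 - 2^q := hij
            ext
            omega
      _ = 2^q := Finset.card_range _
  have hblock : ∀ p q, ∑ i ∈ Pf p, ∑ j ∈ Qf q, D i j / (((i.1:ℝ)+1) * ((j.1:ℝ)+1))
      ≤ Real.sqrt (w1 (2^p) / 2^p) * Real.sqrt (w2 (2^q) / 2^q) := by
    intro p q
    have hp2 : (0:ℝ) < 2^p := by positivity
    have hq2 : (0:ℝ) < 2^q := by positivity
    set S := ∑ i ∈ Pf p, ∑ j ∈ Qf q, D i j with hS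
    have hSnn : 0 ≤ S :=
      Finset.sum_nonneg fun i _ => Finset.sum_nonneg fun j _ => hD i j
    have hrowB : S ≤ 2^p * w2 (2^q) := by
      calc S ≤ ∑ _i ∈ Pf p, w2 (2^q) := by
            apply Finset.sum_le_sum
            intro i _
            calc ∑ j ∈ Qf q, D i j ≤ w2 (Qf q).card := hrow i _
              _ ≤ w2 (2^q) := hw2m (hQcard q)
        _ = (Pf p).card * w2 (2^q) := by rw [Finset.sum_const, nsmul_eq_mul]
        _ ≤ 2^p * w2 (2^q) := by
            apply mul_le_mul_of_nonneg_right _ (hw2nn _)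
            exact_mod_cast hPcard p
    have hcolB : S ≤ 2^q * w1 (2^p) := by
      rw [hS, Finset.sum_comm]
      calc ∑ j ∈ Qf q, ∑ i ∈ Pf p, D i j ≤ ∑ _j ∈ Qf q, w1 (2^p) := by
            apply Finset.sum_le_sum
            intro j _
            calc ∑ i ∈ Pf p, D i j ≤ w1 (Pf p).card := hcol j _
              _ ≤ w1 (2^p) := hw1m (hPcard p)
        _ = (Qf q).card * w1 (2^p) := by rw [Finset.sum_const, nsmul_eq_mul]
        _ ≤ 2^q * w1 (2^p) := by
            apply mul_le_mul_of_nonneg_right _ (hw1nn _)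
            exact_mod_cast hQcard q
    have hXnn : (0:ℝ) ≤ 2^p * w2 (2^q) := mul_nonneg hp2.le (hw2nn _)
    have hYnn : (0:ℝ) ≤ 2^q * w1 (2^p) := mul_nonneg hq2.le (hw1nn _)
    have hSsqrt : S ≤ Real.sqrt ((2^p * w2 (2^q)) * (2^q * w1 (2^p))) := by
      rw [Real.le_sqrt hSnn (mul_nonneg hXnn hYnn), sq]
      exact mul_le_mul hrowB hcolB hSnn hXnn
    have heq : Real.sqrt ((2^p * w2 (2^q)) * (2^q * w1 (2^p))) / (2^p * 2^q)
        = Real.sqrt (w1 (2^p) / 2^p) * Real.sqrt (w2 (2^q) / 2^q) := by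
      rw [← Real.sqrt_mul (div_nonneg (hw1nn _) hp2.le)]
      rw [show ((2:ℝ)^p * 2^q) = Real.sqrt (((2:ℝ)^p*2^q)^2) from
        (Real.sqrt_sq (by positivity)).symm]
      rw [← Real.sqrt_div (mul_nonneg hXnn hYnn)]
      congr 1
      field_simp
    calc ∑ i ∈ Pf p, ∑ j ∈ Qf q, D i j / (((i.1:ℝ)+1) * ((j.1:ℝ)+1))
        ≤ ∑ i ∈ Pf p, ∑ j ∈ Qf q, D i j / (2^p * 2^q) := by
          apply Finset.sum_le_sum
          intro i hi
          apply Finset.sum_le_sum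
          intro j hj
          have hip : (2:ℝ)^p ≤ (i.1:ℝ)+1 := by
            have := (hPmem p i hi).1
            push_cast at this ⊢
            exact_mod_cast this
          have hjq : (2:ℝ)^q ≤ (j.1:ℝ)+1 := by
            have := (hQmem q j hj).1
            push_cast at this ⊢
            exact_mod_cast this
          gcongr
          exact hD i j
      _ = S / (2^p * 2^q) := by rw [hS]; simp only [Finset.sum_div]
      _ ≤ Real.sqrt ((2^p * w2 (2^q)) * (2^q * w1 (2^p))) / (2^p * 2^q) := by gcongr
      _ = _ := heq
  have hsplit : ∑ i : Fin n, ∑ j : Fin m, D i j / (((i.1:ℝ)+1) * ((j.1:ℝ)+1))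
      = ∑ p ∈ Finset.range n, ∑ q ∈ Finset.range m,
          ∑ i ∈ Pf p, ∑ j ∈ Qf q, D i j / (((i.1:ℝ)+1) * ((j.1:ℝ)+1)) := by
    calc ∑ i : Fin n, ∑ j : Fin m, D i j / (((i.1:ℝ)+1) * ((j.1:ℝ)+1))
        = ∑ p ∈ Finset.range n, ∑ i ∈ Pf p,
            ∑ j : Fin m, D i j / (((i.1:ℝ)+1) * ((j.1:ℝ)+1)) :=
          (Finset.sum_fiberwise_of_maps_to hmaps1 _).symm
      _ = ∑ p ∈ Finset.range n, ∑ i ∈ Pf p, ∑ q ∈ Finset.range m,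
            ∑ j ∈ Qf q, D i j / (((i.1:ℝ)+1) * ((j.1:ℝ)+1)) := by
          refine Finset.sum_congr rfl fun p _ => Finset.sum_congr rfl fun i _ => ?_
          exact (Finset.sum_fiberwise_of_maps_to hmaps2 _).symm
      _ = _ := Finset.sum_congr rfl fun p _ => Finset.sum_comm
  calc ∑ i : Fin n, ∑ j : Fin m, D i j / (((i.1:ℝ)+1) * ((j.1:ℝ)+1))
      = ∑ p ∈ Finset.range n, ∑ q ∈ Finset.range m,
          ∑ i ∈ Pf p, ∑ j ∈ Qf q, D i j / (((i.1:ℝ)+1) * ((j.1:ℝ)+1)) := hsplit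
    _ ≤ ∑ p ∈ Finset.range n, ∑ q ∈ Finset.range m,
          Real.sqrt (w1 (2^p) / 2^p) * Real.sqrt (w2 (2^q) / 2^q) :=
        Finset.sum_le_sum fun p _ => Finset.sum_le_sum fun q _ => hblock p q
    _ = (∑ p ∈ Finset.range n, Real.sqrt (w1 (2^p) / 2^p))
        * (∑ q ∈ Finset.range m, Real.sqrt (w2 (2^q) / 2^q)) :=
        (Finset.sum_mul_sum _ _ _ _).symm
    _ ≤ A1 * A2 :=
        mul_le_mul (hA1 n) (hA2 m)
          (Finset.sum_nonneg fun q _ => Real.sqrt_nonneg _) hA1nn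

lemma partA {f : ℝ → ℝ → ℝ} {B : ℝ}
    (hB : ∀ x ∈ Set.Icc (-1:ℝ) 1, ∀ y ∈ Set.Icc (-1:ℝ) 1, |f x y| ≤ B)
    (h1 : Summable fun n : ℕ => Real.sqrt (v1 f (n + 1)) / ((n:ℝ) + 1) ^ ((3:ℝ)/2)) :
    Summable (fun k : ℕ => Real.sqrt (v1 f (k+1)) / (((k:ℝ)+1) * Real.sqrt ((k:ℝ)+1)))
    ∧ Summable (fun k : ℕ => v1 f (k+1) / ((k:ℝ)+1)^2)
    ∧ ∀ y ∈ Set.Icc (-1:ℝ) 1, ∀ (n : ℕ) (a b : Fin n → ℝ), Nonoverlapping n a b →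
      ∑ i : Fin n, |f (b i) y - f (a i) y| / ((i.1:ℝ)+1)
        ≤ ∑' k : ℕ, v1 f (k+1) / ((k:ℝ)+1)^2 := by
  have hg : Summable (fun k : ℕ =>
      Real.sqrt (v1 f (k+1)) / (((k:ℝ)+1) * Real.sqrt ((k:ℝ)+1))) := by
    refine h1.congr fun k => ?_
    rw [rpow32 _ (by positivity)]
  have hcomp : ∀ k : ℕ, v1 f (k+1) / ((k:ℝ)+1)^2
      ≤ Real.sqrt (2*B) * (Real.sqrt (v1 f (k+1)) / (((k:ℝ)+1) * Real.sqrt ((k:ℝ)+1))) := by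
    intro k
    have hx0 : (0:ℝ) < (k:ℝ)+1 := by positivity
    have hvnn : 0 ≤ v1 f (k+1) := v1_nonneg hB _
    have hvle : v1 f (k+1) ≤ 2*B*((k:ℝ)+1) := by
      have h := v1_le hB (k+1)
      push_cast at h
      exact h
    have hxx : Real.sqrt ((k:ℝ)+1) * Real.sqrt ((k:ℝ)+1) = (k:ℝ)+1 :=
      Real.mul_self_sqrt hx0.le
    have hBnn : (0:ℝ) ≤ 2*B := by have := hB0 hB; linarith
    have hsx : (0:ℝ) < Real.sqrt ((k:ℝ)+1) := Real.sqrt_pos.2 hx0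
    calc v1 f (k+1) / ((k:ℝ)+1)^2
        = Real.sqrt (v1 f (k+1)) * Real.sqrt (v1 f (k+1)) / ((k:ℝ)+1)^2 := by
          rw [Real.mul_self_sqrt hvnn]
      _ ≤ Real.sqrt (v1 f (k+1)) * Real.sqrt (2*B*((k:ℝ)+1)) / ((k:ℝ)+1)^2 := by
          gcongr
      _ = Real.sqrt (2*B) * (Real.sqrt (v1 f (k+1)) / (((k:ℝ)+1) * Real.sqrt ((k:ℝ)+1))) := by
          rw [Real.sqrt_mul hBnn, ← mul_div_assoc,
            div_eq_div_iff (by positivity) (by positivity)]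
          linear_combination (Real.sqrt (v1 f (k+1)) * Real.sqrt (2*B) * ((k:ℝ)+1)) * hxx
  have hsum2 : Summable (fun k : ℕ => v1 f (k+1) / ((k:ℝ)+1)^2) := by
    apply Summable.of_nonneg_of_le
      (fun k => div_nonneg (v1_nonneg hB _) (by positivity)) hcomp
    exact hg.mul_left _
  refine ⟨hg, hsum2, ?_⟩
  intro y hy n a b hab
  apply key n (fun i => |f (b i) y - f (a i) y|) (v1 f)
    (fun t => sum_finset_le_v1 hB hy hab t)
  intro N
  exact Summable.sum_le_tsum _ (fun k _ => div_nonneg (v1_nonneg hB _) (by positivity)) hsum2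

end Aux

/-- if `f` is bounded and `∑ √(v_j(n,f))/n^{3/2} < ∞` for `j = 1,2`,
then `f ∈ HBV`. -/
theorem HBV_of_modulus_of_variation (f : ℝ → ℝ → ℝ) (B : ℝ)
    (hB : ∀ x ∈ Set.Icc (-1:ℝ) 1, ∀ y ∈ Set.Icc (-1:ℝ) 1, |f x y| ≤ B)
    (h1 : Summable fun n : ℕ => Real.sqrt (v1 f (n + 1)) / ((n:ℝ) + 1) ^ ((3:ℝ)/2))
    (h2 : Summable fun n : ℕ => Real.sqrt (v2 f (n + 1)) / ((n:ℝ) + 1) ^ ((3:ℝ)/2)) :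
    HBV f := by
  classical
  -- bounds for the swapped function
  have hB' : ∀ x ∈ Set.Icc (-1:ℝ) 1, ∀ y ∈ Set.Icc (-1:ℝ) 1, |Function.swap f x y| ≤ B :=
    fun x hx y hy => hB y hy x hx
  have h2' : Summable fun n : ℕ =>
      Real.sqrt (v1 (Function.swap f) (n + 1)) / ((n:ℝ) + 1) ^ ((3:ℝ)/2) := h2
  obtain ⟨hg1, hs1, hbd1⟩ := partA hB h1
  obtain ⟨hg2, hs2, hbd2⟩ := partA hB' h2'
  set C1 : ℝ := ∑' k : ℕ, v1 f (k+1) / ((k:ℝ)+1)^2 with hC1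
  set C2 : ℝ := ∑' k : ℕ, v1 (Function.swap f) (k+1) / ((k:ℝ)+1)^2 with hC2
  have hharm : ∀ j : ℕ, harm (j + 1) = ((j:ℝ)+1) := by
    intro j; simp [harm]
  refine ⟨⟨C1, ?_⟩, ⟨C2, ?_⟩, ?_⟩
  · rintro S ⟨y, hy, n, a, b, hab, rfl⟩
    calc ∑ i : Fin n, |f (b i) y - f (a i) y| / harm (i.1 + 1)
        = ∑ i : Fin n, |f (b i) y - f (a i) y| / ((i.1:ℝ)+1) :=
          Finset.sum_congr rfl fun i _ => by rw [hharm]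
      _ ≤ C1 := hbd1 y hy n a b hab
  · rintro S ⟨x, hx, m, c, d, hcd, rfl⟩
    calc ∑ j : Fin m, |f x (d j) - f x (c j)| / harm (j.1 + 1)
        = ∑ j : Fin m, |f x (d j) - f x (c j)| / ((j.1:ℝ)+1) :=
          Finset.sum_congr rfl fun j _ => by rw [hharm]
      _ ≤ C2 := hbd2 x hx m c d hcd
  · -- mixed variation
    set w1 : ℕ → ℝ := fun k => 2 * v1 f k with hw1
    set w2 : ℕ → ℝ := fun k => 2 * v1 (Function.swap f) k with hw2
    have hw1m : Monotone w1 := fun x y h => by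
      have := v1_mono hB h; simp only [hw1]; linarith
    have hw2m : Monotone w2 := fun x y h => by
      have := v1_mono hB' h; simp only [hw2]; linarith
    have hw1nn : ∀ k, 0 ≤ w1 k := fun k => by
      have := v1_nonneg hB k; simp only [hw1]; linarith
    have hw2nn : ∀ k, 0 ≤ w2 k := fun k => by
      have := v1_nonneg hB' k; simp only [hw2]; linarith
    have hsq2 : (0:ℝ) ≤ 2 := by norm_num
    have hgw1 : Summable (fun k : ℕ =>
        Real.sqrt (w1 (k+1)) / (((k:ℝ)+1) * Real.sqrt ((k:ℝ)+1))) := by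
      refine (hg1.mul_left (Real.sqrt 2)).congr fun k => ?_
      simp only [hw1]
      rw [Real.sqrt_mul hsq2, mul_div_assoc]
    have hgw2 : Summable (fun k : ℕ =>
        Real.sqrt (w2 (k+1)) / (((k:ℝ)+1) * Real.sqrt ((k:ℝ)+1))) := by
      refine (hg2.mul_left (Real.sqrt 2)).congr fun k => ?_
      simp only [hw2]
      rw [Real.sqrt_mul hsq2, mul_div_assoc]
    set A1 : ℝ := 2 * Real.sqrt 2
      * ∑' k : ℕ, Real.sqrt (w1 (k+1)) / (((k:ℝ)+1) * Real.sqrt ((k:ℝ)+1)) with hA1def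
    set A2 : ℝ := 2 * Real.sqrt 2
      * ∑' k : ℕ, Real.sqrt (w2 (k+1)) / (((k:ℝ)+1) * Real.sqrt ((k:ℝ)+1)) with hA2def
    have hA1 : ∀ P, ∑ p ∈ Finset.range P, Real.sqrt (w1 (2^p) / 2^p) ≤ A1 :=
      fun P => condense w1 hw1nn hw1m _ rfl hgw1 P
    have hA2 : ∀ Q, ∑ q ∈ Finset.range Q, Real.sqrt (w2 (2^q) / 2^q) ≤ A2 :=
      fun Q => condense w2 hw2nn hw2m _ rfl hgw2 Q
    have hA1nn : 0 ≤ A1 := by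
      rw [hA1def]
      apply mul_nonneg (by positivity)
      exact tsum_nonneg fun k => by positivity
    have hA2nn : 0 ≤ A2 := by
      rw [hA2def]
      apply mul_nonneg (by positivity)
      exact tsum_nonneg fun k => by positivity
    refine ⟨A1 * A2, ?_⟩
    rintro S ⟨n, a, b, m, c, d, hab, hcd, rfl⟩
    have hrow : ∀ (i : Fin n) (t : Finset (Fin m)),
        ∑ j ∈ t, |f (a i) (c j) - f (a i) (d j) - f (b i) (c j) + f (b i) (d j)|
          ≤ w2 t.card := by
      intro i t
      have hptwise : ∀ j : Fin m,
          |f (a i) (c j) - f (a i) (d j) - f (b i) (c j) + f (b i) (d j)|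
          ≤ |f (a i) (d j) - f (a i) (c j)| + |f (b i) (d j) - f (b i) (c j)| := by
        intro j
        calc |f (a i) (c j) - f (a i) (d j) - f (b i) (c j) + f (b i) (d j)|
            = |(f (a i) (c j) - f (a i) (d j)) - (f (b i) (c j) - f (b i) (d j))| := by
              ring_nf
          _ ≤ |f (a i) (c j) - f (a i) (d j)| + |f (b i) (c j) - f (b i) (d j)| :=
              abs_sub _ _
          _ = |f (a i) (d j) - f (a i) (c j)| + |f (b i) (d j) - f (b i) (c j)| := by
              rw [abs_sub_comm, abs_sub_comm (f (b i) (c j))]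
      have h1 : ∑ j ∈ t, |f (a i) (d j) - f (a i) (c j)|
          ≤ v1 (Function.swap f) t.card :=
        sum_finset_le_v1 hB' (nonov_mem_Icc hab i).1 hcd t
      have h2 : ∑ j ∈ t, |f (b i) (d j) - f (b i) (c j)|
          ≤ v1 (Function.swap f) t.card :=
        sum_finset_le_v1 hB' (nonov_mem_Icc hab i).2 hcd t
      calc ∑ j ∈ t, |f (a i) (c j) - f (a i) (d j) - f (b i) (c j) + f (b i) (d j)|
          ≤ ∑ j ∈ t, (|f (a i) (d j) - f (a i) (c j)| + |f (b i) (d j) - f (b i) (c j)|) :=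
            Finset.sum_le_sum fun j _ => hptwise j
        _ = (∑ j ∈ t, |f (a i) (d j) - f (a i) (c j)|)
            + ∑ j ∈ t, |f (b i) (d j) - f (b i) (c j)| := Finset.sum_add_distrib
        _ ≤ v1 (Function.swap f) t.card + v1 (Function.swap f) t.card := add_le_add h1 h2
        _ = w2 t.card := by simp only [hw2]; ring
    have hcol : ∀ (j : Fin m) (t : Finset (Fin n)),
        ∑ i ∈ t, |f (a i) (c j) - f (a i) (d j) - f (b i) (c j) + f (b i) (d j)|
          ≤ w1 t.card := by
      intro j t
      have hptwise : ∀ i : Fin n,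
          |f (a i) (c j) - f (a i) (d j) - f (b i) (c j) + f (b i) (d j)|
          ≤ |f (b i) (d j) - f (a i) (d j)| + |f (b i) (c j) - f (a i) (c j)| := by
        intro i
        calc |f (a i) (c j) - f (a i) (d j) - f (b i) (c j) + f (b i) (d j)|
            = |(f (b i) (d j) - f (a i) (d j)) - (f (b i) (c j) - f (a i) (c j))| := by
              ring_nf
          _ ≤ |f (b i) (d j) - f (a i) (d j)| + |f (b i) (c j) - f (a i) (c j)| :=
              abs_sub _ _
      have h1 : ∑ i ∈ t, |f (b i) (d j) - f (a i) (d j)| ≤ v1 f t.card :=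
        sum_finset_le_v1 hB (nonov_mem_Icc hcd j).2 hab t
      have h2 : ∑ i ∈ t, |f (b i) (c j) - f (a i) (c j)| ≤ v1 f t.card :=
        sum_finset_le_v1 hB (nonov_mem_Icc hcd j).1 hab t
      calc ∑ i ∈ t, |f (a i) (c j) - f (a i) (d j) - f (b i) (c j) + f (b i) (d j)|
          ≤ ∑ i ∈ t, (|f (b i) (d j) - f (a i) (d j)| + |f (b i) (c j) - f (a i) (c j)|) :=
            Finset.sum_le_sum fun i _ => hptwise i
        _ = (∑ i ∈ t, |f (b i) (d j) - f (a i) (d j)|)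
            + ∑ i ∈ t, |f (b i) (c j) - f (a i) (c j)| := Finset.sum_add_distrib
        _ ≤ v1 f t.card + v1 f t.card := add_le_add h1 h2
        _ = w1 t.card := by simp only [hw1]; ring
    have hmix := mixed n m
      (fun i j => |f (a i) (c j) - f (a i) (d j) - f (b i) (c j) + f (b i) (d j)|)
      (fun i j => abs_nonneg _) w1 w2 hw1m hw2m hw1nn hw2nn hrow hcol
      A1 A2 hA1nn hA2nn hA1 hA2
    calc ∑ i : Fin n, ∑ j : Fin m,
          |f (a i) (c j) - f (a i) (d j) - f (b i) (c j) + f (b i) (d j)|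
            / (harm (i.1 + 1) * harm (j.1 + 1))
        = ∑ i : Fin n, ∑ j : Fin m,
          |f (a i) (c j) - f (a i) (d j) - f (b i) (c j) + f (b i) (d j)|
            / (((i.1:ℝ)+1) * ((j.1:ℝ)+1)) := by
          refine Finset.sum_congr rfl fun i _ => Finset.sum_congr rfl fun j _ => ?_
          rw [hharm, hharm]
      _ ≤ A1 * A2 := hmix
end
end

section
/- For every ε > 0 there is a constant c(ε) such that: if −1 + ε ≤ x ≤ 1 − ε and s_{n−1} = x + (n−1)(1−x)/n, then ∫_{s_{n−1}}^{1} |K_n(x,s)| ds ≤ c(ε) / n^{3/4}, where K_n is the Legendre Dirichlet kernel. -/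
open MeasureTheory Set Filter Real

noncomputable section

namespace LegAux
open Polynomial intervalIntegral

def L : ℕ → Polynomial ℝ
  | 0 => 1
  | 1 => X
  | (n+2) => C ((2*(n:ℝ)+3)/((n:ℝ)+2)) * (X * L (n+1)) - C (((n:ℝ)+1)/((n:ℝ)+2)) * L n

lemma bonnet (n : ℕ) : C ((n:ℝ)+2) * L (n+2)
    = C (2*(n:ℝ)+3) * (X * L (n+1)) - C ((n:ℝ)+1) * L n := by
  have h2 : ((n:ℝ)+2) ≠ 0 := by positivity
  rw [L, mul_sub, ← mul_assoc, ← mul_assoc, ← C_mul, mul_div_cancel₀ _ h2]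
  rw [show C (↑n + 2) * (C ((↑n + 1) / (↑n + 2)) * L n) = C ((↑n+2) * ((↑n + 1) / (↑n + 2))) * L n by rw [C_mul, mul_assoc]]
  rw [mul_div_cancel₀ _ h2, mul_assoc]

lemma L_deg_lead : ∀ n : ℕ, (L n).degree = n ∧ 0 < (L n).leadingCoeff := by
  have key : ∀ n : ℕ, ((L n).degree = n ∧ 0 < (L n).leadingCoeff) ∧
      ((L (n+1)).degree = (n+1:ℕ) ∧ 0 < (L (n+1)).leadingCoeff) := by
    intro n
    induction n with
    | zero => simp [L, leadingCoeff]
    | succ n ih =>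
      refine ⟨ih.2, ?_⟩
      have ha : (0:ℝ) < (2*(n:ℝ)+3)/((n:ℝ)+2) := by positivity
      have hb : ((n:ℝ)+1)/((n:ℝ)+2) ≠ 0 := by positivity
      have hX : (C ((2*(n:ℝ)+3)/((n:ℝ)+2)) * (X * L (n+1))).degree = ((n+2 : ℕ) : WithBot ℕ) := by
        rw [degree_C_mul (ne_of_gt ha), degree_mul, degree_X, ih.2.1]
        rw [← Nat.cast_one (R := WithBot ℕ)]
        norm_cast
        omega
      have hlow : (C (((n:ℝ)+1)/((n:ℝ)+2)) * L n).degree < ((n+2 : ℕ) : WithBot ℕ) := by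
        rw [degree_C_mul hb, ih.1.1]
        exact_mod_cast (by omega : (n:ℕ) < n+2)
      have hlt := hX ▸ hlow
      show (L (n+2)).degree = ((n+1+1:ℕ) : WithBot ℕ) ∧ 0 < (L (n+2)).leadingCoeff
      rw [L]
      constructor
      · rw [degree_sub_eq_left_of_degree_lt hlt, hX]
      · rw [leadingCoeff_sub_of_degree_lt hlt, leadingCoeff_mul, leadingCoeff_mul,
          leadingCoeff_C, leadingCoeff_X, one_mul]
        exact mul_pos ha ih.2.2
  exact fun n => (key n).1

lemma L_degree (n : ℕ) : (L n).degree = n := (L_deg_lead n).1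
lemma L_natDegree (n : ℕ) : (L n).natDegree = n := natDegree_eq_of_degree_eq_some (L_degree n)
lemma L_lead_pos (n : ℕ) : 0 < (L n).leadingCoeff := (L_deg_lead n).2
lemma L_ne_zero (n : ℕ) : L n ≠ 0 := fun h => by simpa [h] using L_lead_pos n

def Pe (n : ℕ) (x : ℝ) : ℝ := eval x (L n)
def Pd (n : ℕ) (x : ℝ) : ℝ := eval x (derivative (L n))
def Pdd (n : ℕ) (x : ℝ) : ℝ := eval x (derivative (derivative (L n)))

@[simp] lemma Pe0 (x : ℝ) : Pe 0 x = 1 := by simp [Pe, L]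
@[simp] lemma Pe1 (x : ℝ) : Pe 1 x = x := by simp [Pe, L]
@[simp] lemma Pd0 (x : ℝ) : Pd 0 x = 0 := by simp [Pd, L]
@[simp] lemma Pd1 (x : ℝ) : Pd 1 x = 1 := by simp [Pd, L]

lemma bonnetR (n : ℕ) (x : ℝ) : ((n:ℝ)+2) * Pe (n+2) x
    = (2*(n:ℝ)+3) * (x * Pe (n+1) x) - ((n:ℝ)+1) * Pe n x := by
  have := congrArg (eval x) (bonnet n)
  simpa [Pe] using this

lemma bonnetD (n : ℕ) (x : ℝ) : ((n:ℝ)+2) * Pd (n+2) x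
    = (2*(n:ℝ)+3) * (Pe (n+1) x + x * Pd (n+1) x) - ((n:ℝ)+1) * Pd n x := by
  have := congrArg (fun p => eval x (derivative p)) (bonnet n)
  simp only [derivative_mul, derivative_sub, derivative_C, derivative_X] at this
  simp only [eval_sub, eval_add, eval_mul, eval_C, eval_X, eval_zero, zero_mul, zero_add, eval_one, one_mul] at this
  show ((n:ℝ)+2) * eval x (derivative (L (n+2))) = _
  rw [this]; unfold Pe Pd; ring

lemma derivId (n : ℕ) : (∀ x : ℝ, Pd (n+1) x = x * Pd n x + ((n:ℝ)+1) * Pe n x)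
    ∧ (∀ x : ℝ, x * Pd (n+1) x = Pd n x + ((n:ℝ)+1) * Pe (n+1) x) := by
  induction n with
  | zero => constructor <;> intro x <;> simp
  | succ n ih =>
    have h2 : ((n:ℝ)+2) ≠ 0 := by positivity
    obtain ⟨ih1, ih2⟩ := ih
    constructor
    · intro x
      apply mul_left_cancel₀ h2
      push_cast
      linear_combination bonnetD n x + ((n:ℝ)+1) * ih2 x
    · intro x
      apply mul_left_cancel₀ h2
      push_cast
      linear_combination x * bonnetD n x - ((n:ℝ)+2) * bonnetR n x
        + (2*(n:ℝ)+3) * x * ih2 x - ((n:ℝ)+2) * ih1 x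

lemma IdI (n : ℕ) (x : ℝ) : Pd (n+1) x = x * Pd n x + ((n:ℝ)+1) * Pe n x := (derivId n).1 x
lemma IdII (n : ℕ) (x : ℝ) : x * Pd (n+1) x = Pd n x + ((n:ℝ)+1) * Pe (n+1) x := (derivId n).2 x

/-- `(x²-1) P_{n+1}' = (n+1)(x P_{n+1} - P_n)` -/
lemma IdIII (n : ℕ) (x : ℝ) :
    (x^2 - 1) * Pd (n+1) x = ((n:ℝ)+1) * (x * Pe (n+1) x - Pe n x) := by
  linear_combination x * IdII n x - IdI n x

lemma contPe (n : ℕ) : Continuous (Pe n) := (L n).continuous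
lemma contPd (n : ℕ) : Continuous (Pd n) := (derivative (L n)).continuous

lemma hasDerivAt_Pe (n : ℕ) (x : ℝ) : HasDerivAt (Pe n) (Pd n x) x := (L n).hasDerivAt x
lemma hasDerivAt_Pd (n : ℕ) (x : ℝ) : HasDerivAt (Pd n) (Pdd n x) x :=
  (derivative (L n)).hasDerivAt x

/-- Legendre ODE. -/
lemma ODE (n : ℕ) (x : ℝ) :
    (1 - x^2) * Pdd n x - 2*x * Pd n x + (n:ℝ)*((n:ℝ)+1) * Pe n x = 0 := by
  cases n with
  | zero => simp [Pd, Pdd, L]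
  | succ n =>
    -- differentiate IdIII
    have hf : HasDerivAt (fun x => (x^2 - 1) * Pd (n+1) x)
        (2*x * Pd (n+1) x + (x^2-1) * Pdd (n+1) x) x := by
      have := (((hasDerivAt_pow 2 x).sub_const 1).mul (hasDerivAt_Pd (n+1) x))
      exact this.congr_deriv (by push_cast; ring)
    have hg : HasDerivAt (fun x => ((n:ℝ)+1) * (x * Pe (n+1) x - Pe n x))
        (((n:ℝ)+1) * (Pe (n+1) x + x * Pd (n+1) x - Pd n x)) x := by
      have := (((hasDerivAt_id x).mul (hasDerivAt_Pe (n+1) x)).sub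
          (hasDerivAt_Pe n x)).const_mul ((n:ℝ)+1)
      exact this.congr_deriv (by simp only [id_eq]; ring)
    have heq : (fun x => (x^2 - 1) * Pd (n+1) x)
        = (fun x => ((n:ℝ)+1) * (x * Pe (n+1) x - Pe n x)) := funext (IdIII n)
    rw [heq] at hf
    have hd := hf.unique hg
    push_cast
    linear_combination (-1 : ℝ) * hd - ((n:ℝ)+1) * IdII n x

/-- derivative of the Wronskian-type function. -/
lemma hasDerivAt_W (n m : ℕ) (x : ℝ) :
    HasDerivAt (fun x => (1 - x^2) * (Pd n x * Pe m x - Pe n x * Pd m x))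
      (((m:ℝ)*((m:ℝ)+1) - (n:ℝ)*((n:ℝ)+1)) * (Pe n x * Pe m x)) x := by
  have h : HasDerivAt (fun x => (1 - x^2) * (Pd n x * Pe m x - Pe n x * Pd m x))
      ((-(2*x)) * (Pd n x * Pe m x - Pe n x * Pd m x)
        + (1 - x^2) * ((Pdd n x * Pe m x + Pd n x * Pd m x)
            - (Pd n x * Pd m x + Pe n x * Pdd m x))) x := by
    have h1 := ((hasDerivAt_pow 2 x).const_sub 1).mul
      (((hasDerivAt_Pd n x).mul (hasDerivAt_Pe m x)).sub
        ((hasDerivAt_Pe n x).mul (hasDerivAt_Pd m x)))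
    exact h1.congr_deriv (by simp only [Pi.sub_apply, Pi.mul_apply]; push_cast; ring)
  convert h using 1
  linear_combination (-(Pe m x)) * ODE n x + Pe n x * ODE m x

lemma ortho {n m : ℕ} (h : n ≠ m) :
    (∫ x in (-1:ℝ)..1, Pe n x * Pe m x) = 0 := by
  have hcont : Continuous fun x => ((m:ℝ)*((m:ℝ)+1) - (n:ℝ)*((n:ℝ)+1)) * (Pe n x * Pe m x) :=
    (continuous_const.mul ((contPe n).mul (contPe m)))
  have key := integral_eq_sub_of_hasDerivAt
    (f := fun x => (1 - x^2) * (Pd n x * Pe m x - Pe n x * Pd m x))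
    (fun x _ => hasDerivAt_W n m x) (hcont.intervalIntegrable (-1) 1)
  have hne : ((m:ℝ)*((m:ℝ)+1) - (n:ℝ)*((n:ℝ)+1)) ≠ 0 := by
    have : (m:ℝ) ≠ (n:ℝ) := by exact_mod_cast h.symm
    intro hc
    apply this
    nlinarith [sq_nonneg ((m:ℝ) - n), sq_nonneg ((m:ℝ) + n), Nat.cast_nonneg (α := ℝ) m,
      Nat.cast_nonneg (α := ℝ) n]
  have key2 : ((m:ℝ)*((m:ℝ)+1) - (n:ℝ)*((n:ℝ)+1)) * ∫ x in (-1:ℝ)..1, Pe n x * Pe m x = 0 := by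
    rw [← intervalIntegral.integral_const_mul, key]; norm_num
  exact (mul_eq_zero.mp key2).resolve_left hne

def Nn (n : ℕ) : ℝ := ∫ x in (-1:ℝ)..1, Pe n x ^ 2

lemma norm_val : ∀ n : ℕ, Nn n = 2/(2*(n:ℝ)+1) := by
  have ii : ∀ (f : ℝ → ℝ), Continuous f → IntervalIntegrable f volume (-1) 1 :=
    fun f hf => hf.intervalIntegrable _ _
  have Pe0' : ∀ x : ℝ, Pe 0 x = 1 := by intro x; simp [Pe, L]
  have Pe1' : ∀ x : ℝ, Pe 1 x = x := by intro x; simp [Pe, L]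
  have N0 : Nn 0 = 2 := by
    rw [Nn, integral_congr (g := fun _ => (1:ℝ)) (fun x _ => by rw [Pe0']; norm_num)]
    norm_num
  have N1 : Nn 1 = 2/3 := by
    rw [Nn, integral_congr (g := fun x : ℝ => x ^ 2) (fun x _ => by rw [Pe1'])]
    rw [integral_pow]
    norm_num
  -- A = ∫ x * Pe (n+1) x * Pe (n+2) x
  have hA : ∀ n : ℕ, (2*(n:ℝ)+5) * (∫ x in (-1:ℝ)..1, x * Pe (n+1) x * Pe (n+2) x)
      = ((n:ℝ)+2) * Nn (n+1) := by
    intro n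
    have h1 : ∀ x : ℝ, (2*(n:ℝ)+5) * (x * Pe (n+1) x * Pe (n+2) x)
        = ((n:ℝ)+3) * (Pe (n+3) x * Pe (n+1) x) + ((n:ℝ)+2) * Pe (n+1) x ^ 2 := by
      intro x
      have hb := bonnetR (n+1) x
      push_cast at hb
      simp only [show n+1+2 = n+3 by omega, show n+1+1 = n+2 by omega] at hb
      linear_combination (-(Pe (n+1) x)) * hb
    rw [← intervalIntegral.integral_const_mul]
    rw [integral_congr (g := fun x => ((n:ℝ)+3) * (Pe (n+3) x * Pe (n+1) x)
        + ((n:ℝ)+2) * Pe (n+1) x ^ 2) (fun x _ => h1 x)]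
    rw [integral_add (ii (fun x => ((n:ℝ)+3) * (Pe (n+3) x * Pe (n+1) x))
          (continuous_const.mul ((contPe _).mul (contPe _))))
        (ii (fun x => ((n:ℝ)+2) * Pe (n+1) x ^ 2)
          (continuous_const.mul ((contPe _).pow 2))),
      intervalIntegral.integral_const_mul, intervalIntegral.integral_const_mul, ortho (by omega), Nn]
    ring
  have hrec : ∀ n : ℕ, Nn (n+2) = (2*(n:ℝ)+3)/(2*(n:ℝ)+5) * Nn (n+1) := by
    intro n
    have h1 : ∀ x : ℝ, ((n:ℝ)+2) * Pe (n+2) x ^ 2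
        = (2*(n:ℝ)+3) * (x * Pe (n+1) x * Pe (n+2) x) - ((n:ℝ)+1) * (Pe n x * Pe (n+2) x) := by
      intro x; linear_combination Pe (n+2) x * bonnetR n x
    have h2 : ((n:ℝ)+2) * Nn (n+2)
        = (2*(n:ℝ)+3) * ∫ x in (-1:ℝ)..1, x * Pe (n+1) x * Pe (n+2) x := by
      rw [Nn, ← intervalIntegral.integral_const_mul,
        integral_congr (g := fun x => (2*(n:ℝ)+3) * (x * Pe (n+1) x * Pe (n+2) x)
          - ((n:ℝ)+1) * (Pe n x * Pe (n+2) x)) (fun x _ => h1 x),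
        integral_sub (ii (fun x => (2*(n:ℝ)+3) * (x * Pe (n+1) x * Pe (n+2) x))
            (continuous_const.mul (((continuous_id.mul (contPe _))).mul (contPe _))))
          (ii (fun x => ((n:ℝ)+1) * (Pe n x * Pe (n+2) x))
            (continuous_const.mul ((contPe _).mul (contPe _)))),
        intervalIntegral.integral_const_mul, intervalIntegral.integral_const_mul, ortho (by omega)]
      ring
    have hAn := hA n
    have h5 : (2*(n:ℝ)+5) ≠ 0 := by positivity
    have h2' : ((n:ℝ)+2) ≠ 0 := by positivity
    have h6 : ((n:ℝ)+2) * ((2*(n:ℝ)+5) * Nn (n+2)) = ((n:ℝ)+2) * ((2*(n:ℝ)+3) * Nn (n+1)) := by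
      linear_combination (2*(n:ℝ)+5) * h2 + (2*(n:ℝ)+3) * hAn
    have h7 := mul_left_cancel₀ h2' h6
    rw [div_mul_eq_mul_div, eq_div_iff h5]
    linear_combination h7
  have key : ∀ n : ℕ, Nn n = 2/(2*(n:ℝ)+1) ∧ Nn (n+1) = 2/(2*((n:ℝ)+1)+1) := by
    intro n
    induction n with
    | zero => refine ⟨by simpa using N0, by rw [N1]; norm_num⟩
    | succ n ih =>
      refine ⟨by push_cast; exact_mod_cast ih.2, ?_⟩
      rw [hrec n, ih.2]
      push_cast
      have h5 : (2*(n:ℝ)+5) ≠ 0 := by positivity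
      field_simp
      ring
  exact fun n => (key n).1

lemma parity : ∀ n : ℕ, ∀ x : ℝ, Pe n (-x) = (-1)^n * Pe n x := by
  have key : ∀ n : ℕ, (∀ x : ℝ, Pe n (-x) = (-1)^n * Pe n x)
      ∧ (∀ x : ℝ, Pe (n+1) (-x) = (-1)^(n+1) * Pe (n+1) x) := by
    intro n
    induction n with
    | zero => constructor <;> intro x <;> simp [Pe0, Pe1]
    | succ n ih =>
      refine ⟨ih.2, fun x => ?_⟩
      have h2 : ((n:ℝ)+2) ≠ 0 := by positivity
      apply mul_left_cancel₀ h2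
      have hb1 := bonnetR n (-x)
      have hb2 := bonnetR n x
      rw [ih.1 x, ih.2 x] at hb1
      show ((n:ℝ)+2) * Pe (n+2) (-x) = ((n:ℝ)+2) * ((-1)^(n+2) * Pe (n+2) x)
      rw [hb1]
      rw [show ((-1:ℝ))^(n+1) = (-1) * (-1)^n by ring, show ((-1:ℝ))^(n+2) = (-1)^n by
        rw [pow_add]; norm_num]
      linear_combination (-(-1:ℝ)^n) * hb2
  exact fun n => (key n).1

lemma central_sq : ∀ n : ℕ, Pe n 0 ^ 2 ≤ 1/((n:ℝ)+1) := by
  have key : ∀ n : ℕ, (Pe n 0 ^2 ≤ 1/((n:ℝ)+1)) ∧ (Pe (n+1) 0 ^2 ≤ 1/((n:ℝ)+2)) := by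
    intro n
    induction n with
    | zero =>
      constructor
      · rw [Pe0]; norm_num
      · rw [Pe1]; norm_num
    | succ n ih =>
      refine ⟨by push_cast; exact_mod_cast ih.2, ?_⟩
      have hb := bonnetR n 0
      simp only [mul_zero, zero_mul, sub_zero, mul_comm] at hb
      -- (n+2) * Pe (n+2) 0 = -(n+1) * Pe n 0
      have h2 : ((n:ℝ)+2) ≠ 0 := by positivity
      have hsq : Pe (n+2) 0 ^2 = (((n:ℝ)+1)/((n:ℝ)+2))^2 * Pe n 0 ^2 := by
        have : Pe (n+2) 0 = -(((n:ℝ)+1)/((n:ℝ)+2)) * Pe n 0 := by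
          field_simp
          linarith [hb]
        rw [this]; ring
      have ih1 := ih.1
      push_cast
      rw [hsq]
      have hbound : (((n:ℝ)+1)/((n:ℝ)+2))^2 * Pe n 0 ^2 ≤ (((n:ℝ)+1)/((n:ℝ)+2))^2 * (1/((n:ℝ)+1)) := by
        apply mul_le_mul_of_nonneg_left ih1 (by positivity)
      refine hbound.trans ?_
      rw [div_pow, div_mul_eq_mul_div, div_le_div_iff₀ (by positivity) (by positivity)]
      have hred : ((n:ℝ)+1)^2 * (1/((n:ℝ)+1)) = (n:ℝ)+1 := by field_simp
      rw [hred]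
      nlinarith [sq_nonneg ((n:ℝ))]
  exact fun n => (key n).1

lemma Pd_zero (n : ℕ) : Pd (n+1) 0 = ((n:ℝ)+1) * Pe n 0 := by
  have := IdI n 0; simpa using this

set_option maxHeartbeats 1000000 in
/-- Bernstein-type inequality for Legendre polynomials. -/
theorem bernstein (n : ℕ) (hn : 1 ≤ n) (x : ℝ) (hx1 : -1 < x) (hx2 : x < 1) :
    Real.sqrt (1 - x^2) * Pe n x ^ 2 ≤ 2 / (n:ℝ) := by
  -- the function F and its properties
  set lam : ℝ := (n:ℝ)*((n:ℝ)+1) with hlam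
  set A : ℝ → ℝ := fun θ => Real.sqrt (Real.sin θ) * Pe n (Real.cos θ) with hA
  set B : ℝ → ℝ := fun θ =>
    Real.sqrt (Real.sin θ) * ((Real.cos θ * Pe n (Real.cos θ)
      - 2 * Real.sin θ^2 * Pd n (Real.cos θ)) / (2 * Real.sin θ)) with hB
  set Q : ℝ → ℝ := fun θ => ((n:ℝ)+1/2)^2 + 1/(4 * Real.sin θ^2) with hQ
  set F : ℝ → ℝ := fun θ => A θ^2 + B θ^2 / Q θ with hF
  have hQpos : ∀ θ : ℝ, Real.sin θ ≠ 0 → 0 < Q θ := by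
    intro θ hs
    have : 0 < Real.sin θ ^2 := by positivity
    have h1 : (0:ℝ) < ((n:ℝ)+1/2)^2 := by positivity
    have h2 : (0:ℝ) < 1/(4*Real.sin θ^2) := by positivity
    simp only [hQ]; linarith
  -- derivative of A
  have hderivA : ∀ θ ∈ Set.Ioo 0 Real.pi, HasDerivAt A (B θ) θ := by
    intro θ hθ
    have hs : 0 < Real.sin θ := Real.sin_pos_of_pos_of_lt_pi hθ.1 hθ.2
    have hS : Real.sqrt (Real.sin θ) ≠ 0 := by positivity
    have hss : Real.sqrt (Real.sin θ) * Real.sqrt (Real.sin θ) = Real.sin θ :=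
      Real.mul_self_sqrt hs.le
    have hsq : HasDerivAt (fun θ => Real.sqrt (Real.sin θ))
        (1/(2 * Real.sqrt (Real.sin θ)) * Real.cos θ) θ :=
      (Real.hasDerivAt_sqrt hs.ne').comp θ (Real.hasDerivAt_sin θ)
    have hu : HasDerivAt (fun θ => Pe n (Real.cos θ))
        (Pd n (Real.cos θ) * (-Real.sin θ)) θ :=
      (hasDerivAt_Pe n (Real.cos θ)).comp θ (Real.hasDerivAt_cos θ)
    have hprod := hsq.mul hu
    refine hprod.congr_deriv (Eq.symm ?_)
    simp only [hB]
    apply mul_right_cancel₀ hS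
    field_simp
    linear_combination (Real.cos θ * Pe n (Real.cos θ)) * hss
  -- derivative of B
  have hderivB : ∀ θ ∈ Set.Ioo 0 Real.pi, HasDerivAt B (-(Q θ) * A θ) θ := by
    intro θ hθ
    have hs : 0 < Real.sin θ := Real.sin_pos_of_pos_of_lt_pi hθ.1 hθ.2
    have hS : Real.sqrt (Real.sin θ) ≠ 0 := by positivity
    have hss : Real.sqrt (Real.sin θ) * Real.sqrt (Real.sin θ) = Real.sin θ :=
      Real.mul_self_sqrt hs.le
    have hsq : HasDerivAt (fun θ => Real.sqrt (Real.sin θ))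
        (1/(2 * Real.sqrt (Real.sin θ)) * Real.cos θ) θ :=
      (Real.hasDerivAt_sqrt hs.ne').comp θ (Real.hasDerivAt_sin θ)
    have hu : HasDerivAt (fun θ => Pe n (Real.cos θ))
        (Pd n (Real.cos θ) * (-Real.sin θ)) θ :=
      (hasDerivAt_Pe n (Real.cos θ)).comp θ (Real.hasDerivAt_cos θ)
    have hu' : HasDerivAt (fun θ => Pd n (Real.cos θ))
        (Pdd n (Real.cos θ) * (-Real.sin θ)) θ :=
      (hasDerivAt_Pd n (Real.cos θ)).comp θ (Real.hasDerivAt_cos θ)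
    have hsin2 : HasDerivAt (fun θ => Real.sin θ^2) (2 * Real.sin θ ^ 1 * Real.cos θ) θ :=
      (Real.hasDerivAt_sin θ).pow 2
    have hN : HasDerivAt (fun θ => Real.cos θ * Pe n (Real.cos θ)
        - 2 * Real.sin θ^2 * Pd n (Real.cos θ))
        ((-Real.sin θ) * Pe n (Real.cos θ) + Real.cos θ * (Pd n (Real.cos θ) * (-Real.sin θ))
          - ((2 * (2 * Real.sin θ ^ 1 * Real.cos θ)) * Pd n (Real.cos θ)
            + (2 * Real.sin θ^2) * (Pdd n (Real.cos θ) * (-Real.sin θ)))) θ :=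
      ((Real.hasDerivAt_cos θ).mul hu).sub ((hsin2.const_mul 2).mul hu')
    have hden : HasDerivAt (fun θ => 2 * Real.sin θ) (2 * Real.cos θ) θ := by
      simpa using (Real.hasDerivAt_sin θ).const_mul 2
    have hrat := hN.div hden (by positivity)
    have hprod := hsq.mul hrat
    refine hprod.congr_deriv (Eq.symm ?_)
    have hode := ODE n (Real.cos θ)
    have hpy := Real.sin_sq_add_cos_sq θ
    have key : 2 * Real.sin θ * (-Real.sin θ * Pe n (Real.cos θ)
          + Real.cos θ * (Pd n (Real.cos θ) * -Real.sin θ) -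
          (2 * (2 * Real.sin θ ^ 1 * Real.cos θ) * Pd n (Real.cos θ) +
            2 * Real.sin θ ^ 2 * (Pdd n (Real.cos θ) * -Real.sin θ)))
        - Real.cos θ * (Real.cos θ * Pe n (Real.cos θ) - 2 * Real.sin θ ^ 2 * Pd n (Real.cos θ))
        = -((4 * Real.sin θ^2 * ((n:ℝ)*((n:ℝ)+1)) + Real.sin θ^2 + 1) * Pe n (Real.cos θ)) := by
      linear_combination (4 * Real.sin θ^2) * hode
        + (4 * Real.sin θ^2 * Pdd n (Real.cos θ) - Pe n (Real.cos θ)) * hpy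
    have hinv : 1/(2*Real.sqrt (Real.sin θ)) = Real.sqrt (Real.sin θ)/(2*Real.sin θ) := by
      rw [div_eq_div_iff (by positivity) (by positivity)]
      linear_combination (-2:ℝ) * hss
    rw [hinv]
    have stageA : Real.sqrt (Real.sin θ) / (2 * Real.sin θ) * Real.cos θ *
          ((Real.cos θ * Pe n (Real.cos θ) - 2 * Real.sin θ ^ 2 * Pd n (Real.cos θ)) / (2 * Real.sin θ)) +
        Real.sqrt (Real.sin θ) *
          (((-Real.sin θ * Pe n (Real.cos θ) + Real.cos θ * (Pd n (Real.cos θ) * -Real.sin θ) -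
                (2 * (2 * Real.sin θ ^ 1 * Real.cos θ) * Pd n (Real.cos θ) +
                  2 * Real.sin θ ^ 2 * (Pdd n (Real.cos θ) * -Real.sin θ))) *
              (2 * Real.sin θ) -
            (Real.cos θ * Pe n (Real.cos θ) - 2 * Real.sin θ ^ 2 * Pd n (Real.cos θ)) * (2 * Real.cos θ)) /
          (2 * Real.sin θ) ^ 2)
        = Real.sqrt (Real.sin θ) *
          ((2 * Real.sin θ * (-Real.sin θ * Pe n (Real.cos θ)
              + Real.cos θ * (Pd n (Real.cos θ) * -Real.sin θ) -
              (2 * (2 * Real.sin θ ^ 1 * Real.cos θ) * Pd n (Real.cos θ) +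
                2 * Real.sin θ ^ 2 * (Pdd n (Real.cos θ) * -Real.sin θ)))
            - Real.cos θ * (Real.cos θ * Pe n (Real.cos θ) - 2 * Real.sin θ ^ 2 * Pd n (Real.cos θ)))
            / (4 * Real.sin θ ^ 2)) := by
      field_simp
      ring
    refine Eq.trans ?_ stageA.symm
    rw [key]
    simp only [hQ, hA]
    field_simp
    ring
  -- derivative of Q
  have hderivQ : ∀ θ ∈ Set.Ioo 0 Real.pi,
      HasDerivAt Q ((0 * (4 * Real.sin θ^2) - 1 * (4 * (2 * Real.sin θ ^ 1 * Real.cos θ)))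
        / (4 * Real.sin θ^2)^2) θ := by
    intro θ hθ
    have hs : 0 < Real.sin θ := Real.sin_pos_of_pos_of_lt_pi hθ.1 hθ.2
    have h1 : HasDerivAt (fun θ : ℝ => 1/(4 * Real.sin θ^2))
        ((0 * (4 * Real.sin θ^2) - 1 * (4 * (2 * Real.sin θ ^ 1 * Real.cos θ)))
          / (4 * Real.sin θ^2)^2) θ :=
      (hasDerivAt_const θ (1:ℝ)).div (((Real.hasDerivAt_sin θ).pow 2).const_mul 4)
        (by positivity)
    simpa only [hQ, zero_add] using (h1.const_add (((n:ℝ)+1/2)^2))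
  -- derivative of F
  have hderivF : ∀ θ ∈ Set.Ioo 0 Real.pi, HasDerivAt F
      (8 * Real.sin θ * Real.cos θ * B θ^2 / ((4 * Real.sin θ^2)^2 * Q θ^2)) θ := by
    intro θ hθ
    have hs : 0 < Real.sin θ := Real.sin_pos_of_pos_of_lt_pi hθ.1 hθ.2
    have hQp : 0 < Q θ := hQpos θ hs.ne'
    have hA2 : HasDerivAt (fun θ => A θ^2) (2 * A θ ^ 1 * B θ) θ := (hderivA θ hθ).pow 2
    have hB2 : HasDerivAt (fun θ => B θ^2) (2 * B θ ^ 1 * (-(Q θ) * A θ)) θ :=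
      (hderivB θ hθ).pow 2
    have hdiv := hB2.div (hderivQ θ hθ) hQp.ne'
    have := hA2.add hdiv
    refine this.congr_deriv (Eq.symm ?_)
    have h4s : (4 * Real.sin θ^2) ≠ 0 := by positivity
    field_simp [hs.ne']
    ring
  -- on (0, π/2] the function F is monotone, bound F θ ≤ F (π/2)
  have hmainF : ∀ θ ∈ Set.Ioc 0 (Real.pi/2), F θ ≤ F (Real.pi/2) := by
    intro θ0 hθ0
    have hpi := Real.pi_pos
    have hsub : Set.Icc θ0 (Real.pi/2) ⊆ Set.Ioo 0 Real.pi := by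
      intro t ht
      exact ⟨lt_of_lt_of_le hθ0.1 ht.1, lt_of_le_of_lt ht.2 (by linarith)⟩
    have hcont : ContinuousOn F (Set.Icc θ0 (Real.pi/2)) := fun t ht =>
      ((hderivF t (hsub ht)).continuousAt).continuousWithinAt
    have hmono : MonotoneOn F (Set.Icc θ0 (Real.pi/2)) := by
      apply monotoneOn_of_deriv_nonneg (convex_Icc _ _) hcont
      · intro t ht
        have ht' : t ∈ Set.Icc θ0 (Real.pi/2) := interior_subset ht
        exact ((hderivF t (hsub ht')).differentiableAt).differentiableWithinAt
      · intro t ht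
        rw [interior_Icc] at ht
        have ht2 : t ∈ Set.Icc θ0 (Real.pi/2) := ⟨ht.1.le, ht.2.le⟩
        rw [(hderivF t (hsub ht2)).deriv]
        have hs : 0 < Real.sin t := Real.sin_pos_of_pos_of_lt_pi (hsub ht2).1 (hsub ht2).2
        have hc : 0 ≤ Real.cos t := Real.cos_nonneg_of_mem_Icc
          ⟨by linarith [(hsub ht2).1], ht.2.le⟩
        have hQp : 0 < Q t := hQpos t hs.ne'
        positivity
    exact hmono (Set.left_mem_Icc.mpr hθ0.2) (Set.right_mem_Icc.mpr hθ0.2) hθ0.2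
  -- value at π/2
  have hFpi : F (Real.pi/2) ≤ 2 / (n:ℝ) := by
    have hs : Real.sin (Real.pi/2) = 1 := Real.sin_pi_div_two
    have hc : Real.cos (Real.pi/2) = 0 := Real.cos_pi_div_two
    have hAv : A (Real.pi/2) = Pe n 0 := by
      simp [hA, hs, hc, Real.sqrt_one]
    have hBv : B (Real.pi/2) = -Pd n 0 := by
      simp [hB, hs, hc, Real.sqrt_one]
      ring
    have hQv : Q (Real.pi/2) = ((n:ℝ)+1/2)^2 + 1/4 := by
      simp [hQ, hs]
    obtain ⟨m, rfl⟩ : ∃ m, n = m + 1 := ⟨n - 1, by omega⟩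
    have hpd : Pd (m+1) 0 = ((m:ℝ)+1) * Pe m 0 := Pd_zero m
    have h1 : Pe (m+1) 0 ^2 ≤ 1/((m:ℝ)+2) := by
      have h := central_sq (m+1)
      push_cast at h
      rw [show (m:ℝ)+1+1 = (m:ℝ)+2 by ring] at h
      exact h
    have h2 : Pe m 0 ^2 ≤ 1/((m:ℝ)+1) := central_sq m
    have hQb : ((m:ℝ)+1)^2 ≤ (((m:ℝ)+1)+1/2)^2 + 1/4 := by nlinarith [Nat.cast_nonneg (α := ℝ) m]
    have hQvpos : (0:ℝ) < (((m:ℝ)+1)+1/2)^2 + 1/4 := by positivity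
    rw [hF]
    simp only [hAv, hBv, hQv]
    push_cast
    have hterm2 : (-(((m:ℝ)+1) * Pe m 0))^2 / ((((m:ℝ)+1)+1/2)^2 + 1/4) ≤ 1/((m:ℝ)+1) := by
      rw [div_le_iff₀ hQvpos]
      have e1 : (-(((m:ℝ)+1) * Pe m 0))^2 = ((m:ℝ)+1)^2 * Pe m 0^2 := by ring
      rw [e1]
      calc ((m:ℝ)+1)^2 * Pe m 0^2 ≤ ((m:ℝ)+1)^2 * (1/((m:ℝ)+1)) := by
            apply mul_le_mul_of_nonneg_left h2 (by positivity)
        _ = (m:ℝ)+1 := by field_simp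
        _ ≤ 1/((m:ℝ)+1) * ((((m:ℝ)+1)+1/2)^2 + 1/4) := by
            rw [div_mul_eq_mul_div, le_div_iff₀ (by positivity)]
            nlinarith [Nat.cast_nonneg (α := ℝ) m]
    rw [hpd]
    push_cast
    have : Pe (m+1) 0 ^ 2 + (-(((m:ℝ)+1) * Pe m 0))^2 / ((((m:ℝ)+1)+1/2)^2 + 1/4)
        ≤ 1/((m:ℝ)+2) + 1/((m:ℝ)+1) := add_le_add h1 hterm2
    apply le_trans this
    rw [div_add_div _ _ (by positivity : ((m:ℝ)+2) ≠ 0) (by positivity : ((m:ℝ)+1) ≠ 0),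
      div_le_div_iff₀ (by positivity) (by positivity)]
    nlinarith [Nat.cast_nonneg (α := ℝ) m]
  -- case 0 ≤ x
  have half : ∀ y : ℝ, 0 ≤ y → y < 1 → Real.sqrt (1 - y^2) * Pe n y ^ 2 ≤ 2 / (n:ℝ) := by
    intro y hy0 hy1
    set θ0 := Real.arccos y with hθ0def
    have hθpos : 0 < θ0 := Real.arccos_pos.mpr hy1
    have hθle : θ0 ≤ Real.pi/2 := Real.arccos_le_pi_div_two.mpr hy0
    have hcos : Real.cos θ0 = y := Real.cos_arccos (by linarith) hy1.le
    have hsin : Real.sin θ0 = Real.sqrt (1 - y^2) := Real.sin_arccos y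
    have hsinpos : 0 < Real.sin θ0 := Real.sin_pos_of_pos_of_lt_pi hθpos
      (by linarith [Real.pi_pos])
    have hQp : 0 < Q θ0 := hQpos θ0 hsinpos.ne'
    have hA2 : A θ0 ^2 = Real.sqrt (1 - y^2) * Pe n y ^ 2 := by
      rw [hA]
      simp only
      rw [hcos, hsin]
      rw [mul_pow, Real.sq_sqrt (Real.sqrt_nonneg _)]
    have hle : A θ0^2 ≤ F θ0 := by
      rw [hF]
      simp only
      have : 0 ≤ B θ0^2 / Q θ0 := div_nonneg (sq_nonneg _) hQp.le
      linarith
    calc Real.sqrt (1 - y^2) * Pe n y ^ 2 = A θ0^2 := hA2.symm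
      _ ≤ F θ0 := hle
      _ ≤ F (Real.pi/2) := hmainF θ0 ⟨hθpos, hθle⟩
      _ ≤ 2/(n:ℝ) := hFpi
  rcases le_or_gt 0 x with hx | hx
  · exact half x hx hx2
  · have hneg : Real.sqrt (1 - (-x)^2) * Pe n (-x) ^ 2 ≤ 2 / (n:ℝ) :=
      half (-x) (by linarith) (by linarith)
    have hpar : Pe n (-x) ^ 2 = Pe n x ^ 2 := by
      rw [parity n x]
      rcases Nat.even_or_odd n with he | ho
      · rw [he.neg_one_pow]; ring
      · rw [ho.neg_one_pow]; ring
    rw [show (1 : ℝ) - (-x)^2 = 1 - x^2 by ring, hpar] at hneg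
    exact hneg

/-- any polynomial of degree < n is a combination of `p 0 .. p (n-1)`. -/
lemma span_p {p : ℕ → Polynomial ℝ} (hp : IsOrthonormalLegendre p) :
    ∀ n : ℕ, ∀ f : Polynomial ℝ, f.degree < (n : ℕ) →
      ∃ b : ℕ → ℝ, f = ∑ k ∈ Finset.range n, C (b k) * p k := by
  intro n
  induction n with
  | zero =>
    intro f hf
    refine ⟨fun _ => 0, ?_⟩
    simp only [Finset.range_zero, Finset.sum_empty]
    by_contra hne
    rw [Polynomial.degree_eq_natDegree hne] at hf
    norm_cast at hf
  | succ n ih =>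
    intro f hf
    have hpn_deg : (p n).degree = n := hp.1 n
    have hpn_nat : (p n).natDegree = n := natDegree_eq_of_degree_eq_some hpn_deg
    have hpn_ne : p n ≠ 0 := fun h0 => by
      rw [h0, degree_zero] at hpn_deg
      exact absurd hpn_deg (by simp)
    have hpn_coeff : (p n).coeff n ≠ 0 := by
      have h := mt Polynomial.leadingCoeff_eq_zero.mp hpn_ne
      rwa [Polynomial.leadingCoeff, hpn_nat] at h
    set cc := f.coeff n / (p n).coeff n with hcc
    have hg : (f - C cc * p n).degree < (n : ℕ) := by
      apply Polynomial.degree_lt_iff_coeff_zero _ _ |>.mpr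
      intro m hm
      rw [Polynomial.coeff_sub, Polynomial.coeff_C_mul]
      rcases eq_or_lt_of_le hm with rfl | hlt
      · rw [hcc, div_mul_cancel₀ _ hpn_coeff, sub_self]
      · have h1 : f.coeff m = 0 := by
          apply Polynomial.coeff_eq_zero_of_degree_lt
          exact lt_of_lt_of_le hf (by exact_mod_cast Nat.cast_le.mpr hlt)
        have h2 : (p n).coeff m = 0 := by
          apply Polynomial.coeff_eq_zero_of_degree_lt
          rw [hpn_deg]; exact_mod_cast hlt
        rw [h1, h2, mul_zero, sub_zero]
    obtain ⟨b, hb⟩ := ih _ hg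
    refine ⟨Function.update b n cc, ?_⟩
    rw [Finset.sum_range_succ, Function.update_self]
    have : ∑ k ∈ Finset.range n, C (Function.update b n cc k) * p k
        = ∑ k ∈ Finset.range n, C (b k) * p k := by
      apply Finset.sum_congr rfl
      intro k hk
      rw [Function.update_of_ne (Finset.mem_range.mp hk).ne]
    rw [this, ← hb]
    ring

lemma p_eq {p : ℕ → Polynomial ℝ} (hp : IsOrthonormalLegendre p) :
    ∀ n : ℕ, p n = C (Real.sqrt ((2*(n:ℝ)+1)/2)) * L n := by
  intro n
  induction n using Nat.strong_induction_on with
  | _ n ih =>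
  have hdeg : (L n).degree < ((n+1 : ℕ) : WithBot ℕ) := by
    rw [L_degree]; exact_mod_cast Nat.lt_succ_self n
  obtain ⟨b, hb⟩ := span_p hp (n+1) (L n) hdeg
  have hint : ∀ j, j ≤ n → (∫ x in (-1:ℝ)..1, Pe n x * (p j).eval x) = b j := by
    intro j hj
    have : ∀ x : ℝ, Pe n x * (p j).eval x
        = ∑ k ∈ Finset.range (n+1), b k * ((p k).eval x * (p j).eval x) := by
      intro x
      rw [Pe, hb]
      simp only [Polynomial.eval_finset_sum, Finset.sum_mul, eval_mul, eval_C]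
      exact Finset.sum_congr rfl fun i _ => by ring
    rw [integral_congr (g := fun x => ∑ k ∈ Finset.range (n+1),
      b k * ((p k).eval x * (p j).eval x)) (fun x _ => this x)]
    rw [integral_finset_sum (fun k _ => (Continuous.intervalIntegrable
      (by exact continuous_const.mul ((p k).continuous.mul (p j).continuous)) _ _))]
    have : ∀ k ∈ Finset.range (n+1), (∫ x in (-1:ℝ)..1,
        b k * ((p k).eval x * (p j).eval x)) = if k = j then b k else 0 := by
      intro k _
      rw [intervalIntegral.integral_const_mul, hp.2.2 k j]
      by_cases h : k = j <;> simp [h]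
    rw [Finset.sum_congr rfl this, Finset.sum_ite_eq' (Finset.range (n+1)) j fun k => b k]
    simp [Nat.lt_succ_of_le hj]
  have hbzero : ∀ j, j < n → b j = 0 := by
    intro j hj
    have h1 := hint j hj.le
    rw [ih j hj] at h1
    have h2 : ∀ x : ℝ, Pe n x * (C (Real.sqrt ((2*(j:ℝ)+1)/2)) * L j).eval x
        = Real.sqrt ((2*(j:ℝ)+1)/2) * (Pe n x * Pe j x) := by
      intro x; simp [Pe]; ring
    rw [integral_congr (g := fun x => Real.sqrt ((2*(j:ℝ)+1)/2) * (Pe n x * Pe j x))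
      (fun x _ => h2 x), intervalIntegral.integral_const_mul, ortho (Nat.ne_of_gt hj), mul_zero] at h1
    exact h1.symm
  have hLn : L n = C (b n) * p n := by
    rw [hb, Finset.sum_range_succ]
    have : ∑ k ∈ Finset.range n, C (b k) * p k = 0 := by
      apply Finset.sum_eq_zero
      intro k hk
      rw [hbzero k (Finset.mem_range.mp hk)]
      simp
    rw [this, zero_add]
  -- b n ^ 2 = Nn n
  have hnn : b n ^ 2 = Nn n := by
    have : ∀ x : ℝ, Pe n x ^2 = b n * (Pe n x * (p n).eval x) := by
      intro x
      have := congrArg (eval x) hLn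
      simp only [Pe, eval_mul, eval_C] at this ⊢
      rw [this]; ring
    rw [Nn, integral_congr (g := fun x => b n * (Pe n x * (p n).eval x)) (fun x _ => this x),
      intervalIntegral.integral_const_mul]
    have h2 : (∫ x in (-1:ℝ)..1, Pe n x * (p n).eval x) = b n := hint n le_rfl
    rw [h2]; ring
  have hnnval : b n ^ 2 = 2/(2*(n:ℝ)+1) := by rw [hnn, norm_val]
  have hbpos : 0 < b n := by
    have hlead := congrArg leadingCoeff hLn
    rw [leadingCoeff_mul, leadingCoeff_C] at hlead
    have h1 := L_lead_pos n
    have h2 := hp.2.1 n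
    rw [hlead] at h1
    rcases mul_pos_iff.mp h1 with ⟨hb, _⟩ | ⟨_, hneg⟩
    · exact hb
    · linarith
  have hbne : b n ≠ 0 := hbpos.ne'
  have hpn : p n = C (b n)⁻¹ * L n := by
    rw [hLn, ← mul_assoc, ← C_mul, inv_mul_cancel₀ hbne, C_1, one_mul]
  rw [hpn]
  congr 1
  rw [show b n = Real.sqrt (2/(2*(n:ℝ)+1)) from by rw [← Real.sqrt_sq hbpos.le, hnnval]]
  rw [← Real.sqrt_inv, inv_div]

lemma CD (n : ℕ) (x s : ℝ) :
    (x - s) * ∑ k ∈ Finset.range (n+1), (2*(k:ℝ)+1) * (Pe k x * Pe k s)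
      = ((n:ℝ)+1) * (Pe (n+1) x * Pe n s - Pe n x * Pe (n+1) s) := by
  induction n with
  | zero =>
    rw [show ∑ k ∈ Finset.range (0+1), (2*(k:ℝ)+1) * (Pe k x * Pe k s) = 1 from by
      rw [Finset.sum_range_one]; simp [Pe0]]
    simp [Pe0, Pe1]
  | succ n ih =>
    rw [Finset.sum_range_succ, mul_add]
    have hbx := bonnetR n x
    have hbs := bonnetR n s
    push_cast
    simp only [show n+1+1 = n+2 from by omega]
    linear_combination ih - Pe (n+1) s * hbx + Pe (n+1) x * hbs

end LegAux

set_option maxHeartbeats 1000000 in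
open Polynomial intervalIntegral LegAux in
/-- tail integral bound for the Legendre Dirichlet kernel. -/
theorem legKernel_tail_integral_bound (p : ℕ → Polynomial ℝ)
    (hp : IsOrthonormalLegendre p) :
    ∀ ε > (0:ℝ), ∃ c > (0:ℝ), ∀ n : ℕ, 1 ≤ n → ∀ x ∈ Set.Icc (-1 + ε) (1 - ε),
      (∫ s in (x + ((n:ℝ) - 1) * (1 - x) / (n:ℝ))..1, |LegKernel p n x s|) ≤
        c / (n:ℝ) ^ ((3:ℝ)/4) := by
  intro ε hε
  set E := Real.sqrt (Real.sqrt ε) with hE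
  have hEpos : 0 < E := by
    rw [hE]
    exact Real.sqrt_pos.mpr (Real.sqrt_pos.mpr hε)
  have hE4 : E^4 = ε := by
    rw [hE, show (4:ℕ) = 2*2 from rfl, pow_mul, Real.sq_sqrt (Real.sqrt_nonneg _),
      Real.sq_sqrt hε.le]
  refine ⟨24 * (E⁻¹)^7 + 1, by positivity, ?_⟩
  intro n hn x hx
  obtain ⟨hx1, hx2⟩ := hx
  have hx1' : -1 < x := by linarith
  have hx2' : x < 1 := by linarith
  have h1x : ε ≤ 1 - x := by linarith
  have h1x' : ε ≤ 1 + x := by linarith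
  have kermul : ∀ s : ℝ, LegKernel p n x s
      = ∑ k ∈ Finset.range n, ((2*(k:ℝ)+1)/2) * (Pe k x * Pe k s) := by
    intro s
    unfold LegKernel
    apply Finset.sum_congr rfl
    intro k _
    rw [p_eq hp k]
    simp only [eval_mul, eval_C]
    rw [show Real.sqrt ((2*(k:ℝ)+1)/2) * eval x (L k) * (Real.sqrt ((2*(k:ℝ)+1)/2) * eval s (L k))
      = (Real.sqrt ((2*(k:ℝ)+1)/2) * Real.sqrt ((2*(k:ℝ)+1)/2)) * (eval x (L k) * eval s (L k)) from by
        ring, Real.mul_self_sqrt (by positivity)]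
    rfl
  rcases Nat.lt_or_ge n 2 with hn2 | hn2
  · -- n = 1
    have hn1 : n = 1 := by omega
    subst hn1
    have hker : ∀ s : ℝ, LegKernel p 1 x s = 1/2 := by
      intro s
      rw [kermul, Finset.sum_range_one]
      simp [Pe0]
    have hlim : x + (((1:ℕ):ℝ) - 1) * (1 - x) / ((1:ℕ):ℝ) = x := by norm_num
    rw [hlim]
    rw [intervalIntegral.integral_congr (g := fun _ => (1:ℝ)/2) (fun s _ => by rw [hker s]; norm_num)]
    rw [intervalIntegral.integral_const, smul_eq_mul]
    have : (1 - x) * (1/2) ≤ 1 := by linarith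
    refine this.trans ?_
    rw [Nat.cast_one, Real.one_rpow]
    have : (0:ℝ) ≤ 24 * (E⁻¹)^7 := by positivity
    linarith
  · -- n ≥ 2
    obtain ⟨m, rfl⟩ : ∃ m, n = m + 2 := ⟨n - 2, by omega⟩
    have hNpos : (0:ℝ) < (m:ℝ) + 2 := by positivity
    have hacast : ((m+2:ℕ):ℝ) = (m:ℝ)+2 := by push_cast; ring
    set a := x + (((m+2:ℕ):ℝ) - 1) * (1 - x) / ((m+2:ℕ):ℝ) with hadef
    clear_value a
    have h1a : 1 - a = (1-x)/((m:ℝ)+2) := by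
      rw [hadef, hacast]; field_simp; ring
    have hax : a - x = ((m:ℝ)+1)*(1-x)/((m:ℝ)+2) := by
      rw [hadef, hacast]; field_simp; ring
    have haxge : ε/2 ≤ a - x := by
      rw [hax]
      have h1 : (1-x)/2 ≤ ((m:ℝ)+1)*(1-x)/((m:ℝ)+2) := by
        rw [div_le_div_iff₀ (by norm_num) hNpos]
        nlinarith [mul_nonneg (show (0:ℝ) ≤ 1-x by linarith) (Nat.cast_nonneg (α := ℝ) m)]
      have h0 : ε/2 ≤ (1-x)/2 := by linarith
      linarith
    have h1xpos : 0 < 1 - x := by linarith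
    have halt : a < 1 := by
      have : 0 < (1-x)/((m:ℝ)+2) := by positivity
      linarith [h1a]
    have haxpos : x < a := by
      have : 0 < ε/2 := by linarith
      linarith
    set Cb := 8 * (E⁻¹)^7 with hCb
    -- pointwise bound on [a, 1)
    have hpt : ∀ s ∈ Set.Ico a 1, |LegKernel p (m+2) x s| ≤ Cb * (1-s) ^ (-(1:ℝ)/4) := by
      intro s hs
      have hs1 : s < 1 := hs.2
      have hsa : a ≤ s := hs.1
      have hsgtx : x < s := lt_of_lt_of_le haxpos hsa
      have hs_1 : -1 < s := lt_trans hx1' hsgtx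
      have h1s : 0 < 1 - s := by linarith
      set T := Real.sqrt (Real.sqrt (1 - s)) with hT
      have hTpos : 0 < T := by
        rw [hT]; exact Real.sqrt_pos.mpr (Real.sqrt_pos.mpr h1s)
      have hT4 : T^4 = 1 - s := by
        rw [hT, show (4:ℕ) = 2*2 from rfl, pow_mul, Real.sq_sqrt (Real.sqrt_nonneg _),
          Real.sq_sqrt h1s.le]
      -- sqrt lower bounds
      have hsx : E^4 ≤ Real.sqrt (1-x^2) := by
        have h2 : ε^2 ≤ 1 - x^2 := by
          nlinarith [mul_le_mul h1x h1x' hε.le (show (0:ℝ) ≤ 1-x by linarith)]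
        calc E^4 = ε := hE4
          _ = Real.sqrt (ε^2) := (Real.sqrt_sq hε.le).symm
          _ ≤ Real.sqrt (1-x^2) := Real.sqrt_le_sqrt h2
      have hssb : E^2 * T^2 ≤ Real.sqrt (1-s^2) := by
        have hT2 : T^2 = Real.sqrt (1-s) := Real.sq_sqrt (Real.sqrt_nonneg _)
        have hE2 : E^2 = Real.sqrt ε := Real.sq_sqrt (Real.sqrt_nonneg _)
        have hfact : (1:ℝ) - s^2 = (1-s) * (1+s) := by ring
        rw [hfact, Real.sqrt_mul h1s.le, hT2, hE2, mul_comm (Real.sqrt ε) _]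
        apply mul_le_mul_of_nonneg_left _ (Real.sqrt_nonneg _)
        apply Real.sqrt_le_sqrt
        linarith
      -- Bernstein bounds
      have hb2x := bernstein (m+2) (by omega) x hx1' hx2'
      have hb1x := bernstein (m+1) (by omega) x hx1' hx2'
      have hb2s := bernstein (m+2) (by omega) s hs_1 hs1
      have hb1s := bernstein (m+1) (by omega) s hs_1 hs1
      push_cast at hb2x hb1x hb2s hb1s
      have hMpos : (0:ℝ) < (m:ℝ)+1 := by positivity
      rw [le_div_iff₀ hNpos] at hb2x hb2s
      rw [le_div_iff₀ hMpos] at hb1x hb1s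
      have hmono : ((m:ℝ)+2) ≤ 2*((m:ℝ)+1) := by linarith [Nat.cast_nonneg (α := ℝ) m]
      have hsq2x : Pe (m+2) x ^2 * (((m:ℝ)+2) * E^4) ≤ 4 := by
        have h1 := mul_le_mul_of_nonneg_right
          (mul_le_mul_of_nonneg_left hsx (sq_nonneg (Pe (m+2) x))) hNpos.le
        linarith [h1, hb2x]
      have hsq1x : Pe (m+1) x ^2 * (((m:ℝ)+2) * E^4) ≤ 4 := by
        have h1 := mul_le_mul_of_nonneg_right
          (mul_le_mul_of_nonneg_left hsx (sq_nonneg (Pe (m+1) x))) hNpos.le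
        have h2 := mul_le_mul_of_nonneg_left hmono
          (mul_nonneg (sq_nonneg (Pe (m+1) x)) (Real.sqrt_nonneg (1-x^2)))
        linarith [h1, h2, hb1x]
      have hsq2s : Pe (m+2) s ^2 * (((m:ℝ)+2) * (E^2*T^2)) ≤ 4 := by
        have h1 := mul_le_mul_of_nonneg_right
          (mul_le_mul_of_nonneg_left hssb (sq_nonneg (Pe (m+2) s))) hNpos.le
        linarith [h1, hb2s]
      have hsq1s : Pe (m+1) s ^2 * (((m:ℝ)+2) * (E^2*T^2)) ≤ 4 := by
        have h1 := mul_le_mul_of_nonneg_right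
          (mul_le_mul_of_nonneg_left hssb (sq_nonneg (Pe (m+1) s))) hNpos.le
        have h2 := mul_le_mul_of_nonneg_left hmono
          (mul_nonneg (sq_nonneg (Pe (m+1) s)) (Real.sqrt_nonneg (1-s^2)))
        linarith [h1, h2, hb1s]
      have hQx : (0:ℝ) < ((m:ℝ)+2) * E^4 := by positivity
      have hQs : (0:ℝ) < ((m:ℝ)+2) * (E^2*T^2) := by positivity
      have hBx2 : Pe (m+2) x ^2 ≤ 4/(((m:ℝ)+2) * E^4) := by
        rw [le_div_iff₀ hQx]; exact hsq2x
      have hBx1 : Pe (m+1) x ^2 ≤ 4/(((m:ℝ)+2) * E^4) := by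
        rw [le_div_iff₀ hQx]; exact hsq1x
      have hBs2 : Pe (m+2) s ^2 ≤ 4/(((m:ℝ)+2) * (E^2*T^2)) := by
        rw [le_div_iff₀ hQs]; exact hsq2s
      have hBs1 : Pe (m+1) s ^2 ≤ 4/(((m:ℝ)+2) * (E^2*T^2)) := by
        rw [le_div_iff₀ hQs]; exact hsq1s
      -- products
      have hM : 4/(((m:ℝ)+2) * E^4) * (4/(((m:ℝ)+2) * (E^2*T^2))) = (4/(((m:ℝ)+2) * (E^3*T)))^2 := by
        field_simp
      have key1 : |Pe (m+2) x| * |Pe (m+1) s| ≤ 4/(((m:ℝ)+2) * (E^3*T)) := by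
        rw [← Real.sqrt_sq_eq_abs (Pe (m+2) x), ← Real.sqrt_sq_eq_abs (Pe (m+1) s),
          ← Real.sqrt_mul (sq_nonneg _)]
        have h2 : Pe (m+2) x^2 * Pe (m+1) s^2 ≤ (4/(((m:ℝ)+2) * (E^3*T)))^2 := by
          rw [← hM]
          exact mul_le_mul hBx2 hBs1 (sq_nonneg _) (by positivity)
        calc Real.sqrt (Pe (m+2) x^2 * Pe (m+1) s^2)
            ≤ Real.sqrt ((4/(((m:ℝ)+2) * (E^3*T)))^2) := Real.sqrt_le_sqrt h2
          _ = 4/(((m:ℝ)+2) * (E^3*T)) := Real.sqrt_sq (by positivity)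
      have key2 : |Pe (m+1) x| * |Pe (m+2) s| ≤ 4/(((m:ℝ)+2) * (E^3*T)) := by
        rw [← Real.sqrt_sq_eq_abs (Pe (m+1) x), ← Real.sqrt_sq_eq_abs (Pe (m+2) s),
          ← Real.sqrt_mul (sq_nonneg _)]
        have h2 : Pe (m+1) x^2 * Pe (m+2) s^2 ≤ (4/(((m:ℝ)+2) * (E^3*T)))^2 := by
          rw [← hM]
          exact mul_le_mul hBx1 hBs2 (sq_nonneg _) (by positivity)
        calc Real.sqrt (Pe (m+1) x^2 * Pe (m+2) s^2)
            ≤ Real.sqrt ((4/(((m:ℝ)+2) * (E^3*T)))^2) := Real.sqrt_le_sqrt h2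
          _ = 4/(((m:ℝ)+2) * (E^3*T)) := Real.sqrt_sq (by positivity)
      -- Christoffel-Darboux
      set D := Pe (m+2) x * Pe (m+1) s - Pe (m+1) x * Pe (m+2) s with hD
      have hcd := CD (m+1) x s
      push_cast at hcd
      have hker2 : (x - s) * (2 * LegKernel p (m+2) x s) = ((m:ℝ)+2) * D := by
        rw [kermul]
        rw [Finset.mul_sum]
        rw [show ∑ i ∈ Finset.range (m+2), 2 * ((2*(i:ℝ)+1)/2 * (Pe i x * Pe i s))
          = ∑ i ∈ Finset.range (m+2), (2*(i:ℝ)+1) * (Pe i x * Pe i s) from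
          Finset.sum_congr rfl fun i _ => by ring]
        rw [hD]
        linear_combination hcd
      have hxs : (2:ℝ)*(x - s) ≠ 0 := by
        have h0 : (2:ℝ)*(x - s) < 0 := by linarith
        exact h0.ne
      have hKeq : LegKernel p (m+2) x s = (((m:ℝ)+2) * D) / (2*(x-s)) := by
        rw [eq_div_iff hxs]
        linear_combination hker2
      have habs : |LegKernel p (m+2) x s| = ((m:ℝ)+2) * |D| / (2*(s-x)) := by
        rw [hKeq, abs_div, abs_mul]
        rw [abs_of_pos hNpos, abs_of_neg (show 2*(x-s) < 0 by linarith)]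
        rw [show -(2*(x-s)) = 2*(s-x) by ring]
      rw [habs]
      have hDb : |D| ≤ 8/(((m:ℝ)+2) * (E^3*T)) := by
        rw [hD]
        calc |Pe (m+2) x * Pe (m+1) s - Pe (m+1) x * Pe (m+2) s|
            ≤ |Pe (m+2) x * Pe (m+1) s| + |Pe (m+1) x * Pe (m+2) s| := abs_sub _ _
          _ = |Pe (m+2) x| * |Pe (m+1) s| + |Pe (m+1) x| * |Pe (m+2) s| := by
              rw [abs_mul, abs_mul]
          _ ≤ 4/(((m:ℝ)+2) * (E^3*T)) + 4/(((m:ℝ)+2) * (E^3*T)) := add_le_add key1 key2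
          _ = 8/(((m:ℝ)+2) * (E^3*T)) := by ring
      have hTrpow : (1-s) ^ (-(1:ℝ)/4) = T⁻¹ := by
        have hq : T = (1-s) ^ ((1:ℝ)/4) := by
          rw [hT]
          simp only [Real.sqrt_eq_rpow]
          rw [← Real.rpow_mul h1s.le]
          norm_num
        rw [show -(1:ℝ)/4 = -((1:ℝ)/4) by norm_num, Real.rpow_neg h1s.le, ← hq]
      rw [hTrpow]
      have step1 : ((m:ℝ)+2) * |D| ≤ 8/(E^3*T) := by
        have h := mul_le_mul_of_nonneg_left hDb hNpos.le
        refine h.trans (le_of_eq ?_)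
        field_simp
      have step2 : E^4 ≤ 2*(s-x) := by
        have : ε/2 ≤ s - x := by linarith
        rw [hE4]; linarith
      calc ((m:ℝ)+2) * |D| / (2*(s-x)) ≤ (8/(E^3*T)) / (E^4) :=
            div_le_div₀ (by positivity) step1 (by positivity) step2
        _ = Cb * T⁻¹ := by rw [hCb]; field_simp
    -- integrability
    have hcontK : Continuous (fun s => |LegKernel p (m+2) x s|) := by
      apply Continuous.abs
      unfold LegKernel
      exact continuous_finset_sum _ (fun k _ => continuous_const.mul (p k).continuous)
    have hint1 : IntervalIntegrable (fun s => |LegKernel p (m+2) x s|) volume a 1 :=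
      hcontK.intervalIntegrable _ _
    have hint2 : IntervalIntegrable (fun s : ℝ => Cb * (1-s) ^ (-(1:ℝ)/4)) volume a 1 := by
      apply IntervalIntegrable.const_mul
      have h := (intervalIntegrable_rpow' (a := 1-a) (b := 0) (r := -(1:ℝ)/4)
        (by norm_num)).comp_sub_left 1
      simpa using h
    -- comparison
    have hcomp : (∫ s in a..1, |LegKernel p (m+2) x s|)
        ≤ ∫ s in a..1, Cb * (1-s) ^ (-(1:ℝ)/4) := by
      apply integral_mono_ae_restrict halt.le hint1 hint2
      have hone : (volume.restrict (Set.Icc a 1)) {(1:ℝ)} = 0 :=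
        le_antisymm (le_trans (Measure.restrict_le_self _) (by simp)) (zero_le)
      have hae : ∀ᵐ (t : ℝ) ∂(volume.restrict (Set.Icc a 1)), t ≠ 1 := by
        rw [MeasureTheory.ae_iff]
        simpa using hone
      filter_upwards [hae, ae_restrict_mem measurableSet_Icc] with t ht hmem
      exact hpt t ⟨hmem.1, lt_of_le_of_ne hmem.2 ht⟩
    -- compute the comparison integral
    have hval : (∫ s in a..1, Cb * (1-s) ^ (-(1:ℝ)/4))
        = Cb * ((4/3) * (1-a) ^ ((3:ℝ)/4)) := by
      rw [intervalIntegral.integral_const_mul]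
      congr 1
      have h1 : (∫ s in a..1, (1-s) ^ (-(1:ℝ)/4))
          = ∫ u in (1-(1:ℝ))..(1-a), u ^ (-(1:ℝ)/4) :=
        intervalIntegral.integral_comp_sub_left (fun u : ℝ => u ^ (-(1:ℝ)/4)) 1
      rw [h1]
      rw [integral_rpow (Or.inl (by norm_num))]
      norm_num [Real.zero_rpow]
      ring
    -- final bound
    have hbound : Cb * ((4/3) * (1-a) ^ ((3:ℝ)/4))
        ≤ (24 * (E⁻¹)^7 + 1) / ((m+2:ℕ):ℝ) ^ ((3:ℝ)/4) := by
      have hCbpos : 0 < Cb := by rw [hCb]; positivity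
      have h1 : (1-a) ^ ((3:ℝ)/4) ≤ (2/((m:ℝ)+2)) ^ ((3:ℝ)/4) := by
        apply Real.rpow_le_rpow (by linarith) _ (by norm_num)
        rw [h1a]
        gcongr
        linarith
      have h2 : (2/((m:ℝ)+2)) ^ ((3:ℝ)/4) = 2 ^ ((3:ℝ)/4) / ((m:ℝ)+2) ^ ((3:ℝ)/4) :=
        Real.div_rpow (by norm_num) hNpos.le _
      have h3 : (2:ℝ) ^ ((3:ℝ)/4) ≤ 2 := by
        calc (2:ℝ)^((3:ℝ)/4) ≤ 2 ^ (1:ℝ) :=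
              Real.rpow_le_rpow_of_exponent_le (by norm_num) (by norm_num)
          _ = 2 := Real.rpow_one 2
      have hMrpos : 0 < ((m:ℝ)+2) ^ ((3:ℝ)/4) := Real.rpow_pos_of_pos hNpos _
      calc Cb * ((4/3) * (1-a) ^ ((3:ℝ)/4))
          ≤ Cb * ((4/3) * (2 ^ ((3:ℝ)/4) / ((m:ℝ)+2) ^ ((3:ℝ)/4))) := by
            apply mul_le_mul_of_nonneg_left _ hCbpos.le
            apply mul_le_mul_of_nonneg_left _ (by norm_num)
            rw [← h2]; exact h1
        _ ≤ Cb * ((4/3) * (2 / ((m:ℝ)+2) ^ ((3:ℝ)/4))) := by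
            apply mul_le_mul_of_nonneg_left _ hCbpos.le
            apply mul_le_mul_of_nonneg_left _ (by norm_num)
            gcongr
        _ = (Cb * (8/3)) / ((m:ℝ)+2) ^ ((3:ℝ)/4) := by ring
        _ ≤ (24 * (E⁻¹)^7 + 1) / ((m+2:ℕ):ℝ) ^ ((3:ℝ)/4) := by
            rw [hacast]
            gcongr
            rw [hCb]
            have ht : 0 < (E⁻¹)^7 := by positivity
            linarith
    calc (∫ s in a..1, |LegKernel p (m+2) x s|)
        ≤ ∫ s in a..1, Cb * (1-s) ^ (-(1:ℝ)/4) := hcomp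
      _ = Cb * ((4/3) * (1-a) ^ ((3:ℝ)/4)) := hval
      _ ≤ (24 * (E⁻¹)^7 + 1) / ((m+2:ℕ):ℝ) ^ ((3:ℝ)/4) := hbound
end
end
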